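/- arXiv:2310.04223 — 8 statements merged into one kernel-verified Lean document; each statement's English description precedes it below -/
import Mathlib

section
/- In a median graph, every convex subgraph is gated: if H is a convex induced subgraph (meaning I(u,v) ⊆ V(H) for all u, v ∈ V(H)), then for every vertex x there exists a vertex x' ∈ V(H) such that x' ∈ I(x,y) for every y ∈ V(H). -/
/-- The metric interval between `u` and `v` in a graph `G`. -/
def interval {V : Type*} (G : SimpleGraph V) (u v : V) : Set V :=
  {w | G.dist u w + G.dist w v = G.dist u v}

/-- A graph is median if every triple of vertices has a unique median. -/
def MedianGraph {V : Type*} (G : SimpleGraph V) : Prop :=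
  ∀ x y z : V, ∃! m : V,
    m ∈ interval G x y ∧ m ∈ interval G y z ∧ m ∈ interval G z x

/-- In a median graph, every nonempty convex set of vertices is gated: every vertex `x`
has a gate `g ∈ H` lying on a shortest path from `x` to each vertex of `H`. -/
theorem median_convex_is_gated {V : Type*} [Fintype V] (G : SimpleGraph V)
    (hconn : G.Connected) (hmed : MedianGraph G)
    (H : Set V) (hne : H.Nonempty)
    (hconv : ∀ u ∈ H, ∀ v ∈ H, interval G u v ⊆ H) :
    ∀ x : V, ∃ g ∈ H, ∀ y ∈ H, g ∈ interval G x y := by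
  intro x
  obtain ⟨g, hg, hmin⟩ := H.exists_min_image (fun g => G.dist x g) (Set.toFinite H) hne
  refine ⟨g, hg, fun y hy => ?_⟩
  obtain ⟨m, ⟨hmxy, hmyg, hmgx⟩, -⟩ := hmed x y g
  have hmH : m ∈ H := hconv y hy g hg hmyg
  have h1 : G.dist g m + G.dist m x = G.dist g x := hmgx
  have h2 : G.dist x g ≤ G.dist x m := hmin m hmH
  rw [G.dist_comm (u := g) (v := x), G.dist_comm (u := m) (v := x)] at h1
  have hgm : G.dist g m = 0 := by omega
  rw [G.dist_comm (u := g) (v := m)] at hgm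
  have : m = g := (hconn.dist_eq_zero_iff).mp hgm
  rwa [this] at hmxy
end

section
/- In a median graph, every cube subgraph is gated: if C is an induced subgraph of G isomorphic to a hypercube Q_n, then C is gated in G. -/
/-- The hypercube graph `Q_n`: vertices are `Fin n → Bool`, adjacent iff they differ in
exactly one coordinate. -/
def cubeGraph (n : ℕ) : SimpleGraph (Fin n → Bool) :=
  SimpleGraph.fromRel (fun u v => (Finset.univ.filter fun i => u i ≠ v i).card = 1)

namespace MedianGated

open SimpleGraph Function

variable {V : Type*} {G : SimpleGraph V}

lemma mem_interval {u v w : V} :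
    w ∈ interval G u v ↔ G.dist u w + G.dist w v = G.dist u v := Iff.rfl

lemma dc (G : SimpleGraph V) (x y : V) : G.dist x y = G.dist y x := SimpleGraph.dist_comm

/-- A first step along a geodesic. -/
lemma exists_step (hconn : G.Connected) {v x : V} (h : G.dist v x ≠ 0) :
    ∃ v', G.Adj v v' ∧ G.dist v' x = G.dist v x - 1 := by
  obtain ⟨p, hp⟩ := SimpleGraph.exists_walk_of_dist_ne_zero h
  cases p with
  | nil => simp at hp; exact absurd SimpleGraph.dist_self h
  | @cons _ v' _ hadj q =>
    refine ⟨v', hadj, le_antisymm ?_ ?_⟩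
    · have := SimpleGraph.dist_le q
      simp [SimpleGraph.Walk.length_cons] at hp
      omega
    · have h1 : G.dist v x ≤ G.dist v v' + G.dist v' x := hconn.dist_triangle
      have h2 : G.dist v v' = 1 := SimpleGraph.dist_eq_one_iff_adj.mpr hadj
      omega

section Median

variable (hconn : G.Connected) (hmed : MedianGraph G)
include hconn hmed

lemma no_triangle {a b c : V} (hab : G.Adj a b) (hbc : G.Adj b c) (hca : G.Adj c a) :
    False := by
  obtain ⟨m, ⟨h1, h2, h3⟩, -⟩ := hmed a b c
  rw [mem_interval] at h1 h2 h3
  have dab : G.dist a b = 1 := SimpleGraph.dist_eq_one_iff_adj.mpr hab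
  have dbc : G.dist b c = 1 := SimpleGraph.dist_eq_one_iff_adj.mpr hbc
  have dca : G.dist c a = 1 := SimpleGraph.dist_eq_one_iff_adj.mpr hca
  have e1 := dc G m a
  have e2 := dc G m b
  have e3 := dc G m c
  omega

/-- Neighbours have distance exactly one apart from any other vertex. -/
lemma adj_dist (u : V) {v w : V} (hvw : G.Adj v w) :
    G.dist u w = G.dist u v + 1 ∨ G.dist u v = G.dist u w + 1 := by
  obtain ⟨m, ⟨h1, h2, h3⟩, -⟩ := hmed u v w
  rw [mem_interval] at h1 h2 h3
  have dvw : G.dist v w = 1 := SimpleGraph.dist_eq_one_iff_adj.mpr hvw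
  have hm : G.dist v m = 0 ∨ G.dist m w = 0 := by omega
  have e1 := dc G w u
  rcases hm with hm | hm
  · have hmv : v = m := hconn.dist_eq_zero_iff.mp hm
    rw [← hmv] at h3
    have e2 := dc G w v
    have e3 := dc G v u
    omega
  · have hmw : m = w := hconn.dist_eq_zero_iff.mp hm
    rw [hmw] at h1
    have e2 := dc G w v
    omega

/-- No `K_{2,3}`: two vertices at distance two have at most two common neighbours. -/
lemma k23 {p q a b w : V} (hpq : G.dist p q = 2)
    (hpa : G.Adj p a) (haq : G.Adj a q) (hpb : G.Adj p b) (hbq : G.Adj b q)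
    (hab : ¬ G.Adj a b) (hne : a ≠ b) (hpw : G.Adj p w) (hwq : G.Adj w q) :
    w = a ∨ w = b := by
  by_contra hcon
  push_neg at hcon
  obtain ⟨hwa, hwb⟩ := hcon
  have hnwa : ¬ G.Adj w a := fun h => no_triangle hconn hmed hpw h hpa.symm
  have hnwb : ¬ G.Adj w b := fun h => no_triangle hconn hmed hpw h hpb.symm
  have dist2 : ∀ x y : V, G.Adj p x → G.Adj p y → x ≠ y → ¬ G.Adj x y → G.dist x y = 2 := by
    intro x y hx hy hxy hnxy
    have h1 : G.dist x y ≤ G.dist x p + G.dist p y := hconn.dist_triangle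
    have h2 : G.dist x p = 1 := SimpleGraph.dist_eq_one_iff_adj.mpr hx.symm
    have h3 : G.dist p y = 1 := SimpleGraph.dist_eq_one_iff_adj.mpr hy
    have h4 : G.dist x y ≠ 0 := fun h => hxy (hconn.dist_eq_zero_iff.mp h)
    have h5 : G.dist x y ≠ 1 := fun h => hnxy (SimpleGraph.dist_eq_one_iff_adj.mp h)
    omega
  have dab : G.dist a b = 2 := dist2 a b hpa hpb hne hab
  have daw : G.dist a w = 2 := dist2 a w hpa hpw (Ne.symm hwa) (fun h => hnwa h.symm)
  have dbw : G.dist b w = 2 := dist2 b w hpb hpw (Ne.symm hwb) (fun h => hnwb h.symm)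
  obtain ⟨m, -, huniq⟩ := hmed a b w
  have key : ∀ z : V, G.Adj a z → G.Adj b z → G.Adj w z → z = m := by
    intro z h1 h2 h3
    apply huniq
    have e1 : G.dist a z = 1 := SimpleGraph.dist_eq_one_iff_adj.mpr h1
    have e2 : G.dist b z = 1 := SimpleGraph.dist_eq_one_iff_adj.mpr h2
    have e3' : G.dist w z = 1 := SimpleGraph.dist_eq_one_iff_adj.mpr h3
    have c1 := dc G z b
    have c2 := dc G z w
    have c3 := dc G z a
    have dwa := dc G w a
    refine ⟨?_, ?_, ?_⟩ <;> rw [mem_interval] <;> omega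
  have hpm : p = m := key p hpa.symm hpb.symm hpw.symm
  have hqm : q = m := key q haq hbq hwq
  have : G.dist p q = 0 := by
    rw [hpm.trans hqm.symm]
    exact SimpleGraph.dist_self
  omega

/-- The quadrangle condition. -/
lemma quad {u v' w : V} {k : ℕ} (hv' : G.dist u v' = k + 1) (hw : G.dist u w = k + 1)
    (hd : G.dist v' w = 2) :
    ∃ m, G.Adj m v' ∧ G.Adj m w ∧ G.dist u m = k ∧ m ∈ interval G u w := by
  obtain ⟨m, ⟨h1, h2, h3⟩, -⟩ := hmed u v' w
  rw [mem_interval] at h1 h2 h3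
  have e1 := dc G w u
  have e2 := dc G w v'
  have e3 := dc G v' u
  have e4 := dc G v' m
  have e5 := dc G u m
  have e6 := dc G w m
  have hm1 : G.dist v' m ≠ 0 := by
    intro h
    have hmv : v' = m := hconn.dist_eq_zero_iff.mp h
    rw [← hmv] at h3
    omega
  have hm2 : G.dist m w ≠ 0 := by
    intro h
    have hmw : m = w := hconn.dist_eq_zero_iff.mp h
    rw [hmw] at h1
    omega
  have hmv' : G.dist v' m = 1 := by omega
  have hmw : G.dist m w = 1 := by omega
  refine ⟨m, (SimpleGraph.dist_eq_one_iff_adj.mp hmv').symm,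
    SimpleGraph.dist_eq_one_iff_adj.mp hmw, by omega, ?_⟩
  rw [mem_interval]
  omega

end Median

/-! ### Cube facts -/

lemma cube_adj {n : ℕ} {p q : Fin n → Bool} :
    (cubeGraph n).Adj p q ↔ hammingDist p q = 1 := by
  have hsymm : (Finset.univ.filter fun i => q i ≠ p i) =
      (Finset.univ.filter fun i => p i ≠ q i) := by
    apply Finset.filter_congr
    intro i _
    simp [ne_comm]
  have hd : hammingDist p q = (Finset.univ.filter fun i => p i ≠ q i).card := rfl
  rw [cubeGraph, SimpleGraph.fromRel_adj]
  constructor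
  · rintro ⟨hne, h | h⟩
    · rw [hd]; exact h
    · rw [hd, ← hsymm]; exact h
  · intro h
    refine ⟨hammingDist_ne_zero.mp (by omega), Or.inl ?_⟩
    rw [← hd]; exact h

lemma flip_fst {n : ℕ} {p q : Fin n → Bool} {i : Fin n} (hi : p i ≠ q i) :
    hammingDist p (Function.update p i (q i)) = 1 := by
  have hd : hammingDist p (Function.update p i (q i)) =
      (Finset.univ.filter fun j => p j ≠ Function.update p i (q i) j).card := rfl
  have hs : (Finset.univ.filter fun j => p j ≠ Function.update p i (q i) j) = {i} := by
    ext j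
    by_cases hj : j = i
    · subst hj; simp [Function.update_self, hi]
    · simp [Function.update_of_ne hj, hj]
  rw [hd, hs, Finset.card_singleton]

lemma flip_snd {n : ℕ} {p q : Fin n → Bool} {i : Fin n} (hi : p i ≠ q i) :
    hammingDist (Function.update p i (q i)) q = hammingDist p q - 1 := by
  have hd : hammingDist (Function.update p i (q i)) q =
      (Finset.univ.filter fun j => Function.update p i (q i) j ≠ q j).card := rfl
  have hd2 : hammingDist p q = (Finset.univ.filter fun j => p j ≠ q j).card := rfl
  have hs : (Finset.univ.filter fun j => Function.update p i (q i) j ≠ q j) =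
      (Finset.univ.filter fun j => p j ≠ q j).erase i := by
    ext j
    by_cases hj : j = i
    · subst hj; simp [Function.update_self]
    · simp [Function.update_of_ne hj, hj]
  rw [hd, hd2, hs, Finset.card_erase_of_mem (by simp [hi])]

end MedianGated

namespace MedianGated

open SimpleGraph Function

variable {V : Type*} {G : SimpleGraph V}

lemma exists_diff {n : ℕ} {p q : Fin n → Bool} (h : hammingDist p q ≠ 0) :
    ∃ i, p i ≠ q i := by
  by_contra hc
  push_neg at hc
  exact h (hammingDist_eq_zero.mpr (funext hc))

lemma exists_two_diff {n : ℕ} {p q : Fin n → Bool} (h : 2 ≤ hammingDist p q) :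
    ∃ i j, i ≠ j ∧ p i ≠ q i ∧ p j ≠ q j := by
  have hd : hammingDist p q = (Finset.univ.filter fun i => p i ≠ q i).card := rfl
  have h1 : 1 < (Finset.univ.filter fun i => p i ≠ q i).card := by omega
  obtain ⟨a, b, ha, hb, hab⟩ := Finset.one_lt_card_iff.mp h1
  exact ⟨a, b, hab, (Finset.mem_filter.mp ha).2, (Finset.mem_filter.mp hb).2⟩

lemma flip2 {n : ℕ} {p q : Fin n → Bool} {i j : Fin n} (hij : i ≠ j)
    (hi : p i ≠ q i) (hj : p j ≠ q j) :
    hammingDist p (Function.update (Function.update p i (q i)) j (q j)) = 2 := by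
  have hd : hammingDist p (Function.update (Function.update p i (q i)) j (q j)) =
      (Finset.univ.filter fun k =>
        p k ≠ Function.update (Function.update p i (q i)) j (q j) k).card := rfl
  have hs : (Finset.univ.filter fun k =>
      p k ≠ Function.update (Function.update p i (q i)) j (q j) k) = {i, j} := by
    ext k
    simp only [Finset.mem_filter, Finset.mem_univ, true_and, Finset.mem_insert,
      Finset.mem_singleton, Function.update_apply]
    by_cases hki : k = i <;> by_cases hkj : k = j
    · exact absurd (hki.symm.trans hkj) hij
    · subst hki; simp [hkj, hi, Ne.symm hij]
    · subst hkj; simp [hj]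
    · simp [hki, hkj]
  rw [hd, hs, Finset.card_pair hij]

lemma diff_two {n : ℕ} {p q : Fin n → Bool} {i j : Fin n} (hij : i ≠ j)
    (hi : p i ≠ q i) (hj : p j ≠ q j) :
    hammingDist (Function.update p i (q i)) (Function.update p j (q j)) = 2 := by
  have hd : hammingDist (Function.update p i (q i)) (Function.update p j (q j)) =
      (Finset.univ.filter fun k =>
        Function.update p i (q i) k ≠ Function.update p j (q j) k).card := rfl
  have hs : (Finset.univ.filter fun k =>
      Function.update p i (q i) k ≠ Function.update p j (q j) k) = {i, j} := by
    ext k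
    simp only [Finset.mem_filter, Finset.mem_univ, true_and, Finset.mem_insert,
      Finset.mem_singleton, Function.update_apply]
    by_cases hki : k = i <;> by_cases hkj : k = j
    · exact absurd (hki.symm.trans hkj) hij
    · subst hki; simp [hkj, Ne.symm hij, Ne.symm hi]
    · subst hkj; simp [Ne.symm hij, hij, hj]
    · simp [hki, hkj]
  rw [hd, hs, Finset.card_pair hij]

section Cube

variable (hconn : G.Connected) (hmed : MedianGraph G) {C : Set V} {n : ℕ}
  (φ : G.induce C ≃g cubeGraph n)
include hconn hmed

lemma adj_iff (u v : C) : G.Adj ↑u ↑v ↔ hammingDist (φ u) (φ v) = 1 := by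
  rw [← cube_adj, φ.map_adj_iff]
  exact Iff.rfl

lemma iso_dist : ∀ (m : ℕ) (u v : C), hammingDist (φ u) (φ v) = m → G.dist ↑u ↑v = m := by
  intro m
  induction m using Nat.strong_induction_on with
  | _ m IH =>
  intro u v hm
  rcases m with _ | m
  · have : (u : V) = ↑v := congrArg _ (φ.injective (hammingDist_eq_zero.mp hm))
    rw [this]
    exact SimpleGraph.dist_self
  rcases m with _ | m
  · exact SimpleGraph.dist_eq_one_iff_adj.mpr ((adj_iff hconn hmed φ u v).mpr hm)
  obtain ⟨i, j, hij, hi, hj⟩ := exists_two_diff (p := φ u) (q := φ v) (by omega)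
  set u1 : C := φ.symm (Function.update (φ u) i (φ v i)) with hu1
  have hφu1 : φ u1 = Function.update (φ u) i (φ v i) := φ.apply_symm_apply _
  have hadj1 : G.Adj ↑u ↑u1 := (adj_iff hconn hmed φ u u1).mpr (by rw [hφu1]; exact flip_fst hi)
  have hdist1 : G.dist ↑u1 ↑v = m + 1 := by
    apply IH (m+1) (by omega)
    rw [hφu1, flip_snd hi, hm]
    omega
  have hsplit := adj_dist hconn hmed (↑v) hadj1
  have c1 := dc G (↑v : V) ↑u1
  have c2 := dc G (↑v : V) ↑u
  rcases hsplit with hcase | hcase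
  · -- impossible case : G.dist u v = m
    exfalso
    have hduv : G.dist ↑u ↑v = m := by omega
    rcases Nat.lt_or_ge m 2 with h2 | h2
    · interval_cases m
      · have h0 : (u : V) = ↑v := hconn.dist_eq_zero_iff.mp hduv
        have h0' : u = v := Subtype.coe_injective h0
        rw [h0', hammingDist_self] at hm
        omega
      · have ha : G.Adj ↑u ↑v := SimpleGraph.dist_eq_one_iff_adj.mp hduv
        have := (adj_iff hconn hmed φ u v).mp ha
        omega
    · -- m ≥ 2
      set u2 : C := φ.symm (Function.update (φ u) j (φ v j)) with hu2
      have hφu2 : φ u2 = Function.update (φ u) j (φ v j) := φ.apply_symm_apply _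
      set t : C := φ.symm
        (Function.update (Function.update (φ u) i (φ v i)) j (φ v j)) with ht
      have hφt : φ t = Function.update (Function.update (φ u) i (φ v i)) j (φ v j) :=
        φ.apply_symm_apply _
      have hpj' : (Function.update (φ u) i (φ v i)) j ≠ φ v j := by
        rw [Function.update_of_ne (Ne.symm hij)]; exact hj
      have hdt2 : G.dist ↑u ↑t = 2 := by
        apply IH 2 (by omega)
        rw [hφt]
        exact flip2 hij hi hj
      have hdtv : G.dist ↑t ↑v = m := by
        apply IH m (by omega)
        rw [hφt, flip_snd hpj', flip_snd hi, hm]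
        omega
      have hdu2v : G.dist ↑u2 ↑v = m + 1 := by
        apply IH (m+1) (by omega)
        rw [hφu2, flip_snd hj, hm]
        omega
      have c3 := dc G (↑v : V) ↑t
      obtain ⟨m0, hm0u, hm0t, hdm0, -⟩ :=
        quad hconn hmed (u := (↑v : V)) (v' := ↑u) (w := ↑t) (k := m - 1)
          (by omega) (by omega) hdt2
      have hadj1t : G.Adj ↑u1 ↑t := by
        apply (adj_iff hconn hmed φ u1 t).mpr
        rw [hφu1, hφt]
        exact flip_fst hpj'
      have hadj2 : G.Adj ↑u ↑u2 :=
        (adj_iff hconn hmed φ u u2).mpr (by rw [hφu2]; exact flip_fst hj)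
      have hadj2t : G.Adj ↑u2 ↑t := by
        apply (adj_iff hconn hmed φ u2 t).mpr
        rw [hφu2, hφt]
        rw [Function.update_comm hij (φ v i) (φ v j) (φ u)]
        have hpi' : (Function.update (φ u) j (φ v j)) i ≠ φ v i := by
          rw [Function.update_of_ne hij]; exact hi
        exact flip_fst hpi'
      have hnadj12 : ¬ G.Adj ↑u1 ↑u2 := by
        intro hadj
        have := (adj_iff hconn hmed φ u1 u2).mp hadj
        rw [hφu1, hφu2, diff_two hij hi hj] at this
        omega
      have hne12 : (↑u1 : V) ≠ ↑u2 := by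
        intro h
        have h12 : φ u1 = φ u2 := congrArg φ (Subtype.coe_injective h)
        rw [hφu1, hφu2] at h12
        have hdt := diff_two hij hi hj
        rw [h12, hammingDist_self] at hdt
        omega
      have := k23 hconn hmed (p := (↑u : V)) (q := ↑t) hdt2
        hadj1 hadj1t hadj2 hadj2t hnadj12 hne12 hm0u.symm hm0t
      rcases this with h | h
      · rw [h] at hdm0; omega
      · rw [h] at hdm0
        have c4 := dc G (↑v : V) ↑u2
        omega
  · omega

lemma two_convex (u v : C) (h2 : hammingDist (φ u) (φ v) = 2) :
    interval G ↑u ↑v ⊆ C := by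
  intro w hw
  rw [mem_interval] at hw
  have duv : G.dist ↑u ↑v = 2 := iso_dist hconn hmed φ 2 u v h2
  obtain ⟨i, j, hij, hi, hj⟩ := exists_two_diff (p := φ u) (q := φ v) (by omega)
  set a : C := φ.symm (Function.update (φ u) i (φ v i)) with ha
  have hφa : φ a = Function.update (φ u) i (φ v i) := φ.apply_symm_apply _
  set b : C := φ.symm (Function.update (φ u) j (φ v j)) with hb
  have hφb : φ b = Function.update (φ u) j (φ v j) := φ.apply_symm_apply _
  have hua : G.Adj ↑u ↑a := (adj_iff hconn hmed φ u a).mpr (by rw [hφa]; exact flip_fst hi)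
  have hav : G.Adj ↑a ↑v := (adj_iff hconn hmed φ a v).mpr (by rw [hφa, flip_snd hi, h2])
  have hub : G.Adj ↑u ↑b := (adj_iff hconn hmed φ u b).mpr (by rw [hφb]; exact flip_fst hj)
  have hbv : G.Adj ↑b ↑v := (adj_iff hconn hmed φ b v).mpr (by rw [hφb, flip_snd hj, h2])
  have hnab : ¬ G.Adj ↑a ↑b := by
    intro hadj
    have := (adj_iff hconn hmed φ a b).mp hadj
    rw [hφa, hφb, diff_two hij hi hj] at this
    omega
  have hneab : (↑a : V) ≠ ↑b := by
    intro h
    have h12 : φ a = φ b := congrArg φ (Subtype.coe_injective h)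
    rw [hφa, hφb] at h12
    have hdt := diff_two hij hi hj
    rw [h12, hammingDist_self] at hdt
    omega
  rcases Nat.lt_or_ge (G.dist ↑u w) 1 with h | h
  · have : (↑u : V) = w := hconn.dist_eq_zero_iff.mp (by omega)
    rw [← this]; exact u.2
  rcases Nat.lt_or_ge (G.dist w ↑v) 1 with h' | h'
  · have : w = ↑v := hconn.dist_eq_zero_iff.mp (by omega)
    rw [this]; exact v.2
  have huw : G.dist ↑u w = 1 := by omega
  have hwv : G.dist w ↑v = 1 := by omega
  rcases k23 hconn hmed duv hua hav hub hbv hnab hneab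
    (SimpleGraph.dist_eq_one_iff_adj.mp huw) (SimpleGraph.dist_eq_one_iff_adj.mp hwv)
    with h | h
  · rw [h]; exact a.2
  · rw [h]; exact b.2

lemma convex : ∀ (m : ℕ) (u v : C), hammingDist (φ u) (φ v) = m → interval G ↑u ↑v ⊆ C := by
  intro m
  induction m using Nat.strong_induction_on with
  | _ m IH =>
  intro u v hm x hx
  rw [mem_interval] at hx
  rcases m with _ | m
  · have h0 : u = v := φ.injective (hammingDist_eq_zero.mp hm)
    rw [h0] at hx
    have hz : G.dist ↑v x = 0 := by
      have := dc G (↑v : V) x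
      have hself : G.dist (↑v : V) ↑v = 0 := SimpleGraph.dist_self
      omega
    have : (↑v : V) = x := hconn.dist_eq_zero_iff.mp hz
    rw [← this]; exact v.2
  rcases m with _ | m
  · have h1 : G.dist ↑u ↑v = 1 := iso_dist hconn hmed φ 1 u v hm
    rcases (by omega : G.dist ↑u x = 0 ∨ G.dist x ↑v = 0) with h | h
    · have : (↑u : V) = x := hconn.dist_eq_zero_iff.mp h
      rw [← this]; exact u.2
    · have : x = ↑v := hconn.dist_eq_zero_iff.mp h
      rw [this]; exact v.2
  -- main case
  have hduv : G.dist ↑u ↑v = m + 2 := iso_dist hconn hmed φ (m+2) u v hm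
  by_cases hxv : x = ↑v
  · rw [hxv]; exact v.2
  have hdvx : G.dist ↑v x ≠ 0 := by
    rw [SimpleGraph.dist_ne_zero_iff_ne_and_reachable]
    exact ⟨fun h => hxv h.symm, hconn.preconnected _ _⟩
  obtain ⟨v1, hvv1, hv1x⟩ := exists_step hconn hdvx
  have cxv := dc G x (↑v : V)
  have t1 : G.dist ↑u ↑v1 ≤ G.dist ↑u x + G.dist x v1 := hconn.dist_triangle
  have t2 : G.dist ↑u ↑v ≤ G.dist ↑u v1 + G.dist v1 ↑v := hconn.dist_triangle
  have hv1v : G.dist v1 ↑v = 1 := SimpleGraph.dist_eq_one_iff_adj.mpr hvv1.symm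
  have cxv1 := dc G x v1
  have hduv1 : G.dist ↑u v1 = m + 1 := by omega
  have hxuv1 : G.dist ↑u x + G.dist x v1 = m + 1 := by omega
  have hm' : hammingDist (φ v) (φ u) = m + 2 := by rw [hammingDist_comm]; exact hm
  obtain ⟨i, hi⟩ := exists_diff (p := φ v) (q := φ u) (by omega)
  set w : C := φ.symm (Function.update (φ v) i (φ u i)) with hwdef
  have hφw : φ w = Function.update (φ v) i (φ u i) := φ.apply_symm_apply _
  have hvw : G.Adj ↑v ↑w := (adj_iff hconn hmed φ v w).mpr (by rw [hφw]; exact flip_fst hi)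
  have hwu : hammingDist (φ u) (φ w) = m + 1 := by
    rw [hammingDist_comm, hφw, flip_snd hi, hm']
    omega
  have hduw : G.dist ↑u ↑w = m + 1 := iso_dist hconn hmed φ (m+1) u w hwu
  by_cases hv1w : v1 = ↑w
  · apply IH (m+1) (by omega) u w hwu
    rw [mem_interval, ← hv1w]
    omega
  have hnadj : ¬ G.Adj v1 ↑w := fun h => no_triangle hconn hmed hvv1 h hvw.symm
  have hdv1w : G.dist v1 ↑w = 2 := by
    have t3 : G.dist v1 ↑w ≤ G.dist v1 ↑v + G.dist ↑v ↑w := hconn.dist_triangle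
    have h0 : G.dist v1 ↑w ≠ 0 := by
      rw [SimpleGraph.dist_ne_zero_iff_ne_and_reachable]
      exact ⟨hv1w, hconn.preconnected _ _⟩
    have h1 : G.dist v1 ↑w ≠ 1 := fun h => hnadj (SimpleGraph.dist_eq_one_iff_adj.mp h)
    have : G.dist ↑v ↑w = 1 := SimpleGraph.dist_eq_one_iff_adj.mpr hvw
    omega
  obtain ⟨m0, hm0v1, hm0w, hdum0, hm0int⟩ :=
    quad hconn hmed (u := (↑u : V)) (v' := v1) (w := ↑w) (k := m) hduv1 hduw hdv1w
  have hm0C : m0 ∈ C := IH (m+1) (by omega) u w hwu hm0int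
  have hm0nev : m0 ≠ ↑v := by
    intro h; rw [h] at hdum0; omega
  have hm0nadjv : ¬ G.Adj m0 ↑v := fun h => no_triangle hconn hmed hm0w hvw.symm h.symm
  have hdm0v : G.dist m0 ↑v = 2 := by
    have t3 : G.dist m0 ↑v ≤ G.dist m0 ↑w + G.dist ↑w ↑v := hconn.dist_triangle
    have e1 : G.dist m0 ↑w = 1 := SimpleGraph.dist_eq_one_iff_adj.mpr hm0w
    have e2 : G.dist ↑w ↑v = 1 := SimpleGraph.dist_eq_one_iff_adj.mpr hvw.symm
    have h0 : G.dist m0 ↑v ≠ 0 := by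
      rw [SimpleGraph.dist_ne_zero_iff_ne_and_reachable]
      exact ⟨hm0nev, hconn.preconnected _ _⟩
    have h1 : G.dist m0 ↑v ≠ 1 := fun h => hm0nadjv (SimpleGraph.dist_eq_one_iff_adj.mp h)
    omega
  set q0 : C := ⟨m0, hm0C⟩ with hq0
  have hcq0 : (↑q0 : V) = m0 := rfl
  have hq0v2 : hammingDist (φ q0) (φ v) = 2 := by
    have hiso := iso_dist hconn hmed φ (hammingDist (φ q0) (φ v)) q0 v rfl
    rw [hcq0] at hiso
    omega
  have hv1C : v1 ∈ C := by
    apply two_convex hconn hmed φ q0 v hq0v2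
    rw [mem_interval]
    have e1 : G.dist m0 v1 = 1 := SimpleGraph.dist_eq_one_iff_adj.mpr hm0v1
    show G.dist m0 v1 + G.dist v1 ↑v = G.dist m0 ↑v
    omega
  set p1 : C := ⟨v1, hv1C⟩ with hp1
  have hcp1 : (↑p1 : V) = v1 := rfl
  have hup1 : hammingDist (φ u) (φ p1) = m + 1 := by
    have hiso := iso_dist hconn hmed φ (hammingDist (φ u) (φ p1)) u p1 rfl
    rw [hcp1] at hiso
    omega
  apply IH (m+1) (by omega) u p1 hup1
  rw [mem_interval]
  show G.dist ↑u x + G.dist x v1 = G.dist ↑u v1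
  omega

end Cube

end MedianGated

/-- In a median graph, every induced subgraph isomorphic to a hypercube is gated. -/
theorem median_cubes_gated {V : Type*} [Fintype V] (G : SimpleGraph V)
    (hconn : G.Connected) (hmed : MedianGraph G)
    (C : Set V) (hcube : ∃ n : ℕ, Nonempty (G.induce C ≃g cubeGraph n)) :
    ∀ x : V, ∃ g ∈ C, ∀ y ∈ C, g ∈ interval G x y := by
  obtain ⟨n, ⟨φ⟩⟩ := hcube
  intro x
  have hne : C.Nonempty := ⟨↑(φ.symm fun _ => false), (φ.symm fun _ => false).2⟩
  obtain ⟨g, hgC, hgmin⟩ := Set.exists_min_image C (fun c => G.dist x c) (Set.toFinite C) hne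
  refine ⟨g, hgC, ?_⟩
  intro y hy
  obtain ⟨mm, ⟨h1, h2, h3⟩, -⟩ := hmed x g y
  rw [MedianGated.mem_interval] at h1 h2 h3
  have hmmC : mm ∈ C := by
    apply MedianGated.convex hconn hmed φ
      (hammingDist (φ ⟨g, hgC⟩) (φ ⟨y, hy⟩)) ⟨g, hgC⟩ ⟨y, hy⟩ rfl
    rw [MedianGated.mem_interval]
    exact h2
  have hmin : G.dist x g ≤ G.dist x mm := hgmin mm hmmC
  have h0 : G.dist mm g = 0 := by omega
  have hmg : mm = g := hconn.dist_eq_zero_iff.mp h0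
  rw [MedianGated.mem_interval]
  have c1 := MedianGated.dc G y g
  have c2 := MedianGated.dc G g x
  have c3 := MedianGated.dc G y x
  rw [hmg] at h3
  omega
end

section
/- Downward cube property of median graphs: let G be a finite median graph, z a fixed basepoint, and v any vertex. Let Λ(v) be the set of neighbors u of v with d(z,u) = d(z,v) − 1. Then v together with Λ(v) is contained in a unique cube C(v) of G of dimension |Λ(v)|. -/
/-- The downward neighbors of `v` with respect to the basepoint `z`:
`Λ(v) = N(v) ∩ I(z,v)`. -/
def downNbrs {V : Type*} (G : SimpleGraph V) (z v : V) : Set V :=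
  {u | G.Adj v u ∧ G.dist z u + 1 = G.dist z v}

namespace MedianCube

open SimpleGraph Finset

variable {V : Type*} {G : SimpleGraph V}

lemma dc (G : SimpleGraph V) (a b : V) : G.dist a b = G.dist b a := SimpleGraph.dist_comm

lemma mem_interval {u v w : V} : w ∈ interval G u v ↔ G.dist u w + G.dist w v = G.dist u v :=
  Iff.rfl

lemma adj_dist (hconn : G.Connected) {a b : V} (h : G.Adj a b) : G.dist a b = 1 :=
  (SimpleGraph.dist_eq_one_iff_adj).mpr h

lemma dist_zero (hconn : G.Connected) {a b : V} (h : G.dist a b = 0) : a = b :=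
  (hconn.dist_eq_zero_iff).mp h

/-- Median graphs have no triangles. -/
lemma no_triangle (hconn : G.Connected) (hmed : MedianGraph G) {a b c : V}
    (hab : G.Adj a b) (hbc : G.Adj b c) (hca : G.Adj c a) : False := by
  obtain ⟨m, ⟨h1, h2, h3⟩, -⟩ := hmed a b c
  rw [mem_interval] at h1 h2 h3
  rw [adj_dist hconn hab] at h1
  rw [adj_dist hconn hbc] at h2
  rw [adj_dist hconn hca] at h3
  rcases Nat.le_one_iff_eq_zero_or_eq_one.mp (by omega : G.dist a m ≤ 1) with h0 | h0
  · -- m = a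
    have : a = m := dist_zero hconn h0
    subst this
    rw [adj_dist hconn hab.symm, adj_dist hconn hca.symm] at h2
    omega
  · -- dist m b = 0, m = b
    have hb : G.dist m b = 0 := by omega
    have : m = b := dist_zero hconn hb
    subst this
    rw [adj_dist hconn hbc.symm, adj_dist hconn hab.symm] at h3
    omega

/-- Two vertices with a common neighbor are at distance 2 (if distinct). -/
lemma dist_two (hconn : G.Connected) (hmed : MedianGraph G) {a b1 b2 : V}
    (h1 : G.Adj a b1) (h2 : G.Adj a b2) (hne : b1 ≠ b2) : G.dist b1 b2 = 2 := by
  have ht : G.dist b1 b2 ≤ G.dist b1 a + G.dist a b2 := hconn.dist_triangle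
  rw [dc G b1 a, adj_dist hconn h1, adj_dist hconn h2] at ht
  have h0 : G.dist b1 b2 ≠ 0 := fun h => hne (dist_zero hconn h)
  have hne1 : G.dist b1 b2 ≠ 1 := by
    intro h
    exact no_triangle hconn hmed h1 (SimpleGraph.dist_eq_one_iff_adj.mp h) h2.symm
  omega

/-- Median graphs have no K_{2,3}. -/
lemma noK23 (hconn : G.Connected) (hmed : MedianGraph G) {a1 a2 b1 b2 b3 : V}
    (ha : a1 ≠ a2) (h12 : b1 ≠ b2) (h13 : b1 ≠ b3) (h23 : b2 ≠ b3)
    (ha11 : G.Adj a1 b1) (ha12 : G.Adj a1 b2) (ha13 : G.Adj a1 b3)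
    (ha21 : G.Adj a2 b1) (ha22 : G.Adj a2 b2) (ha23 : G.Adj a2 b3) : False := by
  obtain ⟨m, -, hu⟩ := hmed b1 b2 b3
  have med_mem : ∀ a : V, G.Adj a b1 → G.Adj a b2 → G.Adj a b3 →
      (a ∈ interval G b1 b2 ∧ a ∈ interval G b2 b3 ∧ a ∈ interval G b3 b1) := by
    intro a k1 k2 k3
    refine ⟨?_, ?_, ?_⟩ <;> rw [mem_interval]
    · rw [dist_two hconn hmed k1 k2 h12, dc G b1 a, adj_dist hconn k1, adj_dist hconn k2]
    · rw [dist_two hconn hmed k2 k3 h23, dc G b2 a, adj_dist hconn k2, adj_dist hconn k3]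
    · rw [dist_two hconn hmed k3 k1 h13.symm, dc G b3 a, adj_dist hconn k3, adj_dist hconn k1]
  have e1 := hu a1 (med_mem a1 ha11 ha12 ha13)
  have e2 := hu a2 (med_mem a2 ha21 ha22 ha23)
  exact ha (e1.trans e2.symm)

section Meet

/-- `x` is below `y` in the basepoint order at `z`. -/
def dle (G : SimpleGraph V) (z x y : V) : Prop := G.dist z x + G.dist x y = G.dist z y

/-- The meet of `x` and `y` in the basepoint order: the median of `z, x, y`. -/
noncomputable def meet (hmed : MedianGraph G) (z x y : V) : V := (hmed z x y).choose

variable (hmed : MedianGraph G) (z : V)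

lemma meet_spec (x y : V) :
    meet hmed z x y ∈ interval G z x ∧ meet hmed z x y ∈ interval G x y ∧
      meet hmed z x y ∈ interval G y z :=
  (hmed z x y).choose_spec.1

lemma meet_eq_of (x y m : V) (h1 : m ∈ interval G z x) (h2 : m ∈ interval G x y)
    (h3 : m ∈ interval G y z) : m = meet hmed z x y :=
  (hmed z x y).choose_spec.2 m ⟨h1, h2, h3⟩

lemma meet_le_left (x y : V) : dle G z (meet hmed z x y) x :=
  (meet_spec hmed z x y).1

lemma meet_le_right (x y : V) : dle G z (meet hmed z x y) y := by
  have h := (meet_spec hmed z x y).2.2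
  rw [mem_interval] at h
  unfold dle
  rw [dc G z (meet hmed z x y), dc G (meet hmed z x y) y, dc G z y]
  omega

lemma meet_interval (x y : V) :
    G.dist x (meet hmed z x y) + G.dist (meet hmed z x y) y = G.dist x y :=
  (meet_spec hmed z x y).2.1

lemma dle_refl (G : SimpleGraph V) (z x : V) : dle G z x x := by
  unfold dle; simp

lemma dle_trans (hconn : G.Connected) {z x y w : V} (h1 : dle G z x y) (h2 : dle G z y w) :
    dle G z x w := by
  unfold dle at *
  have t1 : G.dist z w ≤ G.dist z x + G.dist x w := hconn.dist_triangle
  have t2 : G.dist x w ≤ G.dist x y + G.dist y w := hconn.dist_triangle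
  omega

lemma dle_antisymm (hconn : G.Connected) {z x y : V} (h1 : dle G z x y) (h2 : dle G z y x) :
    x = y := by
  unfold dle at *
  have h0 : G.dist x y = 0 := by rw [dc G y x] at h2; omega
  exact dist_zero hconn h0

lemma le_meet (hconn : G.Connected) {z w x y : V} (h1 : dle G z w x) (h2 : dle G z w y) :
    dle G z w (meet hmed z x y) := by
  obtain ⟨p, ⟨p1, p2, p3⟩, -⟩ := hmed w x y
  rw [mem_interval] at p1 p2 p3
  unfold dle at h1 h2
  have t1 : G.dist z p ≤ G.dist z w + G.dist w p := hconn.dist_triangle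
  have t2 : G.dist z x ≤ G.dist z p + G.dist p x := hconn.dist_triangle
  have t3 : G.dist z y ≤ G.dist z p + G.dist p y := hconn.dist_triangle
  rw [dc G y p, dc G p w, dc G y w] at p3
  have hA : G.dist z p = G.dist z w + G.dist w p := by omega
  have hB : G.dist z p + G.dist p x = G.dist z x := by omega
  have hC : G.dist z p + G.dist p y = G.dist z y := by omega
  have hp : p = meet hmed z x y := by
    apply meet_eq_of hmed z x y p
    · rw [mem_interval]; exact hB
    · rw [mem_interval]; exact p2
    · rw [mem_interval, dc G y p, dc G p z, dc G y z]; omega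
  rw [← hp]
  unfold dle
  omega

lemma meet_comm (x y : V) : meet hmed z x y = meet hmed z y x := by
  apply meet_eq_of hmed z y x
  · rw [mem_interval]; exact meet_le_right hmed z x y
  · rw [mem_interval]
    have h := meet_interval hmed z x y
    rw [dc G y (meet hmed z x y), dc G (meet hmed z x y) x, dc G y x]
    omega
  · rw [mem_interval]
    have h := meet_le_left hmed z x y
    unfold dle at h
    rw [dc G x (meet hmed z x y), dc G (meet hmed z x y) z, dc G x z]
    omega

lemma meet_absorb {x y : V} (h : dle G z x y) : meet hmed z x y = x := by
  symm
  apply meet_eq_of hmed z x y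
  · rw [mem_interval]; simp
  · rw [mem_interval]; simp
  · rw [mem_interval]
    unfold dle at h
    rw [dc G y x, dc G x z, dc G y z]
    omega

lemma meet_idem (x : V) : meet hmed z x x = x :=
  meet_absorb hmed z (dle_refl G z x)

lemma meet_assoc (hconn : G.Connected) (x y w : V) :
    meet hmed z (meet hmed z x y) w = meet hmed z x (meet hmed z y w) := by
  have l1 : dle G z (meet hmed z (meet hmed z x y) w) x :=
    dle_trans hconn (meet_le_left hmed z _ _) (meet_le_left hmed z x y)
  have l2 : dle G z (meet hmed z (meet hmed z x y) w) y :=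
    dle_trans hconn (meet_le_left hmed z _ _) (meet_le_right hmed z x y)
  have l3 : dle G z (meet hmed z (meet hmed z x y) w) w := meet_le_right hmed z _ _
  have r1 : dle G z (meet hmed z x (meet hmed z y w)) x := meet_le_left hmed z _ _
  have r2 : dle G z (meet hmed z x (meet hmed z y w)) y :=
    dle_trans hconn (meet_le_right hmed z _ _) (meet_le_left hmed z y w)
  have r3 : dle G z (meet hmed z x (meet hmed z y w)) w :=
    dle_trans hconn (meet_le_right hmed z _ _) (meet_le_right hmed z y w)
  apply dle_antisymm hconn
  · exact le_meet hmed hconn l1 (le_meet hmed hconn l2 l3)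
  · exact le_meet hmed hconn (le_meet hmed hconn r1 r2) r3

lemma meet_selfdist (hconn : G.Connected) (u x y : V) :
    meet hmed z u (meet hmed z x y) = meet hmed z (meet hmed z u x) (meet hmed z u y) := by
  have lu : dle G z (meet hmed z u (meet hmed z x y)) u := meet_le_left hmed z _ _
  have lx : dle G z (meet hmed z u (meet hmed z x y)) x :=
    dle_trans hconn (meet_le_right hmed z _ _) (meet_le_left hmed z x y)
  have ly : dle G z (meet hmed z u (meet hmed z x y)) y :=
    dle_trans hconn (meet_le_right hmed z _ _) (meet_le_right hmed z x y)
  have ru : dle G z (meet hmed z (meet hmed z u x) (meet hmed z u y)) u :=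
    dle_trans hconn (meet_le_left hmed z _ _) (meet_le_left hmed z u x)
  have rx : dle G z (meet hmed z (meet hmed z u x) (meet hmed z u y)) x :=
    dle_trans hconn (meet_le_left hmed z _ _) (meet_le_right hmed z u x)
  have ry : dle G z (meet hmed z (meet hmed z u x) (meet hmed z u y)) y :=
    dle_trans hconn (meet_le_right hmed z _ _) (meet_le_right hmed z u y)
  apply dle_antisymm hconn
  · exact le_meet hmed hconn (le_meet hmed hconn lu lx) (le_meet hmed hconn lu ly)
  · exact le_meet hmed hconn ru (le_meet hmed hconn rx ry)

end Meet

section Fold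

variable (hconn : G.Connected) (hmed : MedianGraph G) (z : V)

/-- The meet of a finite set of vertices, together with `init`. -/
noncomputable def F (init : V) (s : Finset V) : V :=
  letI : Std.Commutative (meet hmed z) := ⟨meet_comm hmed z⟩
  letI : Std.Associative (meet hmed z) := ⟨meet_assoc hmed z hconn⟩
  s.fold (meet hmed z) init id

lemma F_empty (init : V) : F hconn hmed z init ∅ = init := rfl

lemma F_insert [DecidableEq V] (init a : V) (s : Finset V) :
    F hconn hmed z init (insert a s) = meet hmed z a (F hconn hmed z init s) := by
  letI : Std.Commutative (meet hmed z) := ⟨meet_comm hmed z⟩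
  letI : Std.Associative (meet hmed z) := ⟨meet_assoc hmed z hconn⟩
  letI : Std.IdempotentOp (meet hmed z) := ⟨meet_idem hmed z⟩
  show Finset.fold (meet hmed z) init id (insert a s) = _
  rw [Finset.fold_insert_idem]
  rfl

lemma F_le_init (init : V) (s : Finset V) : dle G z (F hconn hmed z init s) init := by
  classical
  induction s using Finset.induction_on with
  | empty => rw [F_empty]; exact dle_refl G z init
  | @insert a s ha IH =>
    rw [F_insert]
    exact dle_trans hconn (meet_le_right hmed z _ _) IH

lemma F_le_mem (init : V) (s : Finset V) {u : V} (hu : u ∈ s) :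
    dle G z (F hconn hmed z init s) u := by
  classical
  induction s using Finset.induction_on with
  | empty => simp at hu
  | @insert a s ha IH =>
    rw [F_insert]
    rcases Finset.mem_insert.mp hu with rfl | hu'
    · exact meet_le_left hmed z _ _
    · exact dle_trans hconn (meet_le_right hmed z _ _) (IH hu')

lemma F_union [DecidableEq V] (init : V) (s t : Finset V) :
    F hconn hmed z init (s ∪ t) =
      meet hmed z (F hconn hmed z init s) (F hconn hmed z init t) := by
  induction s using Finset.induction_on with
  | empty =>
    rw [Finset.empty_union, F_empty, meet_comm, meet_absorb hmed z (F_le_init hconn hmed z init t)]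
  | @insert a s ha IH =>
    rw [Finset.insert_union, F_insert, F_insert, IH, ← meet_assoc hmed z hconn]

lemma F_image_meet [DecidableEq V] {init u : V} (h : dle G z u init) (t : Finset V) :
    meet hmed z u (F hconn hmed z init t) =
      F hconn hmed z u (t.image (meet hmed z u)) := by
  induction t using Finset.induction_on with
  | empty => rw [F_empty, Finset.image_empty, F_empty, meet_absorb hmed z h]
  | @insert a t ha IH =>
    rw [Finset.image_insert, F_insert, F_insert, meet_selfdist hmed z hconn, IH]

end Fold

section Down

lemma mem_downNbrs {z v u : V} :
    u ∈ downNbrs G z v ↔ G.Adj v u ∧ G.dist z u + 1 = G.dist z v := Iff.rfl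

/-- The meet of two distinct downward neighbors is a downward neighbor of each. -/
lemma meet_down (hconn : G.Connected) (hmed : MedianGraph G) (z : V) {v u1 u2 : V} (h1 : u1 ∈ downNbrs G z v) (h2 : u2 ∈ downNbrs G z v)
    (hne : u1 ≠ u2) :
    meet hmed z u1 u2 ∈ downNbrs G z u1 ∧ meet hmed z u1 u2 ∈ downNbrs G z u2 := by
  obtain ⟨ha1, hl1⟩ := h1
  obtain ⟨ha2, hl2⟩ := h2
  have hd12 : G.dist u1 u2 = 2 := dist_two hconn hmed ha1 ha2 hne
  set m := meet hmed z u1 u2 with hm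
  have s1 : G.dist z m + G.dist m u1 = G.dist z u1 := meet_le_left hmed z u1 u2
  have s3 : G.dist z m + G.dist m u2 = G.dist z u2 := meet_le_right hmed z u1 u2
  have s2 : G.dist u1 m + G.dist m u2 = 2 := by
    have := meet_interval hmed z u1 u2
    rw [hd12] at this; exact this
  rw [dc G u1 m] at s2
  have hmu1 : G.dist m u1 ≠ 0 := by
    intro h0
    have : m = u1 := dist_zero hconn h0
    rw [this] at s3
    omega
  have hmu2 : G.dist m u2 ≠ 0 := by
    intro h0
    have : m = u2 := dist_zero hconn h0
    rw [this] at s1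
    rw [dc G u2 u1] at s1
    omega
  have e1 : G.dist m u1 = 1 := by omega
  have e2 : G.dist m u2 = 1 := by omega
  refine ⟨⟨?_, by omega⟩, ⟨?_, by omega⟩⟩
  · exact (SimpleGraph.dist_eq_one_iff_adj.mp e1).symm
  · exact (SimpleGraph.dist_eq_one_iff_adj.mp e2).symm

/-- Meets with a fixed downward neighbor are injective on the other downward neighbors. -/
lemma meet_down_inj (hconn : G.Connected) (hmed : MedianGraph G) (z : V) {v u1 u u' : V} (h1 : u1 ∈ downNbrs G z v) (hu : u ∈ downNbrs G z v)
    (hu' : u' ∈ downNbrs G z v) (n1 : u1 ≠ u) (n1' : u1 ≠ u') (nuu' : u ≠ u')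
    (heq : meet hmed z u1 u = meet hmed z u1 u') : False := by
  obtain ⟨hma, hmb⟩ := meet_down hconn hmed z h1 hu n1
  obtain ⟨hma', hmb'⟩ := meet_down hconn hmed z h1 hu' n1'
  rw [← heq] at hmb'
  have hvm : v ≠ meet hmed z u1 u := by
    intro h
    have l1 := (mem_downNbrs.mp hma).2
    have l2 := (mem_downNbrs.mp h1).2
    rw [← h] at l1
    omega
  exact noK23 hconn hmed hvm n1 n1' nuu' (mem_downNbrs.mp h1).1 (mem_downNbrs.mp hu).1
    (mem_downNbrs.mp hu').1 (mem_downNbrs.mp hma).1.symm (mem_downNbrs.mp hmb).1.symm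
    (mem_downNbrs.mp hmb').1.symm

/-- Key lemma: the meet of a set of `k` downward neighbors of `v` is at level `d(z,v) - k`. -/
lemma ML (hconn : G.Connected) (hmed : MedianGraph G) (z : V) [DecidableEq V] (d : ℕ) : ∀ v : V, G.dist z v = d → ∀ s : Finset V,
    (∀ u ∈ s, u ∈ downNbrs G z v) → G.dist z (F hconn hmed z v s) + s.card = d := by
  induction d using Nat.strong_induction_on with
  | _ d IH =>
    intro v hd s hs
    rcases s.eq_empty_or_nonempty with rfl | ⟨u1, hu1⟩
    · rw [F_empty]; simpa using hd
    · have hu1m := hs u1 hu1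
      have hadj : G.Adj v u1 := (mem_downNbrs.mp hu1m).1
      have hlvl : G.dist z u1 + 1 = G.dist z v := (mem_downNbrs.mp hu1m).2
      set t := s.erase u1 with ht
      set s' := t.image (meet hmed z u1) with hs'def
      have htm : ∀ u ∈ t, u ∈ downNbrs G z v ∧ u ≠ u1 := by
        intro u hu
        exact ⟨hs u (Finset.mem_of_mem_erase hu), (Finset.mem_erase.mp hu).1⟩
      have hs' : ∀ w ∈ s', w ∈ downNbrs G z u1 := by
        intro w hw
        obtain ⟨u, hu, rfl⟩ := Finset.mem_image.mp hw
        exact (meet_down hconn hmed z hu1m (htm u hu).1 (Ne.symm (htm u hu).2)).1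
      have hinj : Set.InjOn (meet hmed z u1) t := by
        intro u hu u' hu' heq
        by_contra hne
        exact meet_down_inj hconn hmed z hu1m (htm u hu).1 (htm u' hu').1
          (Ne.symm (htm u hu).2) (Ne.symm (htm u' hu').2) hne heq
      have hcard' : s'.card = t.card := Finset.card_image_of_injOn hinj
      have h1v : dle G z u1 v := by
        unfold dle
        rw [adj_dist hconn hadj.symm]
        omega
      have hFs : F hconn hmed z v s = F hconn hmed z u1 s' := by
        calc F hconn hmed z v s = F hconn hmed z v (insert u1 t) := by
              rw [ht, Finset.insert_erase hu1]
          _ = meet hmed z u1 (F hconn hmed z v t) := F_insert hconn hmed z v u1 t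
          _ = F hconn hmed z u1 s' := F_image_meet hconn hmed z h1v t
      have hlt : G.dist z u1 < d := by omega
      have hIH := IH (G.dist z u1) hlt u1 rfl s' hs'
      have hcard : t.card + 1 = s.card := by
        rw [ht, Finset.card_erase_of_mem hu1]
        have : 0 < s.card := Finset.card_pos.mpr ⟨u1, hu1⟩
        omega
      rw [hFs]
      omega

end Down

section Ham

/-- Weight (number of `true` coordinates). -/
def wt {k : ℕ} (a : Fin k → Bool) : ℕ := (Finset.univ.filter fun i => a i = true).card

/-- Hamming distance. -/
def ham {k : ℕ} (a b : Fin k → Bool) : ℕ := (Finset.univ.filter fun i => a i ≠ b i).card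

lemma ham_comm {k : ℕ} (a b : Fin k → Bool) : ham a b = ham b a := by
  unfold ham
  congr 1
  ext i
  simp [ne_comm]

lemma key_count {k : ℕ} (a b : Fin k → Bool) :
    ham a b + (wt a + wt b) = 2 * wt (fun i => a i || b i) := by
  unfold ham wt
  rw [Finset.card_filter, Finset.card_filter, Finset.card_filter, Finset.card_filter,
    ← Finset.sum_add_distrib, ← Finset.sum_add_distrib, Finset.mul_sum]
  apply Finset.sum_congr rfl
  intro i _
  cases ha : a i <;> cases hb : b i <;> simp [ha, hb]

lemma ham_eq_zero {k : ℕ} {a b : Fin k → Bool} (h : ham a b = 0) : a = b := by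
  unfold ham at h
  rw [Finset.card_eq_zero, Finset.filter_eq_empty_iff] at h
  funext i
  have := h (Finset.mem_univ i)
  simpa using this

lemma cube_adj {k : ℕ} (a b : Fin k → Bool) : (cubeGraph k).Adj a b ↔ ham a b = 1 := by
  unfold cubeGraph
  rw [SimpleGraph.fromRel_adj]
  constructor
  · rintro ⟨hne, h | h⟩
    · exact h
    · rw [ham_comm]; exact h
  · intro h
    refine ⟨?_, Or.inl h⟩
    intro heq
    subst heq
    unfold ham at h
    simp at h

end Ham

section CubeMap

variable [DecidableEq V] (hconn : G.Connected) (hmed : MedianGraph G) (z v : V)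

/-- The vertex of the downward cube of `v` indexed by a Boolean vector. -/
noncomputable def cubeMap {k : ℕ} (e : Fin k → V) (a : Fin k → Bool) : V :=
  F hconn hmed z v ((Finset.univ.filter fun i => a i = true).image e)

variable {k : ℕ} {e : Fin k → V}

lemma cubeMap_level (he : ∀ i, e i ∈ downNbrs G z v) (heinj : Function.Injective e)
    (a : Fin k → Bool) :
    G.dist z (cubeMap hconn hmed z v e a) + wt a = G.dist z v := by
  have h := ML hconn hmed z (G.dist z v) v rfl
    ((Finset.univ.filter fun i => a i = true).image e) ?_
  · rwa [Finset.card_image_of_injective _ heinj] at h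
  · intro u hu
    obtain ⟨i, -, rfl⟩ := Finset.mem_image.mp hu
    exact he i

lemma cubeMap_meet (a b : Fin k → Bool) :
    meet hmed z (cubeMap hconn hmed z v e a) (cubeMap hconn hmed z v e b) =
      cubeMap hconn hmed z v e (fun i => a i || b i) := by
  unfold cubeMap
  rw [← F_union]
  congr 1
  rw [← Finset.image_union]
  congr 1
  ext i
  simp

lemma cubeMap_dist (he : ∀ i, e i ∈ downNbrs G z v) (heinj : Function.Injective e)
    (a b : Fin k → Bool) :
    G.dist (cubeMap hconn hmed z v e a) (cubeMap hconn hmed z v e b) = ham a b := by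
  set fa := cubeMap hconn hmed z v e a with hfa
  set fb := cubeMap hconn hmed z v e b with hfb
  set fab := cubeMap hconn hmed z v e (fun i => a i || b i) with hfab
  have hm : meet hmed z fa fb = fab := cubeMap_meet hconn hmed z v a b
  have hI := meet_interval hmed z fa fb
  have hL := meet_le_left hmed z fa fb
  have hR := meet_le_right hmed z fa fb
  rw [hm] at hI hL hR
  rw [dc G fa fab] at hI
  have la := cubeMap_level hconn hmed z v he heinj a
  have lb := cubeMap_level hconn hmed z v he heinj b
  have lab := cubeMap_level hconn hmed z v he heinj (fun i => a i || b i)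
  rw [← hfa] at la
  rw [← hfb] at lb
  rw [← hfab] at lab
  have hkey := key_count a b
  unfold dle at hL hR
  omega

lemma cubeMap_inj (he : ∀ i, e i ∈ downNbrs G z v) (heinj : Function.Injective e) :
    Function.Injective (cubeMap hconn hmed z v e) := by
  intro a b h
  apply ham_eq_zero (a := a) (b := b)
  have := cubeMap_dist hconn hmed z v he heinj a b
  rw [h] at this
  rw [← this, SimpleGraph.dist_self]

lemma cubeMap_bot : cubeMap hconn hmed z v e (fun _ => false) = v := by
  unfold cubeMap
  have : (Finset.univ.filter fun i : Fin k => (false = true)) = ∅ := by simp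
  rw [this, Finset.image_empty, F_empty]

omit [DecidableEq V] in
lemma dle_of_down (hc : G.Connected) {u : V} (hu : u ∈ downNbrs G z v) : dle G z u v := by
  unfold dle
  rw [adj_dist hc (mem_downNbrs.mp hu).1.symm]
  exact (mem_downNbrs.mp hu).2

lemma cubeMap_single (he : ∀ i, e i ∈ downNbrs G z v) (i : Fin k) : cubeMap hconn hmed z v e (fun j => decide (j = i)) = e i := by
  unfold cubeMap
  have h1 : (Finset.univ.filter fun j : Fin k => (decide (j = i) = true)) = {i} := by
    ext j; simp
  rw [h1, Finset.image_singleton]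
  have h2 : F hconn hmed z v {e i} = meet hmed z (e i) v := by
    letI : Std.Commutative (meet hmed z) := ⟨meet_comm hmed z⟩
    letI : Std.Associative (meet hmed z) := ⟨meet_assoc hmed z hconn⟩
    show Finset.fold (meet hmed z) v id {e i} = meet hmed z (e i) v
    rw [Finset.fold_singleton]
    rfl
  rw [h2]
  exact meet_absorb hmed z (dle_of_down z v hconn (he i))

lemma cubeMap_adj (he : ∀ i, e i ∈ downNbrs G z v) (heinj : Function.Injective e)
    (a b : Fin k → Bool) :
    G.Adj (cubeMap hconn hmed z v e a) (cubeMap hconn hmed z v e b) ↔ ham a b = 1 := by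
  rw [← SimpleGraph.dist_eq_one_iff_adj, cubeMap_dist hconn hmed z v he heinj]

end CubeMap

end MedianCube

open MedianCube in
/-- Downward cube property: in a finite median graph with basepoint `z`, every vertex `v`
together with `Λ(v)` lies in a unique cube of dimension `|Λ(v)|`. -/
theorem median_downward_cube {V : Type*} [Fintype V] (G : SimpleGraph V)
    (hconn : G.Connected) (hmed : MedianGraph G) (z v : V) :
    ∃! C : Set V, v ∈ C ∧ downNbrs G z v ⊆ C ∧
      Nonempty (G.induce C ≃g cubeGraph (downNbrs G z v).ncard) := by
  classical
  have hfin : (downNbrs G z v).Finite := Set.toFinite _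
  set k := (downNbrs G z v).ncard with hk
  have hcardΛ : Fintype.card hfin.toFinset = k := by
    rw [Fintype.card_coe, hk, Set.ncard_eq_toFinset_card _ hfin]
  let ee : ↥(hfin.toFinset) ≃ Fin k := Fintype.equivFinOfCardEq hcardΛ
  set e : Fin k → V := fun i => ↑(ee.symm i) with hedef
  have he : ∀ i, e i ∈ downNbrs G z v := fun i => hfin.mem_toFinset.mp (ee.symm i).2
  have heinj : Function.Injective e := fun i j hij =>
    ee.symm.injective (Subtype.coe_injective hij)
  have hesurj : ∀ u ∈ downNbrs G z v, ∃ i, e i = u := by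
    intro u hu
    refine ⟨ee ⟨u, hfin.mem_toFinset.mpr hu⟩, ?_⟩
    rw [hedef]
    simp
  set f : (Fin k → Bool) → V := cubeMap hconn hmed z v e with hfdef
  have hfinj : Function.Injective f := cubeMap_inj hconn hmed z v he heinj
  have hfadj : ∀ a b, G.Adj (f a) (f b) ↔ ham a b = 1 :=
    fun a b => cubeMap_adj hconn hmed z v he heinj a b
  have hfbot : f (fun _ => false) = v := cubeMap_bot hconn hmed z v
  have hfsingle : ∀ i, f (fun j => decide (j = i)) = e i :=
    fun i => cubeMap_single hconn hmed z v he i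
  set C : Set V := Set.range f with hC
  have hvC : v ∈ C := ⟨fun _ => false, hfbot⟩
  have hΛC : downNbrs G z v ⊆ C := by
    intro u hu
    obtain ⟨i, rfl⟩ := hesurj u hu
    exact ⟨fun j => decide (j = i), hfsingle i⟩
  have hiso : Nonempty (G.induce C ≃g cubeGraph k) := by
    refine ⟨SimpleGraph.Iso.symm ⟨Equiv.ofInjective f hfinj, ?_⟩⟩
    intro a b
    rw [SimpleGraph.comap_adj]
    show G.Adj (f a) (f b) ↔ (cubeGraph k).Adj a b
    rw [hfadj a b, cube_adj]
  refine ⟨C, ⟨hvC, hΛC, hiso⟩, ?_⟩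
  rintro C' ⟨hv', hsub', ⟨φ⟩⟩
  -- set up the comparison isomorphism
  set n0 : Fin k → Bool := φ ⟨v, hv'⟩ with hn0
  set ν : Fin k → (Fin k → Bool) := fun i => φ ⟨e i, hsub' (he i)⟩ with hν
  have hνadj : ∀ i, ham (ν i) n0 = 1 := by
    intro i
    have hadj : (G.induce C').Adj ⟨e i, hsub' (he i)⟩ ⟨v, hv'⟩ := by
      rw [SimpleGraph.comap_adj]
      exact (he i).1.symm
    have h2 := φ.map_rel_iff.mpr hadj
    exact (cube_adj _ _).mp h2
  have hgex : ∀ i, ∃ c, (Finset.univ.filter fun cc => ν i cc ≠ n0 cc) = {c} := by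
    intro i
    have h1 := hνadj i
    unfold ham at h1
    exact Finset.card_eq_one.mp h1
  choose g hg using hgex
  have hνeq : ∀ i c, ν i c = if c = g i then !(n0 c) else n0 c := by
    intro i c
    by_cases hc : c = g i
    · have hmem : c ∈ ({g i} : Finset (Fin k)) := by simp [hc]
      rw [← hg i] at hmem
      have hne : ν i c ≠ n0 c := (Finset.mem_filter.mp hmem).2
      rw [if_pos hc]
      revert hne
      cases ν i c <;> cases n0 c <;> simp
    · have hmem : c ∉ ({g i} : Finset (Fin k)) := by simp [hc]
      rw [← hg i] at hmem
      have heq2 : ν i c = n0 c := by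
        by_contra hcon
        exact hmem (Finset.mem_filter.mpr ⟨Finset.mem_univ c, hcon⟩)
      rw [if_neg hc, heq2]
  have hginj : Function.Injective g := by
    intro i j hgij
    have hνij : ν i = ν j := funext fun c => by rw [hνeq i c, hνeq j c, hgij]
    have h2 : (⟨e i, hsub' (he i)⟩ : C') = ⟨e j, hsub' (he j)⟩ := by
      apply φ.toEquiv.injective
      exact hνij
    have h4 := Subtype.ext_iff.mp h2
    exact heinj h4
  set gE : Fin k ≃ Fin k := Equiv.ofBijective g (Finite.injective_iff_bijective.mp hginj)
    with hgE
  have hgEapp : ∀ i, gE i = g i := fun i => rfl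
  set q : (Fin k → Bool) → (Fin k → Bool) := fun a c => xor (a (gE.symm c)) (n0 c) with hq
  have hxor1 : ∀ (x y t : Bool), (xor x t ≠ xor y t) ↔ x ≠ y := by decide
  have hxor2 : ∀ (x t : Bool), xor (xor x t) t = x := by decide
  have hqham : ∀ a b, ham (q a) (q b) = ham a b := by
    intro a b
    unfold ham
    refine (Finset.card_equiv gE ?_).symm
    intro i
    simp only [Finset.mem_filter, Finset.mem_univ, true_and, hq]
    rw [gE.symm_apply_apply]
    exact (hxor1 (a i) (b i) (n0 (gE i))).symm
  have hqinj : Function.Injective q := by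
    intro a b hab
    funext i
    have h2 := congrFun hab (gE i)
    simp only [hq] at h2
    rw [gE.symm_apply_apply] at h2
    revert h2
    cases a i <;> cases b i <;> cases n0 (gE i) <;> simp
  have hqsurj : Function.Surjective q := by
    intro b
    refine ⟨fun i => xor (b (gE i)) (n0 (gE i)), funext fun c => ?_⟩
    simp only [hq]
    rw [gE.apply_symm_apply]
    exact hxor2 (b c) (n0 c)
  set Φ : (Fin k → Bool) → V := fun a => ↑(φ.symm (q a)) with hΦ
  have hΦbot : Φ (fun _ => false) = v := by
    have h1 : q (fun _ => false) = n0 := funext fun c => by simp [hq]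
    simp only [hΦ, h1, hn0]
    rw [φ.symm_apply_apply]
  have hΦsingle : ∀ i, Φ (fun j => decide (j = i)) = e i := by
    intro i
    have h1 : q (fun j => decide (j = i)) = ν i := by
      funext c
      simp only [hq]
      rw [hνeq i c]
      by_cases hc : c = g i
      · have hsymm : gE.symm c = i := by
          rw [hc, ← hgEapp i, gE.symm_apply_apply]
        rw [if_pos hc, decide_eq_true hsymm]
        simp
      · have hsymm : gE.symm c ≠ i := by
          intro hcon
          apply hc
          have h5 : c = gE i := (Equiv.symm_apply_eq gE).mp hcon
          rw [h5, hgEapp i]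
        rw [if_neg hc, decide_eq_false hsymm]
        simp
    simp only [hΦ, h1, hν]
    rw [φ.symm_apply_apply]
  have hΦadj : ∀ a b, ham a b = 1 → G.Adj (Φ a) (Φ b) := by
    intro a b h
    have hcadj : (cubeGraph k).Adj (q a) (q b) := (cube_adj _ _).mpr (by rw [hqham]; exact h)
    have h2 := φ.symm.map_rel_iff.mpr hcadj
    rw [SimpleGraph.comap_adj] at h2
    exact h2
  have hΦinj : Function.Injective Φ := by
    intro a b hab
    have h2 := Subtype.coe_injective hab
    have h3 := φ.toEquiv.symm.injective h2
    exact hqinj h3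
  have hΦrange : Set.range Φ = C' := by
    ext u
    constructor
    · rintro ⟨a, rfl⟩
      exact (φ.symm (q a)).2
    · intro hu
      obtain ⟨a, ha⟩ := hqsurj (φ ⟨u, hu⟩)
      refine ⟨a, ?_⟩
      simp only [hΦ, ha]
      rw [φ.symm_apply_apply]
  -- the induction on weight: Φ agrees with f
  have main : ∀ n : ℕ, ∀ a : Fin k → Bool, wt a = n → Φ a = f a := by
    intro n
    induction n using Nat.strong_induction_on with
    | _ n IH =>
      intro a ha
      rcases n with _ | n
      ·
        have h0 : (Finset.univ.filter fun i => a i = true) = ∅ := by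
          rw [← Finset.card_eq_zero]; exact ha
        have habot : a = fun _ => false := by
          funext i
          by_contra hai
          have h1 : a i = true := by
            cases h2 : a i
            · exact absurd h2 hai
            · rfl
          have h2 : i ∈ (Finset.univ.filter fun i => a i = true) :=
            Finset.mem_filter.mpr ⟨Finset.mem_univ i, h1⟩
          rw [h0] at h2
          exact absurd h2 (Finset.notMem_empty i)
        rw [habot, hΦbot, hfbot]
      rcases n with _ | m
      ·
        obtain ⟨i, hfi⟩ := Finset.card_eq_one.mp ha
        have hai : a = fun j => decide (j = i) := by
          funext j
          by_cases hj : j = i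
          · subst hj
            have : j ∈ (Finset.univ.filter fun i => a i = true) := by
              rw [hfi]; exact Finset.mem_singleton_self j
            rw [(Finset.mem_filter.mp this).2, decide_eq_true rfl]
          · have : j ∉ (Finset.univ.filter fun i => a i = true) := by
              rw [hfi]; simp [hj]
            have h2 : a j = false := by
              cases h3 : a j
              · rfl
              · exact absurd (Finset.mem_filter.mpr ⟨Finset.mem_univ j, h3⟩) this
            rw [h2, decide_eq_false hj]
        rw [hai, hΦsingle i, hfsingle i]
      ·
        have hac : (Finset.univ.filter fun i => a i = true).card = m + 2 := ha
        have h2 : 1 < (Finset.univ.filter fun i => a i = true).card := by omega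
        obtain ⟨i, hi, j, hj, hij⟩ := Finset.one_lt_card.mp h2
        have hai : a i = true := (Finset.mem_filter.mp hi).2
        have haj : a j = true := (Finset.mem_filter.mp hj).2
        set ai : Fin k → Bool := fun c => if c = i then false else a c with hAi
        set aj : Fin k → Bool := fun c => if c = j then false else a c with hAj
        set aij : Fin k → Bool := fun c => if c = i ∨ c = j then false else a c with hAij
        have hfilt_ai : (Finset.univ.filter fun c => ai c = true) =
            (Finset.univ.filter fun c => a c = true).erase i := by
          ext c
          simp only [Finset.mem_filter, Finset.mem_erase, Finset.mem_univ, true_and, hAi]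
          by_cases hc : c = i <;> simp [hc]
        have hfilt_aj : (Finset.univ.filter fun c => aj c = true) =
            (Finset.univ.filter fun c => a c = true).erase j := by
          ext c
          simp only [Finset.mem_filter, Finset.mem_erase, Finset.mem_univ, true_and, hAj]
          by_cases hc : c = j <;> simp [hc]
        have hfilt_aij : (Finset.univ.filter fun c => aij c = true) =
            ((Finset.univ.filter fun c => a c = true).erase i).erase j := by
          ext c
          simp only [Finset.mem_filter, Finset.mem_erase, Finset.mem_univ, true_and, hAij]
          by_cases hc : c = i <;> by_cases hc' : c = j <;> simp [hc, hc']
        have hwt_ai : wt ai = m + 1 := by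
          unfold wt
          rw [hfilt_ai, Finset.card_erase_of_mem hi, hac]
          omega
        have hwt_aj : wt aj = m + 1 := by
          unfold wt
          rw [hfilt_aj, Finset.card_erase_of_mem hj, hac]
          omega
        have hwt_aij : wt aij = m := by
          unfold wt
          have hjmem : j ∈ (Finset.univ.filter fun c => a c = true).erase i :=
            Finset.mem_erase.mpr ⟨Ne.symm hij, hj⟩
          rw [hfilt_aij, Finset.card_erase_of_mem hjmem, Finset.card_erase_of_mem hi, hac]
          omega
        have hham_a_ai : ham a ai = 1 := by
          unfold ham
          rw [Finset.card_eq_one]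
          refine ⟨i, ?_⟩
          ext c
          simp only [Finset.mem_filter, Finset.mem_univ, true_and, Finset.mem_singleton, hAi]
          by_cases hc : c = i
          · simp [hc, hai]
          · simp [hc]
        have hham_a_aj : ham a aj = 1 := by
          unfold ham
          rw [Finset.card_eq_one]
          refine ⟨j, ?_⟩
          ext c
          simp only [Finset.mem_filter, Finset.mem_univ, true_and, Finset.mem_singleton, hAj]
          by_cases hc : c = j
          · simp [hc, haj]
          · simp [hc]
        have hham_ai_aij : ham ai aij = 1 := by
          unfold ham
          rw [Finset.card_eq_one]
          refine ⟨j, ?_⟩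
          ext c
          simp only [Finset.mem_filter, Finset.mem_univ, true_and, Finset.mem_singleton,
            hAi, hAij]
          by_cases hc : c = i
          · have : c ≠ j := by rw [hc]; exact hij
            simp [hc, this, hij]
          · by_cases hc' : c = j
            · simp [hc, hc', haj, (show ¬ j = i from fun h => hij h.symm)]
            · simp [hc, hc']
        have hham_aj_aij : ham aj aij = 1 := by
          unfold ham
          rw [Finset.card_eq_one]
          refine ⟨i, ?_⟩
          ext c
          simp only [Finset.mem_filter, Finset.mem_univ, true_and, Finset.mem_singleton,
            hAj, hAij]
          by_cases hc : c = j
          · have : c ≠ i := by rw [hc]; exact hij.symm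
            simp [hc, this, (show ¬ j = i from fun h => hij h.symm)]
          · by_cases hc' : c = i
            · simp [hc, hc', hai, hij]
            · simp [hc, hc']
        have hIH_ai : Φ ai = f ai := IH (m + 1) (by omega) ai hwt_ai
        have hIH_aj : Φ aj = f aj := IH (m + 1) (by omega) aj hwt_aj
        have hIH_aij : Φ aij = f aij := IH m (by omega) aij hwt_aij
        have hne_ai_aj : ai ≠ aj := by
          intro hcon
          have h3 := congrFun hcon j
          have hji : ¬ (j = i) := fun hx => hij hx.symm
          simp only [hAi, hAj] at h3
          simp [haj] at h3
          exact hji h3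
        have hne_a_aij : a ≠ aij := by
          intro hcon
          have h3 := congrFun hcon i
          simp only [hAij] at h3
          simp [hai] at h3
        by_contra hne
        have hadj1 : G.Adj (f ai) (f a) := (hfadj ai a).mpr (by rw [ham_comm]; exact hham_a_ai)
        have hadj2 : G.Adj (f ai) (f aij) := (hfadj ai aij).mpr hham_ai_aij
        have hadj3 : G.Adj (f ai) (Φ a) := by
          have h4 := hΦadj a ai hham_a_ai
          rw [hIH_ai] at h4
          exact h4.symm
        have hadj4 : G.Adj (f aj) (f a) := (hfadj aj a).mpr (by rw [ham_comm]; exact hham_a_aj)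
        have hadj5 : G.Adj (f aj) (f aij) := (hfadj aj aij).mpr hham_aj_aij
        have hadj6 : G.Adj (f aj) (Φ a) := by
          have h4 := hΦadj a aj hham_a_aj
          rw [hIH_aj] at h4
          exact h4.symm
        have hb12 : f a ≠ f aij := fun h => hne_a_aij (hfinj h)
        have hb13 : f a ≠ Φ a := fun h => hne h.symm
        have hb23 : f aij ≠ Φ a := by
          intro h
          rw [← hIH_aij] at h
          exact hne_a_aij (hΦinj h.symm)
        have hane : f ai ≠ f aj := fun h => hne_ai_aj (hfinj h)
        exact noK23 hconn hmed hane hb12 hb13 hb23 hadj1 hadj2 hadj3 hadj4 hadj5 hadj6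
  have hΦf : Φ = f := funext fun a => main (wt a) a rfl
  rw [← hΦrange, hΦf]
end

section
/- In a finite median graph G with basepoint z, for any vertex v the vertex \overline{v} of the downward cube C(v) opposite to v is the gate of z in C(v), i.e., \overline{v} lies on a shortest path from z to every vertex of C(v), and d(z,v) = d(z,\overline{v}) + dim C(v). -/
/-! ### Auxiliary lemmas -/

/-- Hamming distance on the cube. -/
def hDist {n : ℕ} (a b : Fin n → Bool) : ℕ :=
  (Finset.univ.filter fun i => a i ≠ b i).card

lemma hDist_comm {n : ℕ} (a b : Fin n → Bool) : hDist a b = hDist b a := by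
  unfold hDist; congr 1; ext i; simp [ne_comm]

lemma hDist_eq_zero {n : ℕ} {a b : Fin n → Bool} : hDist a b = 0 ↔ a = b := by
  unfold hDist
  rw [Finset.card_eq_zero, Finset.filter_eq_empty_iff]
  constructor
  · intro h; funext i; have := h (Finset.mem_univ i); simpa using this
  · intro h i _; simp [h]

lemma hDist_le {n : ℕ} (a b : Fin n → Bool) : hDist a b ≤ n := by
  calc (Finset.univ.filter fun i => a i ≠ b i).card ≤ Finset.univ.card :=
        Finset.card_filter_le _ _
    _ = n := by simp

lemma hDist_update {n : ℕ} {a b : Fin n → Bool} {i : Fin n} (h : a i ≠ b i) :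
    hDist a (Function.update b i (a i)) + 1 = hDist a b := by
  have hfil : (Finset.univ.filter fun j => a j ≠ Function.update b i (a i) j)
      = (Finset.univ.filter fun j => a j ≠ b j).erase i := by
    ext j
    rcases eq_or_ne j i with rfl | hne
    · simp
    · simp [Function.update_of_ne hne, hne]
  rw [hDist, hfil]
  exact Finset.card_erase_add_one (Finset.mem_filter.mpr ⟨Finset.mem_univ _, h⟩)

lemma hDist_update_one {n : ℕ} {b : Fin n → Bool} {i : Fin n} {c : Bool} (h : c ≠ b i) :
    hDist b (Function.update b i c) = 1 := by
  have hfil : (Finset.univ.filter fun j => b j ≠ Function.update b i c j) = {i} := by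
    ext j
    rcases eq_or_ne j i with rfl | hne
    · simp [h.symm]
    · simp [Function.update_of_ne hne, hne]
  rw [hDist, hfil, Finset.card_singleton]

lemma hDist_antipode {n : ℕ} {a b : Fin n → Bool} (h : hDist a b = n) (c : Fin n → Bool) :
    hDist a c + hDist c b = n := by
  have hall : ∀ i, a i ≠ b i := by
    have huniv : (Finset.univ.filter fun i => a i ≠ b i) = Finset.univ :=
      Finset.eq_univ_of_card _ (h.trans (Fintype.card_fin n).symm)
    intro i
    have : i ∈ (Finset.univ.filter fun i => a i ≠ b i) := by
      rw [huniv]; exact Finset.mem_univ i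
    exact (Finset.mem_filter.mp this).2
  have hcompl : (Finset.univ.filter fun i => c i ≠ b i)
      = (Finset.univ.filter fun i => a i ≠ c i)ᶜ := by
    ext i
    have hi := hall i
    simp only [Finset.mem_filter, Finset.mem_compl, Finset.mem_univ, true_and]
    cases h1 : a i <;> cases h2 : b i <;> cases h3 : c i <;> simp_all
  rw [hDist, hDist, hcompl, Finset.card_add_card_compl, Fintype.card_fin]

lemma card_hDist_one {n : ℕ} (a : Fin n → Bool) :
    (Finset.univ.filter fun c => hDist a c = 1).card = n := by
  have hbij : (Finset.univ : Finset (Fin n)).card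
      = (Finset.univ.filter fun c => hDist a c = 1).card := by
    apply Finset.card_bij (fun (i : Fin n) _ => Function.update a i (!(a i)))
    · intro i _
      refine Finset.mem_filter.mpr ⟨Finset.mem_univ _, hDist_update_one ?_⟩
      cases h : a i <;> simp [h]
    · intro i _ j _ hij
      by_contra hne
      have h1 := congrFun hij i
      rw [Function.update_self, Function.update_of_ne hne] at h1
      cases a i <;> simp_all
    · intro c hc
      have hc1 : (Finset.univ.filter fun j => a j ≠ c j).card = 1 := (Finset.mem_filter.mp hc).2
      obtain ⟨i, hi⟩ := Finset.card_eq_one.mp hc1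
      refine ⟨i, Finset.mem_univ i, ?_⟩
      funext j
      rcases eq_or_ne j i with rfl | hne
      · rw [Function.update_self]
        have hmem : j ∈ Finset.univ.filter fun j => a j ≠ c j := by
          rw [hi]; exact Finset.mem_singleton_self j
        have haj := (Finset.mem_filter.mp hmem).2
        cases h1 : a j <;> cases h2 : c j <;> simp_all
      · rw [Function.update_of_ne hne]
        have hnmem : j ∉ Finset.univ.filter fun j => a j ≠ c j := by
          rw [hi]; simpa using hne
        have := Finset.mem_filter.not.mp hnmem
        simp only [Finset.mem_univ, true_and, not_not] at this
        exact this
  rw [← hbij]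
  simp

lemma cube_adj {n : ℕ} {a b : Fin n → Bool} :
    (cubeGraph n).Adj a b ↔ hDist a b = 1 := by
  rw [cubeGraph, SimpleGraph.fromRel_adj]
  constructor
  · rintro ⟨hne, h | h⟩
    · exact h
    · rw [hDist_comm]; exact h
  · intro h
    refine ⟨?_, Or.inl h⟩
    rintro rfl
    have h0 : hDist a a = 0 := hDist_eq_zero.mpr rfl
    have h1 : hDist a a = 1 := h
    omega

lemma adj_dist_ne {V : Type*} {G : SimpleGraph V} (hconn : G.Connected)
    (hmed : MedianGraph G) (z u1 u2 : V) (hadj : G.Adj u1 u2) :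
    G.dist z u1 ≠ G.dist z u2 := by
  intro heq
  obtain ⟨m, ⟨h12, h2z, hz1⟩, -⟩ := hmed u1 u2 z
  simp only [interval, Set.mem_setOf_eq] at h12 h2z hz1
  have hd12 : G.dist u1 u2 = 1 := SimpleGraph.dist_eq_one_iff_adj.mpr hadj
  rw [hd12] at h12
  have hcase : G.dist u1 m = 0 ∨ G.dist m u2 = 0 := by omega
  rcases hcase with h0 | h0
  · have hm : u1 = m := hconn.dist_eq_zero_iff.mp h0
    subst hm
    have e1 : G.dist u2 u1 = G.dist u1 u2 := SimpleGraph.dist_comm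
    have e2 : G.dist u1 z = G.dist z u1 := SimpleGraph.dist_comm
    have e3 : G.dist u2 z = G.dist z u2 := SimpleGraph.dist_comm
    omega
  · have hm : m = u2 := (hconn.dist_eq_zero_iff.mp h0)
    rw [hm] at hz1
    have e1 : G.dist u2 u1 = G.dist u1 u2 := SimpleGraph.dist_comm
    omega

lemma dist_le_hDist {V : Type*} {G : SimpleGraph V} (hconn : G.Connected) {n : ℕ}
    (ψ : (Fin n → Bool) → V) (hadj : ∀ a b, hDist a b = 1 → G.Adj (ψ a) (ψ b)) :
    ∀ (k : ℕ) (a b : Fin n → Bool), hDist a b = k → G.dist (ψ a) (ψ b) ≤ k := by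
  intro k
  induction k with
  | zero =>
    intro a b h
    rw [hDist_eq_zero.mp h]
    simp [SimpleGraph.dist_self]
  | succ k ih =>
    intro a b h
    have hpos : 0 < (Finset.univ.filter fun i => a i ≠ b i).card := by
      have : hDist a b = k + 1 := h
      rw [hDist] at this; omega
    obtain ⟨i, hi⟩ := Finset.card_pos.mp hpos
    have hib := (Finset.mem_filter.mp hi).2
    have h4 := hDist_update hib
    have h1 : hDist a (Function.update b i (a i)) = k := by omega
    have hb'b : hDist (Function.update b i (a i)) b = 1 := by
      rw [hDist_comm]; exact hDist_update_one hib
    have hadj1 : G.dist (ψ (Function.update b i (a i))) (ψ b) = 1 :=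
      SimpleGraph.dist_eq_one_iff_adj.mpr (hadj _ _ hb'b)
    have htri := hconn.dist_triangle (u := ψ a) (v := ψ (Function.update b i (a i))) (w := ψ b)
    have hih := ih a _ h1
    omega

/-- In a finite median graph with basepoint `z`, the vertex `w` of the downward cube
`C(v)` opposite to `v` is the gate of `z` in `C(v)`, and
`d(z,v) = d(z,w) + dim C(v)`. -/
theorem median_opposite_is_gate {V : Type*} [Fintype V] (G : SimpleGraph V)
    (hconn : G.Connected) (hmed : MedianGraph G) (z v : V)
    (C : Set V) (n : ℕ)
    (hiso : Nonempty (G.induce C ≃g cubeGraph n))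
    (hv : v ∈ C) (hΛ : downNbrs G z v ⊆ C)
    (hdim : n = (downNbrs G z v).ncard)
    (w : V) (hw : w ∈ C) (hopp : G.dist v w = n) :
    (∀ y ∈ C, w ∈ interval G z y) ∧ G.dist z v = G.dist z w + n := by
  classical
  obtain ⟨φ⟩ := hiso
  set a : Fin n → Bool := φ ⟨v, hv⟩ with ha
  set ψ : (Fin n → Bool) → V := fun c => ((φ.symm c : C) : V) with hψdef
  have hψC : ∀ c, ψ c ∈ C := fun c => (φ.symm c).2
  have hψφ : ∀ (y : V) (hy : y ∈ C), ψ (φ ⟨y, hy⟩) = y := by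
    intro y hy
    show ((φ.symm (φ ⟨y, hy⟩) : C) : V) = y
    rw [RelIso.symm_apply_apply]
  have hφψ : ∀ (c : Fin n → Bool) (h : ψ c ∈ C), φ ⟨ψ c, h⟩ = c := by
    intro c h
    have he : (⟨ψ c, h⟩ : C) = φ.symm c := rfl
    rw [he, RelIso.apply_symm_apply]
  have hψinj : Function.Injective ψ := by
    intro c d h
    have : φ.symm c = φ.symm d := Subtype.ext h
    exact φ.symm.injective this
  have hadjψ : ∀ c d, hDist c d = 1 → G.Adj (ψ c) (ψ d) := by
    intro c d h
    have h1 : (cubeGraph n).Adj c d := cube_adj.mpr h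
    have h2 : (G.induce C).Adj (φ.symm c) (φ.symm d) := φ.symm.map_adj_iff.mpr h1
    exact h2
  have hav : ψ a = v := by rw [ha]; exact hψφ v hv
  -- the downward neighbours are exactly the Hamming-1 sphere around `v` in the cube
  have hΛ1 : ∀ (y : V) (hy : y ∈ C), hDist a (φ ⟨y, hy⟩) = 1 → G.dist z y + 1 = G.dist z v := by
    have hsub : downNbrs G z v ⊆ ψ '' {c | hDist a c = 1} := by
      intro u hu
      have huC : u ∈ C := hΛ hu
      refine ⟨φ ⟨u, huC⟩, ?_, hψφ u huC⟩
      show hDist a (φ ⟨u, huC⟩) = 1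
      apply cube_adj.mp
      rw [ha]
      exact φ.map_adj_iff.mpr hu.1
    have himg : (ψ '' {c | hDist a c = 1}).ncard = n := by
      rw [Set.ncard_image_of_injective _ hψinj]
      have hset : {c : Fin n → Bool | hDist a c = 1}
          = ↑(Finset.univ.filter fun c => hDist a c = 1) := by
        ext c; simp
      rw [hset, Set.ncard_coe_finset, card_hDist_one]
    have hΛeq : downNbrs G z v = ψ '' {c | hDist a c = 1} :=
      Set.eq_of_subset_of_ncard_le hsub (by rw [himg, ← hdim]) (Set.toFinite _)
    intro y hy h1
    have hyΛ : y ∈ downNbrs G z v := by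
      rw [hΛeq]
      exact ⟨φ ⟨y, hy⟩, h1, hψφ y hy⟩
    exact hyΛ.2
  -- main claim: every vertex of the cube at Hamming distance `k` from `v` is
  -- at distance `d(z,v) - k` from `z`
  have key : ∀ (k : ℕ) (y : V) (hy : y ∈ C),
      hDist a (φ ⟨y, hy⟩) = k → G.dist z y + k = G.dist z v := by
    intro k
    induction k using Nat.strong_induction_on with
    | _ k ih =>
    intro y hy hk
    rcases k with _ | k
    · -- k = 0 : y = v
      have hvy : v = y := by
        have h0 : a = φ ⟨y, hy⟩ := hDist_eq_zero.mp hk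
        have h1 : (⟨v, hv⟩ : C) = ⟨y, hy⟩ := φ.injective (ha.symm.trans h0)
        exact congrArg Subtype.val h1
      subst hvy
      omega
    rcases k with _ | k
    · -- k = 1 : y ∈ Λ(v)
      exact hΛ1 y hy hk
    -- k + 2
    set b : Fin n → Bool := φ ⟨y, hy⟩ with hb
    have hyb : ψ b = y := hψφ y hy
    have hcard : 1 < (Finset.univ.filter fun i => a i ≠ b i).card := by
      have : hDist a b = k + 2 := hk
      rw [hDist] at this; omega
    obtain ⟨i, hi, j, hj, hij⟩ := Finset.one_lt_card.mp hcard
    have hia : a i ≠ b i := (Finset.mem_filter.mp hi).2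
    have hja : a j ≠ b j := (Finset.mem_filter.mp hj).2
    set b1 : Fin n → Bool := Function.update b i (a i) with hb1
    set b2 : Fin n → Bool := Function.update b j (a j) with hb2
    set b12 : Fin n → Bool := Function.update b1 j (a j) with hb12
    have hb1j : b1 j = b j := by rw [hb1]; exact Function.update_of_ne (Ne.symm hij) _ _
    have hb2i : b2 i = b i := by rw [hb2]; exact Function.update_of_ne hij _ _
    have hb1i : b1 i = a i := by rw [hb1]; exact Function.update_self _ _ _
    have hb12i : b12 i = a i := by
      rw [hb12]
      rw [Function.update_of_ne hij _ _]
      exact hb1i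
    -- Hamming distances
    have e1 : hDist a b1 = k + 1 := by
      have h5 : hDist a b1 + 1 = hDist a b := by rw [hb1]; exact hDist_update hia
      omega
    have e2 : hDist a b2 = k + 1 := by
      have h5 : hDist a b2 + 1 = hDist a b := by rw [hb2]; exact hDist_update hja
      omega
    have hja1 : a j ≠ b1 j := by rw [hb1j]; exact hja
    have e12 : hDist a b12 = k := by
      have h5 := hDist_update hja1
      rw [← hb12] at h5
      omega
    have hbb1 : hDist b b1 = 1 := hDist_update_one hia
    have hbb2 : hDist b b2 = 1 := hDist_update_one hja
    have hb1b12 : hDist b1 b12 = 1 := hDist_update_one hja1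
    have hcommute : b12 = Function.update b2 i (a i) := by
      rw [hb12, hb1, hb2]
      exact Function.update_comm hij _ _ _
    have hia2 : a i ≠ b2 i := by rw [hb2i]; exact hia
    have hb2b12 : hDist b2 b12 = 1 := by
      rw [hcommute]; exact hDist_update_one hia2
    -- induction hypotheses
    have k1 : G.dist z (ψ b1) + (k + 1) = G.dist z v :=
      ih (k + 1) (by omega) (ψ b1) (hψC b1) (by rw [hφψ b1 (hψC b1)]; exact e1)
    have k2 : G.dist z (ψ b2) + (k + 1) = G.dist z v :=
      ih (k + 1) (by omega) (ψ b2) (hψC b2) (by rw [hφψ b2 (hψC b2)]; exact e2)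
    have k12 : G.dist z (ψ b12) + k = G.dist z v :=
      ih k (by omega) (ψ b12) (hψC b12) (by rw [hφψ b12 (hψC b12)]; exact e12)
    -- graph distances along cube edges
    have A1 : G.dist (ψ b) (ψ b1) = 1 :=
      SimpleGraph.dist_eq_one_iff_adj.mpr (hadjψ b b1 hbb1)
    have A2 : G.dist (ψ b) (ψ b2) = 1 :=
      SimpleGraph.dist_eq_one_iff_adj.mpr (hadjψ b b2 hbb2)
    have A3 : G.dist (ψ b1) (ψ b12) = 1 :=
      SimpleGraph.dist_eq_one_iff_adj.mpr (hadjψ b1 b12 hb1b12)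
    have A4 : G.dist (ψ b2) (ψ b12) = 1 :=
      SimpleGraph.dist_eq_one_iff_adj.mpr (hadjψ b2 b12 hb2b12)
    rw [← hyb]
    have hne := adj_dist_ne hconn hmed z (ψ b) (ψ b1) (hadjψ b b1 hbb1)
    have t1 : G.dist z (ψ b) ≤ G.dist z (ψ b1) + 1 := by
      have ht := hconn.dist_triangle (u := z) (v := ψ b1) (w := ψ b)
      have hc : G.dist (ψ b1) (ψ b) = 1 := by rw [SimpleGraph.dist_comm]; exact A1
      omega
    have t2 : G.dist z (ψ b1) ≤ G.dist z (ψ b) + 1 := by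
      have ht := hconn.dist_triangle (u := z) (v := ψ b) (w := ψ b1)
      omega
    have hcases : G.dist z (ψ b) + 1 = G.dist z (ψ b1)
        ∨ G.dist z (ψ b) = G.dist z (ψ b1) + 1 := by omega
    rcases hcases with hdown | hup
    · omega
    · exfalso
      have d12 : G.dist z (ψ b12) = G.dist z (ψ b) := by omega
      have hbne : b ≠ b12 := by
        intro hcontra
        have hci : b i = b12 i := congrFun hcontra i
        rw [hb12i] at hci
        exact hia hci.symm
      have hne2 : ψ b ≠ ψ b12 := fun hc => hbne (hψinj hc)
      have hnadj : ¬ G.Adj (ψ b) (ψ b12) := fun hc =>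
        adj_dist_ne hconn hmed z _ _ hc d12.symm
      have hD2 : G.dist (ψ b) (ψ b12) = 2 := by
        have hle : G.dist (ψ b) (ψ b12) ≤ 2 := by
          have ht := hconn.dist_triangle (u := ψ b) (v := ψ b1) (w := ψ b12)
          omega
        have h0 : G.dist (ψ b) (ψ b12) ≠ 0 := fun hc =>
          hne2 (hconn.dist_eq_zero_iff.mp hc)
        have h1 : G.dist (ψ b) (ψ b12) ≠ 1 := fun hc =>
          hnadj (SimpleGraph.dist_eq_one_iff_adj.mp hc)
        omega
      obtain ⟨m, -, hmuniq⟩ := hmed z (ψ b) (ψ b12)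
      have hmem1 : ψ b1 ∈ interval G z (ψ b) ∧ ψ b1 ∈ interval G (ψ b) (ψ b12)
          ∧ ψ b1 ∈ interval G (ψ b12) z := by
        refine ⟨?_, ?_, ?_⟩ <;> simp only [interval, Set.mem_setOf_eq]
        · have hc : G.dist (ψ b1) (ψ b) = 1 := by rw [SimpleGraph.dist_comm]; exact A1
          omega
        · omega
        · have c1 : G.dist (ψ b12) (ψ b1) = 1 := by rw [SimpleGraph.dist_comm]; exact A3
          have c2 : G.dist (ψ b1) z = G.dist z (ψ b1) := SimpleGraph.dist_comm
          have c3 : G.dist (ψ b12) z = G.dist z (ψ b12) := SimpleGraph.dist_comm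
          omega
      have hmem2 : ψ b2 ∈ interval G z (ψ b) ∧ ψ b2 ∈ interval G (ψ b) (ψ b12)
          ∧ ψ b2 ∈ interval G (ψ b12) z := by
        refine ⟨?_, ?_, ?_⟩ <;> simp only [interval, Set.mem_setOf_eq]
        · have hc : G.dist (ψ b2) (ψ b) = 1 := by rw [SimpleGraph.dist_comm]; exact A2
          omega
        · omega
        · have c1 : G.dist (ψ b12) (ψ b2) = 1 := by rw [SimpleGraph.dist_comm]; exact A4
          have c2 : G.dist (ψ b2) z = G.dist z (ψ b2) := SimpleGraph.dist_comm
          have c3 : G.dist (ψ b12) z = G.dist z (ψ b12) := SimpleGraph.dist_comm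
          omega
      have heq12 : ψ b1 = ψ b2 := (hmuniq _ hmem1).trans (hmuniq _ hmem2).symm
      have hb1b2 : b1 = b2 := hψinj heq12
      have : a i = b i := by rw [← hb1i, hb1b2, hb2i]
      exact hia this
  -- conclusion
  have haw : hDist a (φ ⟨w, hw⟩) = n := by
    have hle : hDist a (φ ⟨w, hw⟩) ≤ n := hDist_le _ _
    have hge : G.dist v w ≤ hDist a (φ ⟨w, hw⟩) := by
      have hd := dist_le_hDist hconn ψ hadjψ (hDist a (φ ⟨w, hw⟩)) a (φ ⟨w, hw⟩) rfl
      rw [hav, hψφ w hw] at hd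
      exact hd
    omega
  have goal2 : G.dist z v = G.dist z w + n := by
    have := key n w hw haw; omega
  refine ⟨?_, goal2⟩
  intro y hy
  have h1 : G.dist z y + hDist a (φ ⟨y, hy⟩) = G.dist z v :=
    key _ y hy rfl
  have h2 : hDist a (φ ⟨y, hy⟩) + hDist (φ ⟨y, hy⟩) (φ ⟨w, hw⟩) = n :=
    hDist_antipode haw _
  have h3 : G.dist y w ≤ hDist (φ ⟨y, hy⟩) (φ ⟨w, hw⟩) := by
    have hd := dist_le_hDist hconn ψ hadjψ _ (φ ⟨y, hy⟩) (φ ⟨w, hw⟩) rfl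
    rw [hψφ y hy, hψφ w hw] at hd
    exact hd
  have h4 : G.dist z y ≤ G.dist z w + G.dist w y := hconn.dist_triangle
  have h5 : G.dist w y = G.dist y w := SimpleGraph.dist_comm
  show G.dist z w + G.dist w y = G.dist z y
  omega
end

section
/- Monotone orderings yield corner peelings in median graphs: let G be a finite median graph, z a vertex, and v₁ = z, v₂, …, v_n an ordering of V(G) with d(z,v₁) ≤ d(z,v₂) ≤ ⋯ ≤ d(z,v_n). Then for each i, the vertex v_i is a corner of the induced subgraph G_i = G[{v₁,…,v_i}], i.e., v_i together with all its neighbors in G_i lies in a unique cube of G_i. -/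
namespace CornerPeeling

open SimpleGraph

variable {V : Type*} {G : SimpleGraph V}

noncomputable def med (hm : MedianGraph G) (x y w : V) : V := (hm x y w).exists.choose

lemma med_spec (hm : MedianGraph G) (x y w : V) :
    (G.dist x (med hm x y w) + G.dist (med hm x y w) y = G.dist x y) ∧
    (G.dist y (med hm x y w) + G.dist (med hm x y w) w = G.dist y w) ∧
    (G.dist w (med hm x y w) + G.dist (med hm x y w) x = G.dist w x) :=
  (hm x y w).exists.choose_spec

lemma med_unique (hm : MedianGraph G) {x y w m : V}
    (h1 : G.dist x m + G.dist m y = G.dist x y)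
    (h2 : G.dist y m + G.dist m w = G.dist y w)
    (h3 : G.dist w m + G.dist m x = G.dist w x) :
    m = med hm x y w :=
  (hm x y w).unique ⟨h1, h2, h3⟩ (med_spec hm x y w)

lemma dist_one_iff_adj (hc : G.Connected) {x y : V} : G.dist x y = 1 ↔ G.Adj x y :=
  SimpleGraph.dist_eq_one_iff_adj

lemma dist_zero_iff (hc : G.Connected) {x y : V} : G.dist x y = 0 ↔ x = y :=
  hc.dist_eq_zero_iff

lemma dcomm (x y : V) : G.dist x y = G.dist y x := SimpleGraph.dist_comm

lemma tri (hc : G.Connected) (x y w : V) : G.dist x w ≤ G.dist x y + G.dist y w :=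
  hc.dist_triangle

/-- no triangles in a median graph -/
lemma no_triangle (hc : G.Connected) (hm : MedianGraph G) {x y w : V}
    (hxy : G.Adj x y) (hyw : G.Adj y w) (hxw : G.Adj x w) : False := by
  have dxy : G.dist x y = 1 := (dist_one_iff_adj hc).2 hxy
  have dyw : G.dist y w = 1 := (dist_one_iff_adj hc).2 hyw
  have dxw : G.dist x w = 1 := (dist_one_iff_adj hc).2 hxw
  obtain ⟨h1, h2, h3⟩ := med_spec hm x y w
  set m := med hm x y w
  have hm1 : G.dist x m = 0 ∨ G.dist m y = 0 := by omega
  rcases hm1 with h | h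
  · have hxm : x = m := ((dist_zero_iff hc).1 h)
    rw [← hxm] at h2
    rw [dcomm y x] at h2
    omega
  · have hmy : m = y := ((dist_zero_iff hc).1 h)
    rw [hmy] at h3
    rw [dcomm w y, dcomm y x, dcomm w x] at h3
    omega

section Meet

/-- meet with respect to basepoint `z` -/
noncomputable def meet (hm : MedianGraph G) (z x y : V) : V := med hm x y z

/-- `x` is below `y` in the basepoint order -/
def le' (G : SimpleGraph V) (z x y : V) : Prop := G.dist z x + G.dist x y = G.dist z y

variable (hc : G.Connected) (hm : MedianGraph G) (z : V)

lemma meet_le_left (x y : V) : le' G z (meet hm z x y) x :=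
  (med_spec hm x y z).2.2

lemma meet_le_right (x y : V) : le' G z (meet hm z x y) y := by
  have h := (med_spec hm x y z).2.1
  have e1 := dcomm (G := G) z (med hm x y z)
  have e2 := dcomm (G := G) y (med hm x y z)
  have e3 := dcomm (G := G) z y
  unfold le' meet
  omega

lemma dist_meet_add (x y : V) :
    G.dist x (meet hm z x y) + G.dist (meet hm z x y) y = G.dist x y :=
  (med_spec hm x y z).1

lemma le'_refl (x : V) : le' G z x x := by
  unfold le'; rw [SimpleGraph.dist_self]; omega

include hc in
lemma le'_trans {a b c : V} (h1 : le' G z a b) (h2 : le' G z b c) :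
    le' G z a c := by
  unfold le' at *
  have t1 := tri hc a b c
  have t2 := tri hc z a c
  omega

include hc in
lemma le'_antisymm {x y : V} (h1 : le' G z x y) (h2 : le' G z y x) : x = y := by
  unfold le' at *
  have e := dcomm (G := G) y x
  have : G.dist x y = 0 := by omega
  exact (dist_zero_iff hc).1 this

include hc in
lemma le'_meet {w x y : V} (hx : le' G z w x) (hy : le' G z w y) :
    le' G z w (meet hm z x y) := by
  obtain ⟨m1, m2, m3⟩ := med_spec hm x y w
  set mu := med hm x y w with hmu
  unfold le' at hx hy ⊢
  have hyz : G.dist y mu + G.dist mu z = G.dist y z ∧ G.dist z w + G.dist w mu = G.dist z mu := by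
    have t1 := tri hc y mu z
    have t2 := tri hc mu w z
    have e1 := dcomm (G := G) y w
    have e3 := dcomm (G := G) z y
    have e4 := dcomm (G := G) w mu
    have e5 := dcomm (G := G) y mu
    have e6 := dcomm (G := G) z mu
    have e7 := dcomm (G := G) z w
    constructor <;> omega
  have hxz : G.dist z mu + G.dist mu x = G.dist z x := by
    have t1 := tri hc z mu x
    have t2 := tri hc z w x
    have e1 := dcomm (G := G) w mu
    omega
  have : mu = meet hm z x y := by
    apply med_unique hm (w := z)
    · exact m1
    · have e1 := dcomm (G := G) y mu
      have e2 := dcomm (G := G) z mu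
      have e3 := dcomm (G := G) z y
      omega
    · exact hxz
  rw [← this]
  exact hyz.2

include hc in
lemma meet_comm (x y : V) : meet hm z x y = meet hm z y x := by
  apply le'_antisymm hc (z := z)
  · exact le'_meet hc hm z (meet_le_right hm z x y) (meet_le_left hm z x y)
  · exact le'_meet hc hm z (meet_le_right hm z y x) (meet_le_left hm z y x)

lemma meet_absorb {x y : V} (h : le' G z x y) : meet hm z x y = x := by
  symm
  apply med_unique hm (w := z)
  · rw [SimpleGraph.dist_self]; omega
  · unfold le' at h
    have e1 := dcomm (G := G) y x
    have e2 := dcomm (G := G) y z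
    have e3 := dcomm (G := G) x z
    have e4 := dcomm (G := G) z y
    omega
  · rw [SimpleGraph.dist_self]
    unfold le' at h
    omega

include hc in
lemma meet_assoc (x y w : V) :
    meet hm z (meet hm z x y) w = meet hm z x (meet hm z y w) := by
  apply le'_antisymm hc (z := z)
  · apply le'_meet hc hm
    · exact le'_trans hc z (le'_trans hc z (le'_refl z _) (meet_le_left hm z _ _)) (meet_le_left hm z _ _)
    · apply le'_meet hc hm
      · exact le'_trans hc z (meet_le_left hm z _ _) (meet_le_right hm z _ _)
      · exact meet_le_right hm z _ _
  · apply le'_meet hc hm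
    · apply le'_meet hc hm
      · exact meet_le_left hm z _ _
      · exact le'_trans hc z (meet_le_right hm z _ _) (meet_le_left hm z _ _)
    · exact le'_trans hc z (meet_le_right hm z _ _) (meet_le_right hm z _ _)

lemma meet_idem (x : V) : meet hm z x x = x := meet_absorb hm z (le'_refl z x)

/-- key distance formula -/
lemma dist_meet_eq (x y : V) :
    G.dist x y + 2 * G.dist z (meet hm z x y) = G.dist z x + G.dist z y := by
  have h1 := dist_meet_add hm z x y
  have h2 := meet_le_left hm z (G := G) x y
  have h3 := meet_le_right hm z (G := G) x y
  unfold le' at h2 h3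
  have e := dcomm (G := G) x (meet hm z x y)
  omega

end Meet

section Level

variable (hc : G.Connected) (hm : MedianGraph G) (z : V)

include hc in
lemma adj_dist_two {v0 x y : V} (hm' : MedianGraph G) (h1 : G.Adj v0 x) (h2 : G.Adj v0 y)
    (hne : x ≠ y) : G.dist x y = 2 := by
  have d1 : G.dist x v0 = 1 := (dist_one_iff_adj hc).2 h1.symm
  have d2 : G.dist v0 y = 1 := (dist_one_iff_adj hc).2 h2
  have t := tri hc x v0 y
  have hne0 : G.dist x y ≠ 0 := fun h => hne ((dist_zero_iff hc).1 h)
  have hne1 : G.dist x y ≠ 1 := by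
    intro h
    exact no_triangle hc hm' ((dist_one_iff_adj hc).1 h) h2.symm h1.symm
  omega

include hc in
lemma square {x y : V} (hq : G.dist z x = G.dist z y) (hd : G.dist x y = 2) :
    G.Adj x (meet hm z x y) ∧ G.Adj y (meet hm z x y) ∧
      G.dist z (meet hm z x y) + 1 = G.dist z x := by
  have h1 := dist_meet_add hm z x y
  have h2 := meet_le_left hm z (G := G) x y
  have h3 := meet_le_right hm z (G := G) x y
  unfold le' at h2 h3
  have e := dcomm (G := G) x (meet hm z x y)
  have hx1 : G.dist x (meet hm z x y) = 1 := by omega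
  have hy1 : G.dist (meet hm z x y) y = 1 := by omega
  refine ⟨(dist_one_iff_adj hc).1 hx1, ((dist_one_iff_adj hc).1 hy1).symm, by omega⟩

include hc in
lemma meet_inj_aux {p : ℕ} {v0 a x y : V} (hv : G.dist z v0 = p)
    (hav : G.Adj v0 a) (hxv : G.Adj v0 x) (hyv : G.Adj v0 y)
    (hla : G.dist z a + 1 = p) (hlx : G.dist z x + 1 = p) (hly : G.dist z y + 1 = p)
    (hax : a ≠ x) (hay : a ≠ y) (hxy : x ≠ y)
    (heq : meet hm z a x = meet hm z a y) : False := by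
  have dax : G.dist a x = 2 := adj_dist_two hc hm hav hxv hax
  have day : G.dist a y = 2 := adj_dist_two hc hm hav hyv hay
  have dxy : G.dist x y = 2 := adj_dist_two hc hm hxv hyv hxy
  obtain ⟨nax, nxx, nlx⟩ := square hc hm z (by omega : G.dist z a = G.dist z x) dax
  obtain ⟨nay, nyy, nly⟩ := square hc hm z (by omega : G.dist z a = G.dist z y) day
  rw [heq] at nax nxx nlx
  set n := meet hm z a y with hn
  -- both v0 and n are medians of (a, x, y)
  have dv : ∀ u w : V, G.Adj v0 u → G.Adj v0 w → G.dist u v0 + G.dist v0 w = 2 := by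
    intro u w h1 h2
    have := (dist_one_iff_adj hc).2 h1.symm
    have := (dist_one_iff_adj hc).2 h2
    omega
  have dn : ∀ u w : V, G.Adj u n → G.Adj n w → G.dist u n + G.dist n w = 2 := by
    intro u w h1 h2
    have := (dist_one_iff_adj hc).2 h1
    have := (dist_one_iff_adj hc).2 h2
    omega
  have hv0 : v0 = med hm a x y :=
    med_unique hm (by rw [dax]; exact dv a x hav hxv)
      (by rw [dxy]; exact dv x y hxv hyv) (by rw [dcomm y a, day]; exact dv y a hyv hav)
  have hnn : n = med hm a x y :=
    med_unique hm (by rw [dax]; exact dn a x nax nxx.symm)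
      (by rw [dxy]; exact dn x y nxx nyy.symm) (by rw [dcomm y a, day]; exact dn y a nyy nay.symm)
  have : v0 = n := by rw [hv0, hnn]
  rw [← this] at nly
  omega

variable [DecidableEq V]

/-- fold of meets over a finite set -/
noncomputable def mfold (hc : G.Connected) (hm : MedianGraph G) (z v0 : V) (A : Finset V) : V :=
  @Finset.fold V V (meet hm z) ⟨meet_comm hc hm z⟩ ⟨meet_assoc hc hm z⟩ v0 id A

@[simp] lemma mfold_empty (v0 : V) : mfold hc hm z v0 ∅ = v0 := rfl

lemma mfold_insert (v0 a : V) (A : Finset V) :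
    mfold hc hm z v0 (insert a A) = meet hm z a (mfold hc hm z v0 A) := by
  unfold mfold
  exact @Finset.fold_insert_idem V V (meet hm z) ⟨meet_comm hc hm z⟩ ⟨meet_assoc hc hm z⟩
    _ _ _ _ _ ⟨meet_idem hm z⟩

lemma mfold_le_base (v0 : V) (A : Finset V) : le' G z (mfold hc hm z v0 A) v0 := by
  induction A using Finset.induction_on with
  | empty => exact le'_refl z v0
  | insert _ _ h ih =>
      rw [mfold_insert]
      exact le'_trans hc z (meet_le_right hm z _ _) ih

lemma mfold_le_mem (v0 : V) {A : Finset V} {x : V} (hx : x ∈ A) :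
    le' G z (mfold hc hm z v0 A) x := by
  induction A using Finset.induction_on with
  | empty => exact absurd hx (Finset.notMem_empty x)
  | @insert a A ha ih =>
      rw [mfold_insert]
      rcases Finset.mem_insert.1 hx with h | h
      · rw [h] at *
        exact meet_le_left hm z _ _
      · exact le'_trans hc z (meet_le_right hm z _ _) (ih h)

include hc in
lemma meet_left_comm (a b c : V) :
    meet hm z a (meet hm z b c) = meet hm z b (meet hm z a c) := by
  rw [← meet_assoc hc hm z, meet_comm hc hm z a b, meet_assoc hc hm z]

lemma mfold_union (v0 : V) (A B : Finset V) :
    mfold hc hm z v0 (A ∪ B) = meet hm z (mfold hc hm z v0 A) (mfold hc hm z v0 B) := by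
  induction A using Finset.induction_on with
  | empty =>
      rw [Finset.empty_union, mfold_empty, meet_comm hc hm z,
        meet_absorb hm z (mfold_le_base hc hm z v0 B)]
  | @insert a A ha ih =>
      rw [Finset.insert_union, mfold_insert, mfold_insert, ih, ← meet_assoc hc hm z]

lemma mfold_image_meet (v0 a : V) (h : le' G z a v0) (A : Finset V) :
    mfold hc hm z a (A.image (meet hm z a)) = meet hm z a (mfold hc hm z v0 A) := by
  induction A using Finset.induction_on with
  | empty => rw [Finset.image_empty, mfold_empty, mfold_empty, meet_absorb hm z h]
  | @insert x A hx ih =>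
      rw [Finset.image_insert, mfold_insert, mfold_insert, ih,
        meet_assoc hc hm z a x _, ← meet_assoc hc hm z x a _, meet_comm hc hm z x a,
        meet_assoc hc hm z a x _, ← meet_assoc hc hm z a a _, meet_idem hm z]

include hc in
/-- The fundamental level lemma : meets of distinct down-neighbours drop levels one by one. -/
lemma level_lemma : ∀ p : ℕ, ∀ v0 : V, G.dist z v0 = p → ∀ A : Finset V,
    (∀ x ∈ A, G.Adj v0 x ∧ G.dist z x + 1 = p) →
    G.dist z (mfold hc hm z v0 A) + A.card = p := by
  intro p
  induction p using Nat.strong_induction_on with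
  | _ p IH =>
    intro v0 hv A hA
    rcases A.eq_empty_or_nonempty with rfl | ⟨a, ha⟩
    · simpa using hv
    · set q := G.dist z a with hqdef
      have hq : q + 1 = p := (hA a ha).2
      set A' := A.erase a with hA'
      set B := A'.image (meet hm z a) with hB
      have hmem : ∀ x ∈ A', x ≠ a ∧ G.Adj v0 x ∧ G.dist z x + 1 = p := by
        intro x hx
        exact ⟨Finset.ne_of_mem_erase hx, (hA x (Finset.mem_of_mem_erase hx)).1,
          (hA x (Finset.mem_of_mem_erase hx)).2⟩
      have hBmem : ∀ b ∈ B, G.Adj a b ∧ G.dist z b + 1 = q := by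
        intro b hb
        obtain ⟨x, hx, rfl⟩ := Finset.mem_image.1 hb
        obtain ⟨hxa, hxv, hlx⟩ := hmem x hx
        have d2 : G.dist a x = 2 := adj_dist_two hc hm (hA a ha).1 hxv (Ne.symm hxa)
        obtain ⟨h1, h2, h3⟩ := square hc hm z (by omega : G.dist z a = G.dist z x) d2
        exact ⟨h1, by omega⟩
      have hcard : B.card = A'.card := by
        apply Finset.card_image_of_injOn
        intro x hx y hy hxy
        by_contra hne
        obtain ⟨hxa, hxv, hlx⟩ := hmem x hx
        obtain ⟨hya, hyv, hly⟩ := hmem y hy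
        exact meet_inj_aux hc hm z hv (hA a ha).1 hxv hyv hq hlx hly
          (Ne.symm hxa) (Ne.symm hya) hne hxy
      have hIH := IH q (by omega) a rfl B hBmem
      have hle : le' G z a v0 := by
        unfold le'
        have : G.dist a v0 = 1 := (dist_one_iff_adj hc).2 (hA a ha).1.symm
        omega
      rw [mfold_image_meet hc hm z v0 a hle A'] at hIH
      have hins : insert a A' = A := Finset.insert_erase ha
      have : meet hm z a (mfold hc hm z v0 A') = mfold hc hm z v0 A := by
        rw [← mfold_insert hc hm z, hins]
      rw [this] at hIH
      have hcA : A.card = A'.card + 1 := by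
        rw [hA', Finset.card_erase_of_mem ha]
        have : 0 < A.card := Finset.card_pos.2 ⟨a, ha⟩
        omega
      omega

include hc in
lemma mfold_dist {p : ℕ} {v0 : V} (hv : G.dist z v0 = p) {D : Finset V}
    (hD : ∀ x ∈ D, G.Adj v0 x ∧ G.dist z x + 1 = p) {A B : Finset V}
    (hA : A ⊆ D) (hB : B ⊆ D) :
    G.dist (mfold hc hm z v0 A) (mfold hc hm z v0 B) = (A \ B).card + (B \ A).card := by
  have lA := level_lemma hc hm z p v0 hv A (fun x hx => hD x (hA hx))
  have lB := level_lemma hc hm z p v0 hv B (fun x hx => hD x (hB hx))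
  have lU := level_lemma hc hm z p v0 hv (A ∪ B)
    (fun x hx => hD x ((Finset.union_subset hA hB) hx))
  have key := dist_meet_eq hm z (mfold hc hm z v0 A) (mfold hc hm z v0 B)
  rw [← mfold_union hc hm z] at key
  have c1 : (A ∪ B).card + (A ∩ B).card = A.card + B.card := Finset.card_union_add_card_inter A B
  have c2 : (A \ B).card + (A ∩ B).card = A.card := Finset.card_sdiff_add_card_inter A B
  have c3 : (B \ A).card + (B ∩ A).card = B.card := Finset.card_sdiff_add_card_inter B A
  have c4 : (A ∩ B).card = (B ∩ A).card := by rw [Finset.inter_comm]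
  omega

end Level

section Cube

lemma cube_adj {m : ℕ} {f g : Fin m → Bool} :
    (cubeGraph m).Adj f g ↔ (Finset.univ.filter fun j => f j ≠ g j).card = 1 := by
  unfold cubeGraph
  rw [SimpleGraph.fromRel_adj]
  have hsymm : (Finset.univ.filter fun i => g i ≠ f i) = (Finset.univ.filter fun i => f i ≠ g i) := by
    ext j; simp [ne_comm]
  constructor
  · rintro ⟨hne, h | h⟩
    · exact h
    · rwa [hsymm] at h
  · intro h
    refine ⟨?_, Or.inl h⟩
    rintro rfl
    simp at h

def uvec {m : ℕ} (a : Fin m) : Fin m → Bool := fun t => decide (t = a)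

lemma filter_uvec {m : ℕ} (a : Fin m) :
    (Finset.univ.filter fun j => uvec a j = true) = {a} := by
  ext j; simp [uvec]

lemma eq_uvec_of_card_one {m : ℕ} {f : Fin m → Bool}
    (h : (Finset.univ.filter fun j => f j = true).card = 1) : ∃ a, f = uvec a := by
  obtain ⟨a, ha⟩ := Finset.card_eq_one.1 h
  refine ⟨a, funext fun t => ?_⟩
  have := Finset.ext_iff.1 ha t
  simp only [Finset.mem_filter, Finset.mem_univ, true_and, Finset.mem_singleton] at this
  cases htf : f t with
  | false =>
      have hne : t ≠ a := fun he => by simp [this.2 he] at htf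
      simp [uvec, hne]
  | true => simp [uvec, this.1 htf]

lemma eq_false_of_card_zero {m : ℕ} {f : Fin m → Bool}
    (h : (Finset.univ.filter fun j => f j = true).card = 0) : f = fun _ => false := by
  funext t
  rw [Finset.card_eq_zero] at h
  have := Finset.eq_empty_iff_forall_notMem.1 h t
  simp at this
  exact this

lemma cube_xor_adj {m : ℕ} (c : Fin m → Bool) {f g : Fin m → Bool} :
    (cubeGraph m).Adj (fun j => xor (f j) (c j)) (fun j => xor (g j) (c j)) ↔
      (cubeGraph m).Adj f g := by
  rw [cube_adj, cube_adj]
  have : (Finset.univ.filter fun j => xor (f j) (c j) ≠ xor (g j) (c j)) =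
      (Finset.univ.filter fun j => f j ≠ g j) := by
    ext j
    simp only [Finset.mem_filter, Finset.mem_univ, true_and]
    cases f j <;> cases g j <;> cases c j <;> simp
  rw [this]

/-- the xor equivalence on the cube -/
def xorEquiv {m : ℕ} (c : Fin m → Bool) : (Fin m → Bool) ≃ (Fin m → Bool) :=
  Function.Involutive.toPerm (fun f j => xor (f j) (c j))
    (fun f => by funext j; simp [Bool.xor_assoc])

lemma filter_update_false {m : ℕ} (f : Fin m → Bool) (a : Fin m) :
    (Finset.univ.filter fun j => (Function.update f a false) j = true) =
      (Finset.univ.filter fun j => f j = true).erase a := by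
  ext j
  rcases eq_or_ne j a with rfl | hne
  · simp [Function.update]
  · simp [Function.update, hne]

lemma cube_adj_update {m : ℕ} {f : Fin m → Bool} {a : Fin m} (ha : f a = true) :
    (cubeGraph m).Adj f (Function.update f a false) := by
  rw [cube_adj]
  have : (Finset.univ.filter fun j => f j ≠ (Function.update f a false) j) = {a} := by
    ext j
    rcases eq_or_ne j a with rfl | hne
    · simp [Function.update, ha]
    · simp [Function.update, hne]
  rw [this, Finset.card_singleton]

lemma card_ne_filter {m : ℕ} (f g : Fin m → Bool) :
    (Finset.univ.filter fun j => f j ≠ g j) =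
      ((Finset.univ.filter fun j => f j = true) \ (Finset.univ.filter fun j => g j = true)) ∪
      ((Finset.univ.filter fun j => g j = true) \ (Finset.univ.filter fun j => f j = true)) := by
  ext j
  simp only [Finset.mem_filter, Finset.mem_univ, true_and, Finset.mem_union, Finset.mem_sdiff]
  cases f j <;> cases g j <;> simp

end Cube

section More
variable (hc : G.Connected) (hm : MedianGraph G) (z : V)

include hc hm in
lemma adj_level {x y : V} (h : G.Adj x y) :
    G.dist z x + 1 = G.dist z y ∨ G.dist z y + 1 = G.dist z x := by
  have hxy : G.dist x y = 1 := (dist_one_iff_adj hc).2 h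
  obtain ⟨h1, h2, h3⟩ := med_spec hm x y z
  set m := med hm x y z
  have h0 : G.dist x m = 0 ∨ G.dist m y = 0 := by omega
  rcases h0 with h0 | h0
  · have hx : x = m := (dist_zero_iff hc).1 h0
    rw [← hx] at h2
    have e1 := dcomm (G := G) y x
    have e2 := dcomm (G := G) x z
    have e3 := dcomm (G := G) y z
    left; omega
  · have hy : m = y := (dist_zero_iff hc).1 h0
    rw [hy] at h3
    have e1 := dcomm (G := G) z y
    have e2 := dcomm (G := G) y x
    have e3 := dcomm (G := G) z x
    right; omega

include hc hm in
lemma at_most_two_common {x y a b c : V} (hxy : G.dist x y = 2)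
    (hxa : G.Adj x a) (hya : G.Adj y a) (hxb : G.Adj x b) (hyb : G.Adj y b)
    (hxc : G.Adj x c) (hyc : G.Adj y c)
    (hab : a ≠ b) (hac : a ≠ c) (hbc : b ≠ c) : False := by
  have dab : G.dist a b = 2 := adj_dist_two hc hm hxa hxb hab
  have dbc : G.dist b c = 2 := adj_dist_two hc hm hxb hxc hbc
  have dca : G.dist c a = 2 := by
    rw [dcomm (G := G) c a]; exact adj_dist_two hc hm hxa hxc hac
  have dx : ∀ u w : V, G.Adj x u → G.Adj x w → G.dist u x + G.dist x w = 2 := by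
    intro u w h1 h2
    have e1 : G.dist x u = 1 := (dist_one_iff_adj hc).2 h1
    have e2 : G.dist x w = 1 := (dist_one_iff_adj hc).2 h2
    have e3 := dcomm (G := G) u x
    omega
  have dy : ∀ u w : V, G.Adj y u → G.Adj y w → G.dist u y + G.dist y w = 2 := by
    intro u w h1 h2
    have e1 : G.dist y u = 1 := (dist_one_iff_adj hc).2 h1
    have e2 : G.dist y w = 1 := (dist_one_iff_adj hc).2 h2
    have e3 := dcomm (G := G) u y
    omega
  have hx : x = med hm a b c :=
    med_unique hm (by rw [dab]; exact dx a b hxa hxb) (by rw [dbc]; exact dx b c hxb hxc)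
      (by rw [dca]; exact dx c a hxc hxa)
  have hy : y = med hm a b c :=
    med_unique hm (by rw [dab]; exact dy a b hya hyb) (by rw [dbc]; exact dy b c hyb hyc)
      (by rw [dca]; exact dy c a hyc hya)
  rw [← hy] at hx
  rw [hx] at hxy
  rw [SimpleGraph.dist_self] at hxy
  omega

end More

section Final

variable (hc : G.Connected) (hm : MedianGraph G) (z : V)
variable [Fintype V] [DecidableEq V]

lemma erase_sdiff_erase {α : Type*} [DecidableEq α] {s : Finset α} {a b : α}
    (hb : b ∈ s) (hab : a ≠ b) :
    s.erase a \ s.erase b = {b} := by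
  ext t
  simp only [Finset.mem_sdiff, Finset.mem_erase, Finset.mem_singleton, not_and]
  constructor
  · rintro ⟨⟨_, htF⟩, hrest⟩
    by_contra htb
    exact (hrest htb) htF
  · rintro rfl
    exact ⟨⟨Ne.symm hab, hb⟩, fun h' => absurd rfl h'⟩

lemma sdiff_erase_erase {α : Type*} [DecidableEq α] {s : Finset α} {a b : α}
    (ha : a ∈ s) (hb : b ∈ s) :
    s \ (s.erase a).erase b = {a, b} := by
  ext t
  simp only [Finset.mem_sdiff, Finset.mem_erase, Finset.mem_insert, Finset.mem_singleton, not_and]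
  constructor
  · rintro ⟨htF, hrest⟩
    by_contra hcon
    push_neg at hcon
    exact (hrest hcon.2 hcon.1) htF
  · rintro (rfl | rfl)
    · exact ⟨ha, fun h1 h2 => absurd rfl h2⟩
    · exact ⟨hb, fun h1 h2 => absurd rfl h1⟩

include hc hm in
lemma cube_exists_unique (x : V) (p : ℕ) (hx : G.dist z x = p)
    (L : Set V) (hxL : x ∈ L) (hLlevel : ∀ w ∈ L, G.dist z w ≤ p)
    (hmemL : ∀ w : V, G.dist z w < p → w ∈ L) :
    ∃! C : Set V, C ⊆ L ∧ x ∈ C ∧ (∀ u ∈ L, G.Adj x u → u ∈ C) ∧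
      ∃ k : ℕ, Nonempty (G.induce C ≃g cubeGraph k) := by
  classical
  set D : Finset V := Finset.univ.filter (fun u => G.Adj x u ∧ G.dist z u + 1 = p) with hD
  have hDdown : ∀ u ∈ D, G.Adj x u ∧ G.dist z u + 1 = p := by
    intro u hu; simpa [hD] using hu
  have hDD : ∀ u, G.Adj x u → G.dist z u + 1 = p → u ∈ D := by
    intro u h1 h2; simp only [hD, Finset.mem_filter, Finset.mem_univ, true_and]; exact ⟨h1, h2⟩
  have hDL : ∀ u ∈ D, u ∈ L := fun u hu => hmemL u (by have := (hDdown u hu).2; omega)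
  have hnbr : ∀ u ∈ L, G.Adj x u → u ∈ D := by
    intro u hu hadj
    rcases adj_level hc hm z hadj with h | h
    · have := hLlevel u hu; omega
    · exact hDD u hadj (by omega)
  set φ : Finset V → V := fun A => mfold hc hm z x A with hφ
  have hdist : ∀ {A B : Finset V}, A ⊆ D → B ⊆ D →
      G.dist (φ A) (φ B) = (A \ B).card + (B \ A).card :=
    fun {A B} hA hB => mfold_dist hc hm z hx hDdown hA hB
  have hlevelφ : ∀ {A : Finset V}, A ⊆ D → G.dist z (φ A) + A.card = p :=
    fun {A} hA => level_lemma hc hm z p x hx A (fun u hu => hDdown u (hA hu))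
  have hinj : ∀ {A B : Finset V}, A ⊆ D → B ⊆ D → φ A = φ B → A = B := by
    intro A B hA hB h
    have hd := hdist hA hB
    rw [h, SimpleGraph.dist_self] at hd
    have h1 : A ⊆ B := Finset.sdiff_eq_empty_iff_subset.1 (Finset.card_eq_zero.1 (by omega))
    have h2 : B ⊆ A := Finset.sdiff_eq_empty_iff_subset.1 (Finset.card_eq_zero.1 (by omega))
    exact Finset.Subset.antisymm h1 h2
  set C : Set V := φ '' {A : Finset V | A ⊆ D} with hC
  have hmemC : ∀ {A : Finset V}, A ⊆ D → φ A ∈ C := fun {A} hA => ⟨A, hA, rfl⟩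
  have hφempty : φ ∅ = x := rfl
  have hxC : x ∈ C := ⟨∅, by simp, hφempty⟩
  have hsingle : ∀ u ∈ D, φ {u} = u := by
    intro u hu
    have h1 := (hDdown u hu).1
    have h2 := (hDdown u hu).2
    show mfold hc hm z x {u} = u
    rw [show ({u} : Finset V) = insert u ∅ from rfl, mfold_insert hc hm z, mfold_empty]
    apply meet_absorb hm z
    unfold le'
    have h3 : G.dist u x = 1 := (dist_one_iff_adj hc).2 h1.symm
    omega
  have hCL : C ⊆ L := by
    rintro c ⟨A, hA, rfl⟩
    rcases A.eq_empty_or_nonempty with rfl | hne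
    · rw [hφempty]; exact hxL
    · have := hlevelφ hA
      have hcard : 0 < A.card := Finset.card_pos.2 hne
      exact hmemL _ (by omega)
  have hnbrC : ∀ u ∈ L, G.Adj x u → u ∈ C := by
    intro u hu hadj
    have huD := hnbr u hu hadj
    rw [← hsingle u huD]
    exact hmemC (Finset.singleton_subset_iff.2 huD)
  -- enumeration of D
  set k := D.card with hk
  set ε : ↥D ≃ Fin k := D.equivFin with hε
  set ι : Fin k → V := fun j => ↑(ε.symm j) with hι
  have hιD : ∀ j, ι j ∈ D := fun j => (ε.symm j).2
  have hιinj : Function.Injective ι := by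
    intro a b h
    have h2 : ε.symm a = ε.symm b := Subtype.ext h
    simpa using congrArg ε h2
  have hιsurj : ∀ u ∈ D, ∃ j, ι j = u := fun u hu => ⟨ε ⟨u, hu⟩, by simp [hι]⟩
  set toSet : (Fin k → Bool) → Finset V :=
    fun f => (Finset.univ.filter fun j => f j = true).image ι with htoSet
  have htoSetD : ∀ f, toSet f ⊆ D := by
    intro f u hu
    obtain ⟨j, _, rfl⟩ := Finset.mem_image.1 hu
    exact hιD j
  have hcard2 : ∀ f g : Fin k → Bool,
      (toSet f \ toSet g).card + (toSet g \ toSet f).card =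
        (Finset.univ.filter fun j => f j ≠ g j).card := by
    intro f g
    rw [htoSet]
    rw [← Finset.image_sdiff _ _ hιinj, ← Finset.image_sdiff _ _ hιinj,
      Finset.card_image_of_injective _ hιinj, Finset.card_image_of_injective _ hιinj,
      card_ne_filter f g]
    exact (Finset.card_union_of_disjoint disjoint_sdiff_sdiff).symm
  have hadjV : ∀ f g : Fin k → Bool,
      G.Adj (φ (toSet f)) (φ (toSet g)) ↔ (cubeGraph k).Adj f g := by
    intro f g
    rw [← dist_one_iff_adj hc, hdist (htoSetD f) (htoSetD g), hcard2, cube_adj]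
  set Φ : (Fin k → Bool) → ↥C := fun f => ⟨φ (toSet f), hmemC (htoSetD f)⟩ with hΦ
  have hΦbij : Function.Bijective Φ := by
    constructor
    · intro f g h
      have h2 : φ (toSet f) = φ (toSet g) := congrArg Subtype.val h
      have h3 : toSet f = toSet g := hinj (htoSetD f) (htoSetD g) h2
      funext j
      by_contra hne
      have hj : j ∈ Finset.univ.filter fun t => f t ≠ g t := by simp [hne]
      have hcard0 := hcard2 f g
      rw [h3, Finset.sdiff_self, Finset.card_empty] at hcard0
      have : (Finset.univ.filter fun t => f t ≠ g t) = ∅ := Finset.card_eq_zero.1 (by omega)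
      rw [this] at hj
      exact Finset.notMem_empty j hj
    · rintro ⟨c, A, hA, rfl⟩
      refine ⟨fun j => decide (ι j ∈ A), Subtype.ext ?_⟩
      show φ (toSet fun j => decide (ι j ∈ A)) = φ A
      have hTeq : (toSet fun j => decide (ι j ∈ A)) = A := by
        ext u
        simp only [htoSet, Finset.mem_image, Finset.mem_filter, Finset.mem_univ, true_and,
          decide_eq_true_eq]
        constructor
        · rintro ⟨j, hj, rfl⟩; exact hj
        · intro hu
          obtain ⟨j, rfl⟩ := hιsurj u (hA hu)
          exact ⟨j, hu, rfl⟩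
      rw [hTeq]
  have hiso : Nonempty (G.induce C ≃g cubeGraph k) := by
    refine ⟨SimpleGraph.Iso.symm (⟨Equiv.ofBijective Φ hΦbij, ?_⟩ : cubeGraph k ≃g G.induce C)⟩
    exact fun {f g} => hadjV f g
  refine ⟨C, ⟨hCL, hxC, hnbrC, k, hiso⟩, ?_⟩
  -- uniqueness
  rintro C' ⟨hC'L, hxC', hC'nbr, m, ⟨ι0⟩⟩
  have hDC' : ∀ u ∈ D, u ∈ C' := fun u hu => hC'nbr u (hDL u hu) (hDdown u hu).1
  set f₀ : Fin m → Bool := ι0 ⟨x, hxC'⟩ with hf₀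
  set K : ↥C' ≃ (Fin m → Bool) := ι0.toEquiv.trans (xorEquiv f₀) with hK
  have hKdef : ∀ a : ↥C', K a = fun j => xor (ι0 a j) (f₀ j) := fun a => rfl
  have hK0 : K ⟨x, hxC'⟩ = fun _ => false := by
    rw [hKdef]
    funext j
    simp
    rfl
  have hKadj : ∀ a b : ↥C', (cubeGraph m).Adj (K a) (K b) ↔ G.Adj ↑a ↑b := by
    intro a b
    rw [hKdef, hKdef, cube_xor_adj]
    exact ι0.map_rel_iff
  set σ : Fin m → V := fun j => ↑(K.symm (uvec j)) with hσ
  have hσC' : ∀ j, σ j ∈ C' := fun j => (K.symm (uvec j)).2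
  have cube0adj : ∀ f : Fin m → Bool,
      (cubeGraph m).Adj (fun _ => false) f ↔
        (Finset.univ.filter fun j => f j = true).card = 1 := by
    intro f
    rw [cube_adj]
    have he : (Finset.univ.filter fun j => (fun _ => false : Fin m → Bool) j ≠ f j) =
        (Finset.univ.filter fun j => f j = true) := by
      ext j
      simp only [Finset.mem_filter, Finset.mem_univ, true_and]
      cases f j <;> simp
    rw [he]
  have hadjxσ : ∀ j, G.Adj x (σ j) := by
    intro j
    have h1 := (hKadj ⟨x, hxC'⟩ (K.symm (uvec j)))
    rw [hK0, Equiv.apply_symm_apply] at h1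
    exact h1.1 ((cube0adj (uvec j)).2 (by rw [filter_uvec]; exact Finset.card_singleton _))
  have hσD : ∀ j, σ j ∈ D := fun j => hnbr _ (hC'L (hσC' j)) (hadjxσ j)
  have hσinj : Function.Injective σ := by
    intro a b h
    have h2 : K.symm (uvec a) = K.symm (uvec b) := Subtype.ext h
    have h3 : uvec a = uvec b := by simpa using congrArg K h2
    have h4 := congrFun h3 a
    simp [uvec] at h4
    exact h4
  have hσsurjD : ∀ u ∈ D, ∃ j, σ j = u := by
    intro u hu
    have huC' : u ∈ C' := hDC' u hu
    have h1 := (hKadj ⟨x, hxC'⟩ ⟨u, huC'⟩)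
    rw [hK0] at h1
    have h2 := h1.2 (hDdown u hu).1
    obtain ⟨a, ha⟩ := eq_uvec_of_card_one ((cube0adj _).1 h2)
    refine ⟨a, ?_⟩
    have hKu : K.symm (uvec a) = ⟨u, huC'⟩ := by rw [← ha]; simp
    show (↑(K.symm (uvec a)) : V) = u
    rw [hKu]
  set T : (Fin m → Bool) → Finset V :=
    fun f => (Finset.univ.filter fun j => f j = true).image σ with hT
  have hTD : ∀ f, T f ⊆ D := by
    intro f u hu
    obtain ⟨j, _, rfl⟩ := Finset.mem_image.1 hu
    exact hσD j
  have himg : ∀ S1 S2 : Finset (Fin m), ((S1.image σ) \ (S2.image σ)).card = (S1 \ S2).card := by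
    intro S1 S2
    rw [← Finset.image_sdiff _ _ hσinj, Finset.card_image_of_injective _ hσinj]
  have hsubD : ∀ S : Finset (Fin m), S.image σ ⊆ D := by
    intro S u hu
    obtain ⟨j, _, rfl⟩ := Finset.mem_image.1 hu
    exact hσD j
  have main : ∀ N : ℕ, ∀ f : Fin m → Bool,
      (Finset.univ.filter fun j => f j = true).card = N →
      (↑(K.symm f) : V) = φ (T f) := by
    intro N
    induction N using Nat.strong_induction_on with
    | _ N IH =>
      intro f hN
      match N, hN with
      | 0, hN =>
        have hf : f = fun _ => false := eq_false_of_card_zero hN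
        subst hf
        have h1 : K.symm (fun _ => false) = ⟨x, hxC'⟩ := by rw [← hK0]; simp
        have h2 : T (fun _ => false) = ∅ := by
          rw [hT]; simp
        rw [h1, h2, hφempty]
      | 1, hN =>
        obtain ⟨a, rfl⟩ := eq_uvec_of_card_one hN
        have h2 : T (uvec a) = {σ a} := by
          rw [hT]
          simp only [filter_uvec, Finset.image_singleton]
        rw [h2, hsingle _ (hσD a)]
      | (N+2), hN =>
        obtain ⟨a, ha, b, hb, hab⟩ := Finset.one_lt_card.1
          (by omega : 1 < (Finset.univ.filter fun j => f j = true).card)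
        set F := Finset.univ.filter fun j => f j = true with hF
        have hfa : f a = true := (Finset.mem_filter.1 ha).2
        have hfb : f b = true := (Finset.mem_filter.1 hb).2
        set g := Function.update f a false with hg
        set h2 := Function.update f b false with hh2
        set w := Function.update g b false with hw
        have hFg : (Finset.univ.filter fun j => g j = true) = F.erase a := filter_update_false f a
        have hFh : (Finset.univ.filter fun j => h2 j = true) = F.erase b := filter_update_false f b
        have hFw : (Finset.univ.filter fun j => w j = true) = (F.erase a).erase b := by
          rw [hw, filter_update_false g b, hFg]
        have hbma : b ∈ F.erase a := Finset.mem_erase.2 ⟨Ne.symm hab, hb⟩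
        have hamb : a ∈ F.erase b := Finset.mem_erase.2 ⟨hab, ha⟩
        have hcg : (F.erase a).card = N + 1 := by
          rw [Finset.card_erase_of_mem ha, hN]; omega
        have hch : (F.erase b).card = N + 1 := by
          rw [Finset.card_erase_of_mem hb, hN]; omega
        have hcw : ((F.erase a).erase b).card = N := by
          rw [Finset.card_erase_of_mem hbma, hcg]; omega
        have IHg := IH (N + 1) (by omega) g (by rw [hFg]; exact hcg)
        have IHh := IH (N + 1) (by omega) h2 (by rw [hFh]; exact hch)
        have IHw := IH N (by omega) w (by rw [hFw]; exact hcw)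
        -- G-adjacency from the cube
        have hGadj : ∀ f1 f2 : Fin m → Bool, (cubeGraph m).Adj f1 f2 →
            G.Adj ↑(K.symm f1) ↑(K.symm f2) := by
          intro f1 f2 hA
          have := (hKadj (K.symm f1) (K.symm f2))
          rw [Equiv.apply_symm_apply, Equiv.apply_symm_apply] at this
          exact this.1 hA
        have hGfg : G.Adj ↑(K.symm f) ↑(K.symm g) := hGadj f g (cube_adj_update hfa)
        have hGfh : G.Adj ↑(K.symm f) ↑(K.symm h2) := hGadj f h2 (cube_adj_update hfb)
        -- identify T's with images
        have hTg : T g = (F.erase a).image σ := by simp only [hT]; rw [hFg]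
        have hTh : T h2 = (F.erase b).image σ := by simp only [hT]; rw [hFh]
        have hTw : T w = ((F.erase a).erase b).image σ := by simp only [hT]; rw [hFw]
        have hTf : T f = F.image σ := by simp only [hT]; rfl
        rw [IHg, hTg] at hGfg
        rw [IHh, hTh] at hGfh
        -- distance between the two lower neighbours
        have hdgh : G.dist (φ ((F.erase a).image σ)) (φ ((F.erase b).image σ)) = 2 := by
          rw [hdist (hsubD _) (hsubD _), himg, himg, erase_sdiff_erase hb hab,
            erase_sdiff_erase ha (Ne.symm hab), Finset.card_singleton, Finset.card_singleton]
        -- the two known common neighbours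
        have hwg : G.Adj (φ (((F.erase a).erase b).image σ)) (φ ((F.erase a).image σ)) := by
          rw [← dist_one_iff_adj hc, hdist (hsubD _) (hsubD _), himg, himg]
          rw [Finset.sdiff_eq_empty_iff_subset.2 (Finset.erase_subset _ _), Finset.card_empty,
            Finset.sdiff_erase_self hbma, Finset.card_singleton]
        have hwh : G.Adj (φ (((F.erase a).erase b).image σ)) (φ ((F.erase b).image σ)) := by
          rw [← dist_one_iff_adj hc, hdist (hsubD _) (hsubD _), himg, himg]
          rw [Finset.erase_right_comm]
          rw [Finset.sdiff_eq_empty_iff_subset.2 (Finset.erase_subset _ _), Finset.card_empty,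
            Finset.sdiff_erase_self hamb, Finset.card_singleton]
        have hfg' : G.Adj (φ (F.image σ)) (φ ((F.erase a).image σ)) := by
          rw [← dist_one_iff_adj hc, hdist (hsubD _) (hsubD _), himg, himg]
          rw [Finset.sdiff_eq_empty_iff_subset.2 (Finset.erase_subset _ _), Finset.card_empty,
            Finset.sdiff_erase_self ha, Finset.card_singleton]
        have hfh' : G.Adj (φ (F.image σ)) (φ ((F.erase b).image σ)) := by
          rw [← dist_one_iff_adj hc, hdist (hsubD _) (hsubD _), himg, himg]
          rw [Finset.sdiff_eq_empty_iff_subset.2 (Finset.erase_subset _ _), Finset.card_empty,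
            Finset.sdiff_erase_self hb, Finset.card_singleton]
        -- distinctness facts
        have hne1 : (↑(K.symm f) : V) ≠ φ (((F.erase a).erase b).image σ) := by
          rw [← hTw, ← IHw]
          intro hcon
          have h5 : K.symm f = K.symm w := Subtype.ext hcon
          have h6 : f = w := by simpa using congrArg K h5
          have h7 := congrFun h6 a
          rw [hw, hg] at h7
          rw [Function.update_of_ne hab, Function.update_self] at h7
          rw [hfa] at h7
          exact Bool.noConfusion h7
        have hne2 : φ (((F.erase a).erase b).image σ) ≠ φ (F.image σ) := by
          intro hcon
          have := hdist (hsubD ((F.erase a).erase b)) (hsubD F)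
          rw [hcon, SimpleGraph.dist_self] at this
          have h5 : (F \ (F.erase a).erase b).card = 0 := by
            rw [himg, himg] at this
            omega
          rw [sdiff_erase_erase ha hb] at h5
          rw [Finset.card_insert_of_notMem (by simp [hab]), Finset.card_singleton] at h5
          omega
        -- now the at-most-two-common-neighbours argument
        by_contra hcon
        have hne3 : (↑(K.symm f) : V) ≠ φ (F.image σ) := by rw [hTf] at hcon; exact hcon
        exact at_most_two_common hc hm hdgh hGfg.symm hGfh.symm hwg.symm hwh.symm
          hfg'.symm hfh'.symm hne1 hne3 hne2
  apply Set.Subset.antisymm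
  · intro c hcC'
    have h1 := main _ (K ⟨c, hcC'⟩) rfl
    rw [Equiv.symm_apply_apply] at h1
    have h1' : c = φ (T (K ⟨c, hcC'⟩)) := h1
    rw [h1']
    exact hmemC (hTD _)
  · rintro c ⟨A, hA, rfl⟩
    set f := fun j => decide (σ j ∈ A) with hf
    have hTfA : T f = A := by
      ext u
      simp only [hT, Finset.mem_image, Finset.mem_filter, Finset.mem_univ, true_and,
        decide_eq_true_eq, hf]
      constructor
      · rintro ⟨j, hj, rfl⟩; exact hj
      · intro hu
        obtain ⟨j, rfl⟩ := hσsurjD u (hA hu)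
        exact ⟨j, hu, rfl⟩
    show φ A ∈ C'
    rw [← hTfA, ← main _ f rfl]
    exact (K.symm f).2

end Final

end CornerPeeling

/-- Any ordering of the vertices of a finite median graph by nondecreasing distance to a
basepoint `z` is a corner peeling: each `vᵢ` together with all its neighbors in the
level graph `Gᵢ = G[{v₁,…,vᵢ}]` lies in a unique cube of `Gᵢ`. -/
theorem median_monotone_corner_peeling {V : Type*} [Fintype V] (G : SimpleGraph V)
    (hconn : G.Connected) (hmed : MedianGraph G)
    (z : V) (n : ℕ) (hn : 0 < n) (v : Fin n ≃ V)
    (h0 : v ⟨0, hn⟩ = z)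
    (hmono : ∀ i j : Fin n, i ≤ j → G.dist z (v i) ≤ G.dist z (v j)) :
    ∀ i : Fin n, ∃! C : Set V,
      C ⊆ (↑v : Fin n → V) '' {j | j ≤ i} ∧ v i ∈ C ∧
      (∀ u ∈ (↑v : Fin n → V) '' {j | j ≤ i}, G.Adj (v i) u → u ∈ C) ∧
      ∃ k : ℕ, Nonempty (G.induce C ≃g cubeGraph k) := by
  classical
  intro i
  refine CornerPeeling.cube_exists_unique hconn hmed z (v i) (G.dist z (v i)) rfl
      ((↑v : Fin n → V) '' {j | j ≤ i}) ⟨i, le_refl i, rfl⟩ ?_ ?_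
  · rintro w ⟨j, hj, rfl⟩; exact hmono j i hj
  · intro w hw
    refine ⟨v.symm w, ?_, by simp⟩
    by_contra hgt
    have hle : i ≤ v.symm w := le_of_not_ge hgt
    have h2 := hmono i (v.symm w) hle
    rw [Equiv.apply_symm_apply] at h2
    omega
end

section
/- Each level graph of a monotone ordering of a median graph is isometric: if v₁ = z, …, v_n orders V(G) by nondecreasing distance to z in a finite median graph G, then each induced subgraph G_i = G[{v₁,…,v_i}] is an isometric subgraph of G (distances in G_i equal distances in G). -/
/-- Key lemma: in a connected median graph, if `S` contains every vertex at
distance `< c` from `z`, and `a, b ∈ S` are at distance `≤ c` from `z`, then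
there is a walk from `a` to `b` inside the induced graph on `S` whose length is
the distance in `G`. -/
lemma median_exists_walk_in_level {V : Type*} (G : SimpleGraph V)
    (hconn : G.Connected) (hmed : MedianGraph G) (z : V) (S : Set V) (c : ℕ)
    (hS : ∀ w, G.dist z w < c → w ∈ S) :
    ∀ k : ℕ, ∀ a b : V, ∀ ha : a ∈ S, ∀ hb : b ∈ S,
      G.dist z a ≤ c → G.dist z b ≤ c → G.dist a b = k →
      ∃ p : (G.induce S).Walk ⟨a, ha⟩ ⟨b, hb⟩, p.length = k := by
  intro k
  induction k using Nat.strong_induction_on with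
  | _ k ih =>
  intro a b ha hb hza hzb hdist
  match k with
  | 0 =>
    have hab : a = b := hconn.dist_eq_zero_iff.mp hdist
    subst hab
    exact ⟨SimpleGraph.Walk.nil, rfl⟩
  | 1 =>
    have hadj : G.Adj a b := SimpleGraph.dist_eq_one_iff_adj.mp hdist
    exact ⟨SimpleGraph.Walk.cons (by simpa using hadj) SimpleGraph.Walk.nil, by simp⟩
  | (k + 2) =>
    obtain ⟨m, ⟨hab, hbz, hza'⟩, -⟩ := hmed a b z
    simp only [interval, Set.mem_setOf_eq] at hab hbz hza'
    by_cases hma : m = a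
    · -- `a` is between `z` and `b`
      subst hma
      have hzab : G.dist b m + G.dist m z = G.dist b z := hbz
      -- take the first step of a geodesic from b to a
      have hd : G.dist b m = k + 2 := by rw [SimpleGraph.dist_comm] at hdist; exact hdist
      obtain ⟨p, hp⟩ := hconn.exists_walk_length_eq_dist b m
      rw [hd] at hp
      cases p with
      | nil => simp at hp
      | cons hadj q =>
        rename_i b'
        simp only [SimpleGraph.Walk.length_cons, Nat.add_right_cancel_iff] at hp
        have hb'm : G.dist b' m = k + 1 := by
          refine le_antisymm (hp ▸ SimpleGraph.dist_le q) ?_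
          have : G.dist b m ≤ G.dist b b' + G.dist b' m := hconn.dist_triangle
          have h1 : G.dist b b' ≤ 1 :=
            SimpleGraph.dist_le (SimpleGraph.Walk.cons hadj SimpleGraph.Walk.nil)
          omega
        have hzb' : G.dist z b' < c := by
          have h1 : G.dist z b' ≤ G.dist z m + G.dist m b' := hconn.dist_triangle
          have h2 : G.dist m b' = k + 1 := by rw [SimpleGraph.dist_comm]; exact hb'm
          have h3 : G.dist z m = G.dist m z := SimpleGraph.dist_comm ..
          have h4 : G.dist z b = G.dist b z := SimpleGraph.dist_comm ..
          -- G.dist b z = (k+2) + G.dist m z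
          omega
        have hb'S : b' ∈ S := hS b' hzb'
        have hmb' : G.dist m b' = k + 1 := by rw [SimpleGraph.dist_comm]; exact hb'm
        obtain ⟨p', hp'⟩ := ih (k + 1) (by omega) m b' ha hb'S hza hzb'.le hmb'
        refine ⟨p'.concat (by simpa using hadj.symm), ?_⟩
        rw [SimpleGraph.Walk.length_concat, hp']
    · by_cases hmb : m = b
      · -- `b` is between `z` and `a`
        subst hmb
        -- hza' : G.dist z m + G.dist m a = G.dist z a
        obtain ⟨p, hp⟩ := hconn.exists_walk_length_eq_dist a m
        rw [hdist] at hp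
        cases p with
        | nil => simp at hp
        | cons hadj q =>
          rename_i a'
          simp only [SimpleGraph.Walk.length_cons, Nat.add_right_cancel_iff] at hp
          have ha'm : G.dist a' m = k + 1 := by
            refine le_antisymm (hp ▸ SimpleGraph.dist_le q) ?_
            have : G.dist a m ≤ G.dist a a' + G.dist a' m := hconn.dist_triangle
            have h1 : G.dist a a' ≤ 1 :=
              SimpleGraph.dist_le (SimpleGraph.Walk.cons hadj SimpleGraph.Walk.nil)
            omega
          have hza'' : G.dist z a' < c := by
            have h1 : G.dist z a' ≤ G.dist z m + G.dist m a' := hconn.dist_triangle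
            have h2 : G.dist m a' = k + 1 := by rw [SimpleGraph.dist_comm]; exact ha'm
            have h3 : G.dist m a = k + 2 := by rw [SimpleGraph.dist_comm]; exact hdist
            omega
          have ha'S : a' ∈ S := hS a' hza''
          obtain ⟨p', hp'⟩ := ih (k + 1) (by omega) a' m ha'S hb hza''.le hzb ha'm
          refine ⟨SimpleGraph.Walk.cons (by simpa using hadj) p', ?_⟩
          simp [hp']
      · -- `m` is strictly between: both distances drop
        have hma' : G.dist m a ≠ 0 := fun h => hma (hconn.dist_eq_zero_iff.mp h)
        have hmb' : G.dist m b ≠ 0 := fun h => hmb (hconn.dist_eq_zero_iff.mp h)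
        have ham : G.dist a m ≠ 0 := by rwa [SimpleGraph.dist_comm]
        have hzm : G.dist z m < G.dist z a := by omega
        have hmS : m ∈ S := hS m (lt_of_lt_of_le hzm hza)
        have hd1 : G.dist a m < k + 2 := by omega
        have hd2 : G.dist m b < k + 2 := by omega
        have hzm' : G.dist z m ≤ c := (lt_of_lt_of_le hzm hza).le
        obtain ⟨p1, hp1⟩ := ih (G.dist a m) hd1 a m ha hmS hza hzm' rfl
        obtain ⟨p2, hp2⟩ := ih (G.dist m b) hd2 m b hmS hb hzm' hzb rfl
        refine ⟨p1.append p2, ?_⟩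
        rw [SimpleGraph.Walk.length_append, hp1, hp2, hab, hdist]

/-- For an ordering `v₁ = z, …, vₙ` of a finite median graph by nondecreasing distance
to `z`, each level graph `Gᵢ = G[{v₁,…,vᵢ}]` is an isometric subgraph of `G`. -/
theorem median_level_graphs_isometric {V : Type*} [Fintype V] (G : SimpleGraph V)
    (hconn : G.Connected) (hmed : MedianGraph G)
    (z : V) (n : ℕ) (hn : 0 < n) (v : Fin n ≃ V)
    (h0 : v ⟨0, hn⟩ = z)
    (hmono : ∀ i j : Fin n, i ≤ j → G.dist z (v i) ≤ G.dist z (v j)) :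
    ∀ i : Fin n, ∀ a b : ((↑v : Fin n → V) '' {j | j ≤ i} : Set V),
      (G.induce ((↑v : Fin n → V) '' {j | j ≤ i})).dist a b = G.dist ↑a ↑b := by
  intro i a b
  obtain ⟨a, ha⟩ := a
  obtain ⟨b, hb⟩ := b
  set S : Set V := (↑v : Fin n → V) '' {j | j ≤ i} with hSdef
  set c : ℕ := G.dist z (v i) with hc
  have hS : ∀ w, G.dist z w < c → w ∈ S := by
    intro w hw
    obtain ⟨j, rfl⟩ := v.surjective w
    refine ⟨j, ?_, rfl⟩
    by_contra hji
    have : i ≤ j := le_of_not_ge hji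
    exact absurd (hmono i j this) (by omega)
  have hmem : ∀ x : V, x ∈ S → G.dist z x ≤ c := by
    rintro x ⟨j, hj, rfl⟩
    exact hmono j i hj
  obtain ⟨p, hp⟩ := median_exists_walk_in_level G hconn hmed z S c hS
    (G.dist a b) a b ha hb (hmem a ha) (hmem b hb) rfl
  refine le_antisymm ?_ ?_
  · calc (G.induce S).dist ⟨a, ha⟩ ⟨b, hb⟩ ≤ p.length := SimpleGraph.dist_le p
      _ = G.dist a b := hp
  · have hreach : (G.induce S).Reachable ⟨a, ha⟩ ⟨b, hb⟩ := ⟨p⟩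
    obtain ⟨q, hq⟩ := hreach.exists_walk_length_eq_dist
    calc G.dist a b ≤ (q.map (SimpleGraph.Embedding.induce S).toHom).length :=
          SimpleGraph.dist_le _
      _ = (G.induce S).dist ⟨a, ha⟩ ⟨b, hb⟩ := by rw [SimpleGraph.Walk.length_map, hq]
end

section
/- Gate-detection in a cube: let G be a finite median graph, C a gated cube of G of dimension at least 2, u a vertex of C, N(u) the neighbors of u in C, and x a vertex of G whose gate in C is not the vertex of C opposite to u. Then the gate of x in C equals u if and only if all vertices of N(u) are at the same distance from x. -/
namespace MGD

def hamm {n : ℕ} (a b : Fin n → Bool) : ℕ :=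
  (Finset.univ.filter fun i => a i ≠ b i).card

def flip {n : ℕ} (a : Fin n → Bool) (i : Fin n) : Fin n → Bool :=
  Function.update a i (!(a i))

lemma hamm_comm {n : ℕ} (a b : Fin n → Bool) : hamm a b = hamm b a := by
  unfold hamm
  congr 1
  apply Finset.filter_congr
  intro i _
  simp [ne_comm]

lemma hamm_eq_zero_iff {n : ℕ} {a b : Fin n → Bool} : hamm a b = 0 ↔ a = b := by
  unfold hamm
  rw [Finset.card_eq_zero, Finset.filter_eq_empty_iff]
  constructor
  · intro h; funext i; have := h (Finset.mem_univ i); simpa using this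
  · intro h i _; simp [h]

lemma flip_apply_self {n : ℕ} (a : Fin n → Bool) (i : Fin n) : flip a i i = !(a i) := by
  simp [flip]

lemma flip_apply_ne {n : ℕ} (a : Fin n → Bool) {i k : Fin n} (h : k ≠ i) :
    flip a i k = a k := by
  simp [flip, Function.update_apply, h]

lemma diffset_flip {n : ℕ} (a b : Fin n → Bool) (i : Fin n) :
    (Finset.univ.filter fun k => flip a i k ≠ b k)
      = if a i = b i then insert i (Finset.univ.filter fun k => a k ≠ b k)
        else (Finset.univ.filter fun k => a k ≠ b k).erase i := by
  by_cases h : a i = b i <;> simp only [h, if_true, if_false] <;> ext k <;>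
    by_cases hk : k = i
  · subst hk; simp [flip_apply_self, h]
  · simp [flip_apply_ne a hk, hk]
  · subst hk; simp [flip_apply_self, h]
  · simp [flip_apply_ne a hk, hk]

lemma hamm_flip_mem {n : ℕ} {a b : Fin n → Bool} {i : Fin n} (h : a i ≠ b i) :
    hamm (flip a i) b + 1 = hamm a b := by
  unfold hamm
  rw [diffset_flip, if_neg h]
  rw [Finset.card_erase_of_mem (by simp [h])]
  have : 0 < (Finset.univ.filter fun k => a k ≠ b k).card :=
    Finset.card_pos.mpr ⟨i, by simp [h]⟩
  omega

lemma hamm_flip_notMem {n : ℕ} {a b : Fin n → Bool} {i : Fin n} (h : a i = b i) :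
    hamm (flip a i) b = hamm a b + 1 := by
  unfold hamm
  rw [diffset_flip, if_pos h]
  rw [Finset.card_insert_of_notMem (by simp [h])]

lemma hamm_flip_self {n : ℕ} (a : Fin n → Bool) (i : Fin n) : hamm a (flip a i) = 1 := by
  rw [hamm_comm, hamm_flip_notMem rfl, hamm_eq_zero_iff.mpr rfl]

lemma cube_adj_iff {n : ℕ} {a b : Fin n → Bool} :
    (cubeGraph n).Adj a b ↔ hamm a b = 1 := by
  rw [cubeGraph, SimpleGraph.fromRel_adj]
  constructor
  · rintro ⟨hne, h | h⟩
    · exact h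
    · rw [hamm_comm]; exact h
  · intro h
    have hne : a ≠ b := by
      intro he; rw [he, hamm_eq_zero_iff.mpr rfl] at h; omega
    exact ⟨hne, Or.inl h⟩

end MGD

namespace MGD

variable {V : Type*} {G : SimpleGraph V}

/-- In a median graph, the two endpoints of an edge are at different distances
from any vertex. -/
lemma adj_dist_ne (hconn : G.Connected) (hmed : MedianGraph G)
    {a b : V} (hab : G.Adj a b) (z : V) : G.dist z a ≠ G.dist z b := by
  obtain ⟨m, ⟨hm1, hm2, hm3⟩, -⟩ := hmed a b z
  have hd1 : G.dist a b = 1 := SimpleGraph.dist_eq_one_iff_adj.mpr hab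
  have hsum : G.dist a m + G.dist m b = 1 := by
    have := hm1; rw [interval, Set.mem_setOf_eq, hd1] at this; exact this
  rcases Nat.eq_zero_or_pos (G.dist a m) with h0 | hpos
  · -- m = a
    have hma : m = a := (hconn.dist_eq_zero_iff.mp h0).symm
    subst hma
    -- m ∈ I(b, z): dist b m + dist m z = dist b z
    rw [interval, Set.mem_setOf_eq] at hm2
    rw [SimpleGraph.dist_comm (u := b) (v := m), hd1] at hm2
    rw [SimpleGraph.dist_comm (u := z) (v := m), SimpleGraph.dist_comm (u := z) (v := b)]
    omega
  · -- dist a m = 1, dist m b = 0, m = b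
    have hmb : m = b := hconn.dist_eq_zero_iff.mp (by omega)
    subst hmb
    rw [interval, Set.mem_setOf_eq] at hm3
    rw [SimpleGraph.dist_comm (u := m) (v := a)] at hm3
    omega

lemma flip_comm {n : ℕ} (a : Fin n → Bool) {i i' : Fin n} (h : i ≠ i') :
    flip (flip a i) i' = flip (flip a i') i := by
  funext k
  simp only [flip, Function.update_apply]
  by_cases hk : k = i <;> by_cases hk' : k = i' <;> simp_all

variable {C : Set V} {n : ℕ}

lemma adj_of_hamm_one (φ : G.induce C ≃g cubeGraph n) {a b : C}
    (h : hamm (φ a) (φ b) = 1) : G.Adj ↑a ↑b := by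
  have h1 : (cubeGraph n).Adj (φ a) (φ b) := cube_adj_iff.mpr h
  have h2 : (G.induce C).Adj a b := φ.map_rel_iff.mp h1
  simpa using h2

/-- Induced cubes in median graphs are isometric. -/
lemma cube_isometry (hconn : G.Connected) (hmed : MedianGraph G)
    (φ : G.induce C ≃g cubeGraph n) (a b : C) :
    G.dist ↑a ↑b = hamm (φ a) (φ b) := by
  suffices H : ∀ h : ℕ, ∀ a b : C, hamm (φ a) (φ b) = h → G.dist ↑a ↑b = h from
    H _ a b rfl
  intro h
  induction h using Nat.strong_induction_on with
  | _ h IH =>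
  intro a b hab
  rcases Nat.eq_zero_or_pos h with h0 | hpos
  · subst h0
    have : φ a = φ b := hamm_eq_zero_iff.mp hab
    have : a = b := φ.injective this
    rw [this, SimpleGraph.dist_self]
  -- pick a coordinate where a and b differ
  obtain ⟨i, hi⟩ : ∃ i, φ a i ≠ φ b i := by
    have : 0 < (Finset.univ.filter fun k => φ a k ≠ φ b k).card := by
      rw [hamm] at hab; omega
    obtain ⟨i, hi⟩ := Finset.card_pos.mp this
    exact ⟨i, (Finset.mem_filter.mp hi).2⟩
  set a₁ : C := φ.symm (flip (φ a) i) with ha₁def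
  have hφa₁ : φ a₁ = flip (φ a) i := φ.apply_symm_apply _
  have hh1 : hamm (φ a₁) (φ b) = h - 1 := by
    have := hamm_flip_mem (a := φ a) (b := φ b) hi
    rw [hφa₁]; omega
  have hd1 : G.dist ↑a₁ ↑b = h - 1 := IH (h - 1) (by omega) a₁ b hh1
  have hadj1 : G.Adj ↑a ↑a₁ := by
    apply adj_of_hamm_one φ
    rw [hφa₁]; exact hamm_flip_self _ _
  have hdaa₁ : G.dist ↑a ↑a₁ = 1 := SimpleGraph.dist_eq_one_iff_adj.mpr hadj1
  have htri : G.dist ↑a ↑b ≤ h := by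
    have := hconn.dist_triangle (u := ↑a) (v := ↑a₁) (w := ↑b)
    omega
  have htri2 : h - 1 ≤ 1 + G.dist ↑a ↑b := by
    have t := hconn.dist_triangle (u := ↑a₁) (v := ↑a) (w := ↑b)
    have e : G.dist ↑a₁ ↑a = 1 := by rwa [SimpleGraph.dist_comm] at hdaa₁
    omega
  have hne : G.dist ↑a ↑b ≠ h - 1 := by
    have := adj_dist_ne hconn hmed hadj1 ↑b
    rw [SimpleGraph.dist_comm (u := (↑b : V)) (v := (↑a : V)),
      SimpleGraph.dist_comm (u := (↑b : V)) (v := (↑a₁ : V))] at this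
    rw [hd1] at this
    exact this
  rcases Nat.lt_or_ge (G.dist ↑a ↑b) h with hlt | hge
  swap
  · omega
  -- now dist a b = h - 2 and h ≥ 2
  exfalso
  have hd : G.dist ↑a ↑b = h - 2 := by omega
  have hge2 : 2 ≤ h := by
    rcases Nat.lt_or_ge h 2 with h' | h'
    · interval_cases h <;> omega
    · exact h'
  -- pick a second coordinate
  obtain ⟨i', hi', hii'⟩ : ∃ i', φ a i' ≠ φ b i' ∧ i' ≠ i := by
    have hcard : 1 < (Finset.univ.filter fun k => φ a k ≠ φ b k).card := by
      rw [hamm] at hab; omega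
    obtain ⟨p, hp, q, hq, hpq⟩ := Finset.one_lt_card.mp hcard
    rcases eq_or_ne p i with rfl | hpi
    · exact ⟨q, (Finset.mem_filter.mp hq).2, fun hqi => hpq hqi.symm⟩
    · exact ⟨p, (Finset.mem_filter.mp hp).2, hpi⟩
  set a₂ : C := φ.symm (flip (φ a) i') with ha₂def
  have hφa₂ : φ a₂ = flip (φ a) i' := φ.apply_symm_apply _
  set c : C := φ.symm (flip (flip (φ a) i) i') with hcdef
  have hφc : φ c = flip (flip (φ a) i) i' := φ.apply_symm_apply _
  have hh2 : hamm (φ a₂) (φ b) = h - 1 := by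
    have := hamm_flip_mem (a := φ a) (b := φ b) hi'
    rw [hφa₂]; omega
  have hd2 : G.dist ↑a₂ ↑b = h - 1 := IH (h - 1) (by omega) a₂ b hh2
  have hflipi' : flip (φ a) i i' = φ a i' := flip_apply_ne _ hii'
  have hhc : hamm (φ c) (φ b) = h - 2 := by
    have h1 : flip (φ a) i i' ≠ φ b i' := by rw [hflipi']; exact hi'
    have := hamm_flip_mem (a := flip (φ a) i) (b := φ b) h1
    rw [hφc]
    have := hamm_flip_mem (a := φ a) (b := φ b) hi
    omega
  have hdc : G.dist ↑c ↑b = h - 2 := IH (h - 2) (by omega) c b hhc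
  have hadj2 : G.Adj ↑a ↑a₂ := by
    apply adj_of_hamm_one φ
    rw [hφa₂]; exact hamm_flip_self _ _
  have hdaa₂ : G.dist ↑a ↑a₂ = 1 := SimpleGraph.dist_eq_one_iff_adj.mpr hadj2
  have hadj1c : G.Adj ↑a₁ ↑c := by
    apply adj_of_hamm_one φ
    rw [hφa₁, hφc]; exact hamm_flip_self _ _
  have hadj2c : G.Adj ↑a₂ ↑c := by
    apply adj_of_hamm_one φ
    rw [hφa₂, hφc, flip_comm _ (Ne.symm hii')]
    exact hamm_flip_self _ _
  have hda₁c : G.dist ↑a₁ ↑c = 1 := SimpleGraph.dist_eq_one_iff_adj.mpr hadj1c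
  have hda₂c : G.dist ↑a₂ ↑c = 1 := SimpleGraph.dist_eq_one_iff_adj.mpr hadj2c
  -- dist a₁ a₂ = 2
  have hda₁a₂ : G.dist ↑a₁ ↑a₂ = 2 := by
    have hle : G.dist ↑a₁ ↑a₂ ≤ 2 := by
      have t := hconn.dist_triangle (u := (↑a₁ : V)) (v := ↑a) (w := ↑a₂)
      have e : G.dist ↑a₁ ↑a = 1 := by rwa [SimpleGraph.dist_comm] at hdaa₁
      omega
    have hne0 : (a₁ : V) ≠ ↑a₂ := by
      intro he
      have : a₁ = a₂ := Subtype.coe_injective he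
      have : flip (φ a) i = flip (φ a) i' := by
        rw [← hφa₁, ← hφa₂, this]
      have := congrFun this i
      rw [flip_apply_self, flip_apply_ne _ (Ne.symm hii')] at this
      exact (Bool.not_ne_self _) this
    have hne0' : G.dist ↑a₁ ↑a₂ ≠ 0 := fun h0 => hne0 (hconn.dist_eq_zero_iff.mp h0)
    have hne1 : G.dist ↑a₁ ↑a₂ ≠ 1 := by
      intro h1
      have hadj := SimpleGraph.dist_eq_one_iff_adj.mp h1
      have := adj_dist_ne hconn hmed hadj ↑b
      rw [SimpleGraph.dist_comm (u := (↑b : V)) (v := (↑a₁ : V)),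
        SimpleGraph.dist_comm (u := (↑b : V)) (v := (↑a₂ : V)), hd1, hd2] at this
      exact this rfl
    omega
  -- both a and c are medians of (a₁, a₂, b)
  obtain ⟨m, -, huniq⟩ := hmed ↑a₁ ↑a₂ ↑b
  have hda₁a : G.dist ↑a₁ ↑a = 1 := by rwa [SimpleGraph.dist_comm] at hdaa₁
  have hda₂a : G.dist ↑a₂ ↑a = 1 := by rwa [SimpleGraph.dist_comm] at hdaa₂
  have hma : (↑a : V) = m := by
    apply huniq
    refine ⟨?_, ?_, ?_⟩
    · show G.dist ↑a₁ ↑a + G.dist ↑a ↑a₂ = G.dist ↑a₁ ↑a₂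
      rw [hda₁a, hdaa₂, hda₁a₂]
    · show G.dist ↑a₂ ↑a + G.dist ↑a ↑b = G.dist ↑a₂ ↑b
      rw [hda₂a, hd, hd2]; omega
    · show G.dist ↑b ↑a + G.dist ↑a ↑a₁ = G.dist ↑b ↑a₁
      rw [SimpleGraph.dist_comm (u := (↑b : V)) (v := (↑a : V)),
        SimpleGraph.dist_comm (u := (↑b : V)) (v := (↑a₁ : V)), hd, hdaa₁, hd1]
      omega
  have hmc : (↑c : V) = m := by
    apply huniq
    refine ⟨?_, ?_, ?_⟩
    · show G.dist ↑a₁ ↑c + G.dist ↑c ↑a₂ = G.dist ↑a₁ ↑a₂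
      rw [hda₁c, SimpleGraph.dist_comm (u := (↑c : V)) (v := (↑a₂ : V)), hda₂c, hda₁a₂]
    · show G.dist ↑a₂ ↑c + G.dist ↑c ↑b = G.dist ↑a₂ ↑b
      rw [hda₂c, hdc, hd2]; omega
    · show G.dist ↑b ↑c + G.dist ↑c ↑a₁ = G.dist ↑b ↑a₁
      rw [SimpleGraph.dist_comm (u := (↑b : V)) (v := (↑c : V)),
        SimpleGraph.dist_comm (u := (↑c : V)) (v := (↑a₁ : V)),
        SimpleGraph.dist_comm (u := (↑b : V)) (v := (↑a₁ : V)), hdc, hda₁c, hd1]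
      omega
  have : a = c := Subtype.coe_injective (hma.trans hmc.symm)
  have hφac : φ a = φ c := congrArg φ this
  have := congrFun hφac i
  rw [hφc, flip_apply_ne _ (Ne.symm hii'), flip_apply_self] at this
  exact (Bool.self_ne_not _) this


end MGD

open MGD

/-- Gate detection in a cube of a median graph: let `C` be a cube of dimension `n ≥ 2`,
`u ∈ C`, `o` the vertex of `C` opposite to `u`, and let `g` be the gate of `x` in `C`
with `g ≠ o`. Then `g = u` iff all neighbors of `u` in `C` are equidistant from `x`. -/
theorem median_gate_detection {V : Type*} [Fintype V] (G : SimpleGraph V)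
    (hconn : G.Connected) (hmed : MedianGraph G)
    (C : Set V) (n : ℕ) (hn : 2 ≤ n)
    (hiso : Nonempty (G.induce C ≃g cubeGraph n))
    (u : V) (hu : u ∈ C)
    (o : V) (ho : o ∈ C) (hopp : G.dist u o = n)
    (x g : V) (hgC : g ∈ C) (hgate : ∀ y ∈ C, g ∈ interval G x y)
    (hgo : g ≠ o) :
    g = u ↔ ∀ w₁ ∈ {w : V | w ∈ C ∧ G.Adj u w}, ∀ w₂ ∈ {w : V | w ∈ C ∧ G.Adj u w},
      G.dist x w₁ = G.dist x w₂ := by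
  obtain ⟨φ⟩ := hiso
  have isom := cube_isometry hconn hmed φ
  constructor
  · rintro rfl
    rintro w₁ ⟨hw₁C, hw₁adj⟩ w₂ ⟨hw₂C, hw₂adj⟩
    have e₁ : G.dist x g + G.dist g w₁ = G.dist x w₁ := hgate w₁ hw₁C
    have e₂ : G.dist x g + G.dist g w₂ = G.dist x w₂ := hgate w₂ hw₂C
    have d₁ : G.dist g w₁ = 1 := SimpleGraph.dist_eq_one_iff_adj.mpr hw₁adj
    have d₂ : G.dist g w₂ = 1 := SimpleGraph.dist_eq_one_iff_adj.mpr hw₂adj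
    omega
  · intro heq
    by_contra hgu
    set u' : C := ⟨u, hu⟩ with hu'def
    set o' : C := ⟨o, ho⟩ with ho'def
    set g' : C := ⟨g, hgC⟩ with hg'def
    -- a coordinate where g and u differ
    have hφgu : φ u' ≠ φ g' := by
      intro h
      exact hgu (congrArg Subtype.val (φ.injective h)).symm
    obtain ⟨i, hi⟩ : ∃ i, φ u' i ≠ φ g' i := Function.ne_iff.mp hφgu
    -- o is the antipode of u
    have hn' : hamm (φ u') (φ o') = n := by
      have := isom u' o'
      rw [show ((u' : V)) = u from rfl, show ((o' : V)) = o from rfl, hopp] at this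
      omega
    have hall : ∀ k, φ u' k ≠ φ o' k := by
      intro k
      have hcard : (Finset.univ.filter fun k => φ u' k ≠ φ o' k).card = n := hn'
      have huniv : (Finset.univ.filter fun k => φ u' k ≠ φ o' k) = Finset.univ :=
        Finset.eq_univ_of_card _ (by simpa using hcard)
      have : k ∈ (Finset.univ.filter fun k => φ u' k ≠ φ o' k) := by
        rw [huniv]; exact Finset.mem_univ k
      exact (Finset.mem_filter.mp this).2
    -- a coordinate where g and u agree
    obtain ⟨j, hj⟩ : ∃ j, φ u' j = φ g' j := by
      by_contra hc
      push_neg at hc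
      apply hgo
      have hφ : φ g' = φ o' := by
        funext k
        have h1 := hc k
        have h2 := hall k
        revert h1 h2
        cases φ u' k <;> cases φ g' k <;> cases φ o' k <;> simp
      exact congrArg Subtype.val (φ.injective hφ)
    -- the two neighbors of u in C
    set w₁ : C := φ.symm (flip (φ u') i) with hw₁def
    set w₂ : C := φ.symm (flip (φ u') j) with hw₂def
    have hφw₁ : φ w₁ = flip (φ u') i := φ.apply_symm_apply _
    have hφw₂ : φ w₂ = flip (φ u') j := φ.apply_symm_apply _
    have hadj₁ : G.Adj u ↑w₁ := by
      have : G.Adj ↑u' ↑w₁ := adj_of_hamm_one φ (by rw [hφw₁]; exact hamm_flip_self _ _)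
      exact this
    have hadj₂ : G.Adj u ↑w₂ := by
      have : G.Adj ↑u' ↑w₂ := adj_of_hamm_one φ (by rw [hφw₂]; exact hamm_flip_self _ _)
      exact this
    have hxw : G.dist x ↑w₁ = G.dist x ↑w₂ := heq ↑w₁ ⟨w₁.2, hadj₁⟩ ↑w₂ ⟨w₂.2, hadj₂⟩
    have e₁ : G.dist x g + G.dist g ↑w₁ = G.dist x ↑w₁ := hgate ↑w₁ w₁.2
    have e₂ : G.dist x g + G.dist g ↑w₂ = G.dist x ↑w₂ := hgate ↑w₂ w₂.2
    -- compute the two distances from g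
    have hd₁ : G.dist g ↑w₁ + 1 = hamm (φ u') (φ g') := by
      have h := isom g' w₁
      rw [show ((g' : V)) = g from rfl] at h
      rw [h, hφw₁, hamm_comm]
      exact hamm_flip_mem hi
    have hd₂ : G.dist g ↑w₂ = hamm (φ u') (φ g') + 1 := by
      have h := isom g' w₂
      rw [show ((g' : V)) = g from rfl] at h
      rw [h, hφw₂, hamm_comm]
      exact hamm_flip_notMem hj
    omega
end

section
/- Distance formula via a corner cube: let G be a finite median graph, v a corner of G with unique cube C = C(v), u the vertex of C opposite to v, and N(u) the set of neighbors of u in C (nonempty). Then for any vertex x ∉ {v}, d(x,u) = max{ d(x,w) : w ∈ N(u) } − 1. -/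
namespace MCC

open SimpleGraph

lemma mem_interval {V : Type*} {G : SimpleGraph V} {a b m : V} :
    m ∈ interval G a b ↔ G.dist a m + G.dist m b = G.dist a b := Iff.rfl

variable {V : Type*} {G : SimpleGraph V}

/-- Median graphs are "bipartite-like": distances to adjacent vertices differ. -/
lemma dist_ne_of_adj (hconn : G.Connected) (hmed : MedianGraph G) {a b : V}
    (hab : G.Adj a b) (x : V) : G.dist x a ≠ G.dist x b := by
  intro h
  obtain ⟨m, ⟨h1, h2, h3⟩, -⟩ := hmed x a b
  rw [mem_interval] at h1 h2 h3
  rw [dist_eq_one_iff_adj.mpr hab] at h2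
  rcases Nat.add_eq_one_iff.mp h2 with ⟨hma, _⟩ | ⟨_, hmb⟩
  · have hm : m = a := hconn.dist_eq_zero_iff.mp (dist_comm.trans hma)
    subst hm
    have e1 : G.dist b m = 1 := dist_eq_one_iff_adj.mpr hab.symm
    have e2 : G.dist m x = G.dist x m := dist_comm
    have e3 : G.dist b x = G.dist x b := dist_comm
    omega
  · have hm : m = b := hconn.dist_eq_zero_iff.mp hmb
    subst hm
    have e1 : G.dist m a = 1 := dist_eq_one_iff_adj.mpr hab.symm
    omega

/-- Distances to the two endpoints of an edge differ by exactly one. -/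
lemma dist_dichotomy (hconn : G.Connected) (hmed : MedianGraph G) {a b : V}
    (hab : G.Adj a b) (x : V) :
    G.dist x a + 1 = G.dist x b ∨ G.dist x b + 1 = G.dist x a := by
  have h1 : G.dist x b ≤ G.dist x a + G.dist a b := hconn.dist_triangle
  have h2 : G.dist x a ≤ G.dist x b + G.dist b a := hconn.dist_triangle
  have e1 : G.dist a b = 1 := dist_eq_one_iff_adj.mpr hab
  have e2 : G.dist b a = 1 := dist_eq_one_iff_adj.mpr hab.symm
  have := dist_ne_of_adj hconn hmed hab x
  omega

/-- Median graphs are triangle-free. -/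
lemma triangle_free (hconn : G.Connected) (hmed : MedianGraph G) {a p q : V}
    (h1 : G.Adj a p) (h2 : G.Adj a q) (h3 : G.Adj p q) : False := by
  obtain ⟨m, ⟨k1, k2, k3⟩, -⟩ := hmed a p q
  rw [mem_interval] at k1 k2 k3
  rw [dist_eq_one_iff_adj.mpr h1] at k1
  rw [dist_eq_one_iff_adj.mpr h3] at k2
  rw [dist_eq_one_iff_adj.mpr h2.symm] at k3
  have eap : G.dist a p = 1 := dist_eq_one_iff_adj.mpr h1
  have eaq : G.dist a q = 1 := dist_eq_one_iff_adj.mpr h2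
  have epq : G.dist p q = 1 := dist_eq_one_iff_adj.mpr h3
  -- m must be a or p from k1
  rcases Nat.add_eq_one_iff.mp k1 with ⟨hm, _⟩ | ⟨_, hm⟩
  · have hm' : m = a := hconn.dist_eq_zero_iff.mp (dist_comm.trans hm)
    subst hm'
    have f1 : G.dist p m = 1 := dist_eq_one_iff_adj.mpr h1.symm
    have f2 : G.dist m q = 1 := eaq
    omega
  · have hm' : m = p := hconn.dist_eq_zero_iff.mp hm
    subst hm'
    have f1 : G.dist q m = 1 := dist_eq_one_iff_adj.mpr h3.symm
    have f2 : G.dist m a = 1 := dist_eq_one_iff_adj.mpr h1.symm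
    omega

/-- No `K_{2,3}`: two non-adjacent vertices cannot have three distinct common neighbors. -/
lemma noK23 (hconn : G.Connected) (hmed : MedianGraph G) {a b p q r : V}
    (hne : a ≠ b)
    (hap : G.Adj a p) (hbp : G.Adj b p) (haq : G.Adj a q) (hbq : G.Adj b q)
    (har : G.Adj a r) (hbr : G.Adj b r)
    (hpq : p ≠ q) (hpr : p ≠ r) (hqr : q ≠ r) : False := by
  -- any two of p, q, r are at distance 2
  have dist2 : ∀ s t : V, G.Adj a s → G.Adj a t → G.Adj b s → s ≠ t → G.dist s t = 2 := by
    intro s t has hat hbs hst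
    have hle : G.dist s t ≤ 2 := by
      have h1 : G.dist s t ≤ G.dist s a + G.dist a t := hconn.dist_triangle
      have e1 : G.dist s a = 1 := dist_eq_one_iff_adj.mpr has.symm
      have e2 : G.dist a t = 1 := dist_eq_one_iff_adj.mpr hat
      omega
    have h0 : G.dist s t ≠ 0 := fun h => hst (hconn.dist_eq_zero_iff.mp h)
    have h1 : G.dist s t ≠ 1 := by
      intro h
      exact triangle_free hconn hmed has hat (dist_eq_one_iff_adj.mp h)
    omega
  have dpq := dist2 p q hap haq hbp hpq
  have dpr := dist2 p r hap har hbp hpr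
  have dqr := dist2 q r haq har hbq hqr
  have drp := dist2 r p har hap hbr hpr.symm
  -- both a and b are medians of (p, q, r)
  obtain ⟨m, -, huniq⟩ := hmed p q r
  have ea : a = m := by
    apply huniq
    refine ⟨?_, ?_, ?_⟩ <;> rw [mem_interval]
    · rw [dist_eq_one_iff_adj.mpr hap.symm, dist_eq_one_iff_adj.mpr haq, dpq]
    · rw [dist_eq_one_iff_adj.mpr haq.symm, dist_eq_one_iff_adj.mpr har, dqr]
    · rw [dist_eq_one_iff_adj.mpr har.symm, dist_eq_one_iff_adj.mpr hap, drp]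
  have eb : b = m := by
    apply huniq
    refine ⟨?_, ?_, ?_⟩ <;> rw [mem_interval]
    · rw [dist_eq_one_iff_adj.mpr hbp.symm, dist_eq_one_iff_adj.mpr hbq, dpq]
    · rw [dist_eq_one_iff_adj.mpr hbq.symm, dist_eq_one_iff_adj.mpr hbr, dqr]
    · rw [dist_eq_one_iff_adj.mpr hbr.symm, dist_eq_one_iff_adj.mpr hbp, drp]
  exact hne (ea.trans eb.symm)

/-- Downward quasi-median: two down-neighbors of `p` (w.r.t. `x`) have a common
down-neighbor. -/
lemma quasi (hconn : G.Connected) (hmed : MedianGraph G) {x p c1 c2 : V}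
    (h1 : G.Adj p c1) (h2 : G.Adj p c2) (hne : c1 ≠ c2)
    (hd1 : G.dist x c1 + 1 = G.dist x p) (hd2 : G.dist x c2 + 1 = G.dist x p) :
    ∃ m, G.Adj m c1 ∧ G.Adj m c2 ∧ G.dist x m + 1 = G.dist x c1 := by
  have hcc : G.dist c1 c2 = 2 := by
    have hle : G.dist c1 c2 ≤ G.dist c1 p + G.dist p c2 := hconn.dist_triangle
    have e1 : G.dist c1 p = 1 := dist_eq_one_iff_adj.mpr h1.symm
    have e2 : G.dist p c2 = 1 := dist_eq_one_iff_adj.mpr h2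
    have h0 : G.dist c1 c2 ≠ 0 := fun h => hne (hconn.dist_eq_zero_iff.mp h)
    have hone : G.dist c1 c2 ≠ 1 := by
      intro h
      exact dist_ne_of_adj hconn hmed (dist_eq_one_iff_adj.mp h) x (by omega)
    omega
  obtain ⟨m, ⟨k1, k2, k3⟩, -⟩ := hmed x c1 c2
  rw [mem_interval] at k1 k2 k3
  rw [hcc] at k2
  have e1 : G.dist x m = G.dist m x := dist_comm
  have e2 : G.dist c2 x = G.dist x c2 := dist_comm
  have e3 : G.dist c2 m = G.dist m c2 := dist_comm
  have e5 : G.dist c1 m = G.dist m c1 := dist_comm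
  have e4 : G.dist m c1 = 1 ∧ G.dist m c2 = 1 := by
    constructor <;> omega
  exact ⟨m, dist_eq_one_iff_adj.mp e4.1, dist_eq_one_iff_adj.mp e4.2, by omega⟩


/-- Hamming distance on cube vertices. -/
def ham {n : ℕ} (a b : Fin n → Bool) : ℕ := (Finset.univ.filter fun i => a i ≠ b i).card

lemma ham_comm {n : ℕ} (a b : Fin n → Bool) : ham a b = ham b a := by
  unfold ham
  congr 1
  apply Finset.filter_congr
  intro i _
  simp [ne_comm]

lemma ham_eq_zero_iff {n : ℕ} {a b : Fin n → Bool} : ham a b = 0 ↔ a = b := by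
  unfold ham
  rw [Finset.card_eq_zero, Finset.filter_eq_empty_iff]
  constructor
  · intro h; funext i; simpa using h (Finset.mem_univ i)
  · intro h i _; simp [h]

lemma cube_adj_iff {n : ℕ} {a b : Fin n → Bool} :
    (cubeGraph n).Adj a b ↔ ham a b = 1 := by
  rw [cubeGraph, SimpleGraph.fromRel_adj]
  constructor
  · rintro ⟨-, h | h⟩
    · exact h
    · rw [ham_comm]; exact h
  · intro h
    refine ⟨?_, Or.inl h⟩
    intro hab
    rw [hab] at h
    simp [ham] at h
  -- note ham b a form
lemma ham_update_self {n : ℕ} (a : Fin n → Bool) (i : Fin n) (t : Bool) (ht : a i ≠ t) :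
    ham a (Function.update a i t) = 1 := by
  unfold ham
  rw [Finset.card_eq_one]
  refine ⟨i, ?_⟩
  ext j
  simp only [Finset.mem_filter, Finset.mem_univ, true_and, Finset.mem_singleton]
  constructor
  · intro hj
    by_contra hji
    rw [Function.update_of_ne hji] at hj
    exact hj rfl
  · rintro rfl
    rw [Function.update_self]
    exact ht

lemma ham_flip {n : ℕ} {a b : Fin n → Bool} {i : Fin n} (hi : a i ≠ b i) :
    ham (Function.update a i (b i)) b + 1 = ham a b := by
  unfold ham
  have key : (Finset.univ.filter fun j => Function.update a i (b i) j ≠ b j)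
      = (Finset.univ.filter fun j => a j ≠ b j).erase i := by
    ext j
    simp only [Finset.mem_filter, Finset.mem_univ, true_and, Finset.mem_erase]
    by_cases hj : j = i
    · subst hj
      simp [Function.update_self]
    · rw [Function.update_of_ne hj]
      simp [hj]
  rw [key]
  have hmem : i ∈ Finset.univ.filter fun j => a j ≠ b j := by
    simp [hi]
  rw [Finset.card_erase_of_mem hmem]
  have : 0 < (Finset.univ.filter fun j => a j ≠ b j).card := Finset.card_pos.mpr ⟨i, hmem⟩
  omega

lemma ham_le {n : ℕ} (a b : Fin n → Bool) : ham a b ≤ n := by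
  have := Finset.card_filter_le Finset.univ (fun i => a i ≠ b i)
  simpa [ham] using this

/-- If all coordinates of `p` and `q` differ, Hamming distances to them split. -/
lemma ham_split {n : ℕ} {p q : Fin n → Bool} (h : ham p q = n) (c : Fin n → Bool) :
    ham p c + ham c q = n := by
  have hall : ∀ i, p i ≠ q i := by
    intro i
    by_contra hi
    have hlt : (Finset.univ.filter fun j => p j ≠ q j).card < (Finset.univ : Finset (Fin n)).card := by
      apply Finset.card_lt_card
      refine ⟨Finset.filter_subset _ _, fun hsub => ?_⟩
      have := hsub (Finset.mem_univ i)
      simp only [Finset.mem_filter] at this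
      exact this.2 hi
    rw [Finset.card_univ, Fintype.card_fin] at hlt
    unfold ham at h
    omega
  unfold ham
  rw [ham_comm] at h
  have hcompl : ∀ i, (c i ≠ q i) ↔ ¬(p i ≠ c i) := by
    intro i
    have := hall i
    revert this
    cases p i <;> cases q i <;> cases c i <;> simp
  have : (Finset.univ.filter fun i => c i ≠ q i)
      = Finset.univ.filter fun i => ¬(p i ≠ c i) := by
    apply Finset.filter_congr
    intro i _
    simpa using hcompl i
  rw [this, Finset.card_filter_add_card_filter_not]
  simp


/-- First step of a geodesic. -/
lemma step (hconn : G.Connected) {x v : V} (h : G.dist x v ≠ 0) :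
    ∃ w, G.Adj v w ∧ G.dist x w + 1 = G.dist x v := by
  obtain ⟨p, hp⟩ := (hconn v x).exists_walk_length_eq_dist
  cases p with
  | nil =>
    rw [SimpleGraph.Walk.length_nil] at hp
    rw [dist_comm] at h
    omega
  | cons hadj q =>
    rename_i w
    refine ⟨w, hadj, ?_⟩
    rw [SimpleGraph.Walk.length_cons] at hp
    have h1 : G.dist w x ≤ q.length := dist_le q
    have h2 : G.dist v x ≤ G.dist v w + G.dist w x := hconn.dist_triangle
    have h3 : G.dist v w = 1 := dist_eq_one_iff_adj.mpr hadj
    have e1 : G.dist x w = G.dist w x := dist_comm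
    have e2 : G.dist x v = G.dist v x := dist_comm
    omega

end MCC

open MCC SimpleGraph

/-- Distance formula via a corner cube: if `v` is a corner of a finite median graph `G`
with corner cube `C` of dimension `n ≥ 1`, `u` the vertex of `C` opposite to `v`, and
`N(u)` the neighbors of `u` in `C`, then for any `x ≠ v`,
`d(x,u) = max {d(x,w) : w ∈ N(u)} - 1`. -/
theorem median_corner_cube_distance {V : Type*} [Fintype V] (G : SimpleGraph V)
    (hconn : G.Connected) (hmed : MedianGraph G)
    (v : V) (C : Set V) (n : ℕ) (hn : 1 ≤ n)
    (hiso : Nonempty (G.induce C ≃g cubeGraph n))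
    (hv : v ∈ C) (hnbrs : ∀ u : V, G.Adj v u → u ∈ C)
    (u : V) (hu : u ∈ C) (hopp : G.dist v u = n)
    (x : V) (hx : x ≠ v) :
    ∃ w : V, (w ∈ C ∧ G.Adj u w) ∧ G.dist x u + 1 = G.dist x w ∧
      ∀ w' : V, (w' ∈ C ∧ G.Adj u w') → G.dist x w' ≤ G.dist x w := by
  obtain ⟨φ⟩ := hiso
  set vC : C := ⟨v, hv⟩ with hvC
  set uC : C := ⟨u, hu⟩ with huC
  -- adjacency transfer
  have hadjt : ∀ a b : Fin n → Bool, ham a b = 1 →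
      G.Adj ((φ.symm a : C) : V) ((φ.symm b : C) : V) := by
    intro a b hab
    have h1 : (cubeGraph n).Adj a b := cube_adj_iff.mpr hab
    have h2 : (G.induce C).Adj (φ.symm a) (φ.symm b) := φ.symm.map_adj_iff.mpr h1
    exact h2
  -- distance bounded by Hamming distance
  have dist_le_ham : ∀ N, ∀ a b : Fin n → Bool, ham a b = N →
      G.dist ((φ.symm a : C) : V) ((φ.symm b : C) : V) ≤ N := by
    intro N
    induction N with
    | zero =>
      intro a b hab
      have : a = b := ham_eq_zero_iff.mp hab
      subst this
      simp
    | succ N ihN =>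
      intro a b hab
      have hne : (Finset.univ.filter fun i => a i ≠ b i).Nonempty := by
        rw [← Finset.card_pos]
        unfold ham at hab
        omega
      obtain ⟨i, hi⟩ := hne
      have hi' : a i ≠ b i := by simpa using (Finset.mem_filter.mp hi).2
      set a' := Function.update a i (b i) with ha'
      have h1 : ham a' b = N := by
        have := ham_flip hi'
        rw [← ha'] at this
        omega
      have hadj1 : G.Adj ((φ.symm a : C) : V) ((φ.symm a' : C) : V) :=
        hadjt a a' (ham_update_self a i (b i) hi')
      have h2 := ihN a' b h1
      have h3 : G.dist ((φ.symm a : C) : V) ((φ.symm b : C) : V) ≤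
          G.dist ((φ.symm a : C) : V) ((φ.symm a' : C) : V) +
          G.dist ((φ.symm a' : C) : V) ((φ.symm b : C) : V) := hconn.dist_triangle
      have h4 : G.dist ((φ.symm a : C) : V) ((φ.symm a' : C) : V) = 1 :=
        dist_eq_one_iff_adj.mpr hadj1
      omega
  have hpsi : ∀ c : C, ((φ.symm (φ c) : C) : V) = (c : V) := by
    intro c; rw [RelIso.symm_apply_apply]
  -- the diagonal is antipodal
  have hham_vu : ham (φ vC) (φ uC) = n := by
    have h1 : G.dist v u ≤ ham (φ vC) (φ uC) := by
      have := dist_le_ham (ham (φ vC) (φ uC)) (φ vC) (φ uC) rfl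
      rwa [hpsi vC, hpsi uC] at this
    have h2 := ham_le (φ vC) (φ uC)
    omega
  -- exact distances to the two corners
  have key : ∀ c : C, G.dist v (c : V) = ham (φ vC) (φ c) ∧
      G.dist (c : V) u = ham (φ c) (φ uC) := by
    intro c
    have hsum := ham_split hham_vu (φ c)
    have d1 : G.dist v (c : V) ≤ ham (φ vC) (φ c) := by
      have := dist_le_ham (ham (φ vC) (φ c)) (φ vC) (φ c) rfl
      rwa [hpsi vC, hpsi c] at this
    have d2 : G.dist (c : V) u ≤ ham (φ c) (φ uC) := by
      have := dist_le_ham (ham (φ c) (φ uC)) (φ c) (φ uC) rfl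
      rwa [hpsi uC, hpsi c] at this
    have tri : G.dist v u ≤ G.dist v (c : V) + G.dist (c : V) u := hconn.dist_triangle
    omega
  -- reduce the goal to finding one farther neighbor
  by_cases hex : ∃ w : V, w ∈ C ∧ G.Adj u w ∧ G.dist x u + 1 = G.dist x w
  · obtain ⟨w, hwC, hadjw, hdw⟩ := hex
    refine ⟨w, ⟨hwC, hadjw⟩, hdw, ?_⟩
    rintro w' ⟨-, ha'⟩
    have h1 : G.dist x w' ≤ G.dist x u + G.dist u w' := hconn.dist_triangle
    have h2 : G.dist u w' = 1 := dist_eq_one_iff_adj.mpr ha'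
    omega
  · exfalso
    push_neg at hex
    have hall : ∀ w : V, w ∈ C → G.Adj u w → G.dist x w + 1 = G.dist x u := by
      intro w h1 h2
      rcases dist_dichotomy hconn hmed h2 x with h | h
      · exact absurd h (hex w h1 h2)
      · exact h
    -- level induction downward from u
    have P : ∀ j, ∀ c : C, ham (φ c) (φ uC) = j → G.dist x (c : V) + j = G.dist x u := by
      intro j
      induction j using Nat.strong_induction_on with
      | _ j ih =>
        match j with
        | 0 =>
          intro c hc
          have : φ c = φ uC := ham_eq_zero_iff.mp hc
          have hc' : c = uC := φ.injective this
          rw [hc']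
          simp [huC]
        | 1 =>
          intro c hc
          have hadj1 : G.Adj u (c : V) := by
            have := hadjt (φ uC) (φ c) (by rwa [ham_comm])
            rwa [hpsi uC, hpsi c] at this
          exact hall (c : V) c.2 hadj1
        | (N + 2) =>
          intro c hc
          set y := φ c with hy
          -- two coordinates where y differs from φ uC
          have hcard : 1 < (Finset.univ.filter fun i => y i ≠ φ uC i).card := by
            unfold ham at hc
            omega
          obtain ⟨i1, hi1m, i2, hi2m, h12⟩ := Finset.one_lt_card.mp hcard
          have hi1 : y i1 ≠ φ uC i1 := by simpa using (Finset.mem_filter.mp hi1m).2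
          have hi2 : y i2 ≠ φ uC i2 := by simpa using (Finset.mem_filter.mp hi2m).2
          set y1 := Function.update y i1 (φ uC i1) with hy1def
          set y2 := Function.update y i2 (φ uC i2) with hy2def
          set yp := Function.update y1 i2 (φ uC i2) with hypdef
          have hy1 : ham y1 (φ uC) = N + 1 := by have := ham_flip hi1; rw [← hy1def] at this; omega
          have hy2 : ham y2 (φ uC) = N + 1 := by have := ham_flip hi2; rw [← hy2def] at this; omega
          have hy1i2 : y1 i2 ≠ φ uC i2 := by
            rw [hy1def, Function.update_of_ne h12.symm]; exact hi2
          have hyp : ham yp (φ uC) = N := by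
            have := ham_flip hy1i2
            rw [← hypdef] at this
            omega
          have hy2i1 : y2 i1 ≠ φ uC i1 := by
            rw [hy2def, Function.update_of_ne h12]; exact hi1
          have hcomm : yp = Function.update y2 i1 (φ uC i1) := by
            rw [hypdef, hy1def, hy2def, Function.update_comm h12]
          -- Hamming-1 pairs
          have a1 : ham y y1 = 1 := ham_update_self y i1 _ hi1
          have a2 : ham y y2 = 1 := ham_update_self y i2 _ hi2
          have a3 : ham y1 yp = 1 := ham_update_self y1 i2 _ hy1i2
          have a4 : ham y2 yp = 1 := by
            rw [hcomm]; exact ham_update_self y2 i1 _ hy2i1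
          set c1 : C := φ.symm y1 with hc1
          set c2 : C := φ.symm y2 with hc2
          set cp : C := φ.symm yp with hcp
          have hyc : ((φ.symm y : C) : V) = (c : V) := hpsi c
          -- G-adjacencies
          have A1 : G.Adj (c : V) (c1 : V) := by have := hadjt y y1 a1; rwa [hyc] at this
          have A2 : G.Adj (c : V) (c2 : V) := by have := hadjt y y2 a2; rwa [hyc] at this
          have A3 : G.Adj (c1 : V) (cp : V) := hadjt y1 yp a3
          have A4 : G.Adj (c2 : V) (cp : V) := hadjt y2 yp a4
          -- induction hypotheses
          have e1 : φ c1 = y1 := φ.apply_symm_apply y1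
          have e2 : φ c2 = y2 := φ.apply_symm_apply y2
          have e3 : φ cp = yp := φ.apply_symm_apply yp
          have d1 : G.dist x (c1 : V) + (N + 1) = G.dist x u :=
            ih (N + 1) (by omega) c1 (by rw [e1]; exact hy1)
          have d2 : G.dist x (c2 : V) + (N + 1) = G.dist x u :=
            ih (N + 1) (by omega) c2 (by rw [e2]; exact hy2)
          have dp : G.dist x (cp : V) + N = G.dist x u :=
            ih N (by omega) cp (by rw [e3]; exact hyp)
          -- c1 ≠ c2
          have hy12 : y1 ≠ y2 := by
            intro h
            have := congrFun h i1
            rw [hy1def, hy2def, Function.update_self, Function.update_of_ne h12] at this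
            exact hi1 this.symm
          have hne12 : (c1 : V) ≠ (c2 : V) := by
            intro h
            exact hy12 (by rw [← e1, ← e2, Subtype.coe_injective h])
          obtain ⟨m, hm1, hm2, hm3⟩ :=
            quasi (x := x) hconn hmed A3.symm A4.symm hne12 (by omega) (by omega)
          rcases dist_dichotomy hconn hmed A1 x with hgood | hbad
          · -- d(x,c) + 1 = d(x,c1)
            omega
          · -- d(x,c1) + 1 = d(x,c): K_{2,3} contradiction
            have hyyp : y ≠ yp := by
              intro h
              have h' : yp i1 = φ uC i1 := by
                rw [hypdef, Function.update_of_ne h12, hy1def, Function.update_self]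
              exact hi1 ((congrFun h i1).trans h')
            have hnecp : (cp : V) ≠ (c : V) := by
              intro h
              apply hyyp
              have hcpc : cp = c := Subtype.coe_injective h
              rw [hy, ← hcpc, e3]
            have hpm : (cp : V) ≠ m := by intro h; rw [h] at dp; omega
            have hmc : m ≠ (c : V) := by intro h; rw [h] at hm3; omega
            exact (noK23 hconn hmed hne12 A3 A4 hm1.symm hm2.symm A1.symm A2.symm
              hpm hnecp hmc).elim
    -- conclude: contradiction at v
    have hPv : G.dist x v + n = G.dist x u := P n vC hham_vu
    have hxv : G.dist x v ≠ 0 := fun h => hx (hconn.dist_eq_zero_iff.mp h)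
    obtain ⟨w0, hadj0, hd0⟩ := step hconn hxv
    have hw0C : w0 ∈ C := hnbrs w0 hadj0
    set c0 : C := ⟨w0, hw0C⟩ with hc0
    have h1 : ham (φ vC) (φ c0) = 1 := by
      have := (key c0).1
      have h2 : G.dist v (c0 : V) = 1 := dist_eq_one_iff_adj.mpr hadj0
      omega
    have hsum := ham_split hham_vu (φ c0)
    have hP0 : G.dist x (c0 : V) + ham (φ c0) (φ uC) = G.dist x u := P _ c0 rfl
    have hcc : (c0 : V) = w0 := rfl
    rw [hcc] at hP0
    omega
end
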